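/- arXiv:1502.01912 — 8 statements merged into one kernel-verified Lean document; each statement's English description precedes it below -/
import Mathlib

section
/- Let D:[0,x_G]→ℝ be strictly increasing and continuous with D(0)=0, such that D̂(x) := x − D(x) is strictly increasing, and, when x_G = +∞, lim_{x→∞} D(x) = +∞ and lim_{x→∞} D̂(x) = +∞. Let H3:[0,∞)→ℝ be continuous, strictly increasing, with H3(0)=0 and lim_{x→∞} H3(x) = x_G. Then the function H(x) := D̂^{-1}(H3(x)) − H3(x), defined for x ∈ [0, H3^{-1}(D̂(x_G))], is the unique continuous strictly increasing function with H(0)=0 such that H + H3 is a bijection from [0, H3^{-1}(D̂(x_G))] onto [0, x_G] and D(x) = H((H+H3)^{-1}(x)) for all x ∈ [0, x_G]. -/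
open MeasureTheory Filter Set Topology
open scoped ENNReal

/-- A strictly monotone function on a set whose image is order-connected is continuous
on that set. -/
private lemma strictMonoOn_continuousOn_of_ordConnected_image
    {f : ℝ → ℝ} {t : Set ℝ} (hf : StrictMonoOn f t)
    (himg : (f '' t).OrdConnected) : ContinuousOn f t := by
  intro a ha
  rw [ContinuousWithinAt, tendsto_order]
  constructor
  · intro b hb
    by_cases h : ∃ c ∈ t, c < a ∧ b < f c
    · obtain ⟨c, hc, hca, hbc⟩ := h
      filter_upwards [self_mem_nhdsWithin,
        mem_nhdsWithin_of_mem_nhds (Ioi_mem_nhds hca)] with z hz hz'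
      exact hbc.trans (hf hc hz hz')
    · push_neg at h
      have hne : ∀ c ∈ t, ¬ c < a := by
        intro c hc hca
        obtain ⟨y, hy1, hy2⟩ := exists_between hb
        have hyim : y ∈ f '' t :=
          himg.out ⟨c, hc, rfl⟩ ⟨a, ha, rfl⟩ ⟨(h c hc hca).trans hy1.le, hy2.le⟩
        obtain ⟨w, hw, hwy⟩ := hyim
        have hwa : w < a := by
          by_contra hwa
          have : f a ≤ f w := hf.monotoneOn ha hw (not_lt.1 hwa)
          rw [hwy] at this
          exact absurd hy2 (not_lt.2 this)
        have hbfw : b < f w := lt_of_lt_of_eq hy1 hwy.symm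
        exact absurd hbfw (not_lt.2 (h w hw hwa))
      filter_upwards [self_mem_nhdsWithin] with z hz
      exact hb.trans_le (hf.monotoneOn ha hz (not_lt.1 (hne z hz)))
  · intro b hb
    by_cases h : ∃ c ∈ t, a < c ∧ f c < b
    · obtain ⟨c, hc, hac, hcb⟩ := h
      filter_upwards [self_mem_nhdsWithin,
        mem_nhdsWithin_of_mem_nhds (Iio_mem_nhds hac)] with z hz hz'
      exact (hf hz hc hz').trans hcb
    · push_neg at h
      have hne : ∀ c ∈ t, ¬ a < c := by
        intro c hc hca
        obtain ⟨y, hy1, hy2⟩ := exists_between hb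
        have hyim : y ∈ f '' t :=
          himg.out ⟨a, ha, rfl⟩ ⟨c, hc, rfl⟩ ⟨hy1.le, hy2.le.trans (h c hc hca)⟩
        obtain ⟨w, hw, hwy⟩ := hyim
        have hwa : a < w := by
          by_contra hwa
          have : f w ≤ f a := hf.monotoneOn hw ha (not_lt.1 hwa)
          rw [hwy] at this
          exact absurd hy1 (not_lt.2 this)
        have hfwb : f w < b := lt_of_eq_of_lt hwy hy2
        exact absurd hfwb (not_lt.2 (h w hw hwa))
      filter_upwards [self_mem_nhdsWithin] with z hz
      exact (hf.monotoneOn hz ha (not_lt.1 (hne z hz))).trans_lt hb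

/-- Lemma 1: given a distortion `D` on `[0, x_G]` (with `D̂(x) = x − D(x)`
strictly increasing, and `D`, `D̂` tending to `+∞` when `x_G = +∞`) and `H₃` continuous,
strictly increasing with `H₃(0) = 0` and limit `x_G`, the function
`H(z) := D̂⁻¹(H₃(z)) − H₃(z)` on `T = [0, H₃⁻¹(D̂(x_G))]` is the unique continuous strictly
increasing function with `H(0) = 0` such that `H + H₃` maps `T` bijectively onto `[0, x_G]`
and `D(x) = H((H + H₃)⁻¹(x))` for all `x ∈ [0, x_G]`. -/
theorem AMO_hazard_from_distortion
    (xG : ℝ≥0∞) (hxG : 0 < xG)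
    (D H3 : ℝ → ℝ) (S T : Set ℝ)
    (hS : S = {x : ℝ | 0 ≤ x ∧ ENNReal.ofReal x ≤ xG})
    (hDmono : StrictMonoOn D S) (hDcont : ContinuousOn D S) (hD0 : D 0 = 0)
    (hDhatMono : StrictMonoOn (fun x => x - D x) S)
    (hDtop : xG = ⊤ → Tendsto D atTop atTop)
    (hDhatTop : xG = ⊤ → Tendsto (fun x => x - D x) atTop atTop)
    (hH3cont : ContinuousOn H3 (Set.Ici (0:ℝ))) (hH3mono : StrictMonoOn H3 (Set.Ici (0:ℝ)))
    (hH30 : H3 0 = 0)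
    (hH3lim : Tendsto (fun x : ℝ => ENNReal.ofReal (H3 x)) atTop (𝓝 xG))
    -- `T = [0, H₃⁻¹(D̂(x_G))] = {z ≥ 0 : H₃(z) ∈ D̂([0, x_G])}`
    (hT : T = {z : ℝ | 0 ≤ z ∧ ∃ x ∈ S, x - D x = H3 z}) :
    ∀ Hdef : ℝ → ℝ,
      (∀ z : ℝ, Hdef z = Function.invFunOn (fun x => x - D x) S (H3 z) - H3 z) →
      (ContinuousOn Hdef T ∧ StrictMonoOn Hdef T ∧ Hdef 0 = 0 ∧
        Set.BijOn (fun z => Hdef z + H3 z) T S ∧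
        (∀ z ∈ T, D (Hdef z + H3 z) = Hdef z)) ∧
      (∀ H' : ℝ → ℝ,
        (ContinuousOn H' T ∧ StrictMonoOn H' T ∧ H' 0 = 0 ∧
          Set.BijOn (fun z => H' z + H3 z) T S ∧
          (∀ z ∈ T, D (H' z + H3 z) = H' z)) →
        Set.EqOn H' Hdef T) := by
  intro Hdef hHdef
  have hmemS : ∀ x : ℝ, x ∈ S ↔ 0 ≤ x ∧ ENNReal.ofReal x ≤ xG := fun x => by rw [hS]; rfl
  have hmemT : ∀ z : ℝ, z ∈ T ↔ 0 ≤ z ∧ ∃ x ∈ S, x - D x = H3 z := fun z => by rw [hT]; rfl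
  have h0S : (0:ℝ) ∈ S := (hmemS 0).2 ⟨le_refl 0, by simp⟩
  have h0T : (0:ℝ) ∈ T := (hmemT 0).2 ⟨le_refl 0, ⟨0, h0S, by simp [hD0, hH30]⟩⟩
  have hInj : Set.InjOn (fun x => x - D x) S := hDhatMono.injOn
  set g : ℝ → ℝ := fun z => Function.invFunOn (fun x => x - D x) S (H3 z) with hg
  have hTsub : T ⊆ Set.Ici (0:ℝ) := fun z hz => ((hmemT z).1 hz).1
  have hgS : ∀ z ∈ T, g z ∈ S := by
    intro z hz
    obtain ⟨_, x, hx, hxz⟩ := (hmemT z).1 hz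
    exact Function.invFunOn_mem (f := fun x => x - D x) ⟨x, hx, hxz⟩
  have hgval : ∀ z ∈ T, g z - D (g z) = H3 z := by
    intro z hz
    obtain ⟨_, x, hx, hxz⟩ := (hmemT z).1 hz
    exact Function.invFunOn_eq (f := fun x => x - D x) ⟨x, hx, hxz⟩
  have hgeq : ∀ z : ℝ, ∀ x ∈ S, x - D x = H3 z → g z = x := by
    intro z x hx hxz
    show Function.invFunOn (fun x => x - D x) S (H3 z) = x
    rw [← hxz]
    exact hInj.leftInvOn_invFunOn hx
  have hHdef_eq : ∀ z ∈ T, Hdef z = D (g z) := by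
    intro z hz
    rw [hHdef z]
    have := hgval z hz
    linarith
  -- strict monotonicity of `g`
  have hgmono : StrictMonoOn g T := by
    intro z1 h1 z2 h2 h12
    have hH : H3 z1 < H3 z2 := hH3mono (hTsub h1) (hTsub h2) h12
    by_contra hle
    push_neg at hle
    have h' : g z2 - D (g z2) ≤ g z1 - D (g z1) :=
      hDhatMono.monotoneOn (hgS z2 h2) (hgS z1 h1) hle
    have e1 := hgval z1 h1
    have e2 := hgval z2 h2
    linarith
  -- surjectivity of H3 onto the needed values
  have hsurjH3 : ∀ y : ℝ, 0 ≤ y → ENNReal.ofReal y < xG → ∃ z, 0 ≤ z ∧ H3 z = y := by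
    intro y hy hylt
    have hev : ∀ᶠ z in atTop, ENNReal.ofReal y < ENNReal.ofReal (H3 z) :=
      hH3lim.eventually_const_lt hylt
    obtain ⟨z, hzy, hz0⟩ := (hev.and (eventually_ge_atTop (0:ℝ))).exists
    have hylt' : y < H3 z := by
      by_contra h
      exact absurd (ENNReal.ofReal_le_ofReal (not_lt.1 h)) (not_le.2 hzy)
    have hivt := intermediate_value_Icc hz0 (hH3cont.mono Icc_subset_Ici_self)
    have hymem : y ∈ Icc (H3 0) (H3 z) := ⟨by rw [hH30]; exact hy, hylt'.le⟩
    obtain ⟨w, hw, hwy⟩ := hivt hymem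
    exact ⟨w, hw.1, hwy⟩
  have hDpos : ∀ x ∈ S, 0 < x → 0 < D x := fun x hx h0 => hD0 ▸ hDmono h0S hx h0
  have hDhnonneg : ∀ x ∈ S, 0 ≤ x - D x := by
    intro x hx
    have h' : (0:ℝ) - D 0 ≤ x - D x := hDhatMono.monotoneOn h0S hx ((hmemS x).1 hx).1
    rw [hD0] at h'
    linarith
  have hDhlt : ∀ x ∈ S, ENNReal.ofReal (x - D x) < xG := by
    intro x hx
    obtain ⟨hx0, hxle⟩ := (hmemS x).1 hx
    rcases eq_or_ne xG ⊤ with htop | htop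
    · rw [htop]; exact ENNReal.ofReal_lt_top
    · have hxr : x ≤ xG.toReal := (ENNReal.ofReal_le_iff_le_toReal htop).1 hxle
      have hGpos : 0 < xG.toReal := ENNReal.toReal_pos hxG.ne' htop
      rcases eq_or_lt_of_le hx0 with h0 | h0
      · rw [← h0, hD0]
        simpa using hxG
      · have hlt : x - D x < xG.toReal := by
          have := hDpos x hx h0
          linarith
        calc ENNReal.ofReal (x - D x) < ENNReal.ofReal xG.toReal :=
              (ENNReal.ofReal_lt_ofReal_iff hGpos).2 hlt
          _ = xG := ENNReal.ofReal_toReal htop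
  have hgsurj : ∀ x ∈ S, ∃ z ∈ T, g z = x := by
    intro x hx
    obtain ⟨z, hz0, hzy⟩ := hsurjH3 (x - D x) (hDhnonneg x hx) (hDhlt x hx)
    have hzT : z ∈ T := (hmemT z).2 ⟨hz0, x, hx, hzy.symm⟩
    exact ⟨z, hzT, hgeq z x hx hzy.symm⟩
  have hsum : ∀ z ∈ T, Hdef z + H3 z = g z := by
    intro z hz
    rw [hHdef z]
    ring
  have hgbij : Set.BijOn g T S :=
    ⟨hgS, hgmono.injOn, fun x hx => by
      obtain ⟨z, hz, hgz⟩ := hgsurj x hx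
      exact ⟨z, hz, hgz⟩⟩
  have hSord : S.OrdConnected := by
    constructor
    intro x hx y hy z hz
    exact (hmemS z).2 ⟨le_trans ((hmemS x).1 hx).1 hz.1,
      le_trans (ENNReal.ofReal_le_ofReal hz.2) ((hmemS y).1 hy).2⟩
  have hgcont : ContinuousOn g T := by
    apply strictMonoOn_continuousOn_of_ordConnected_image hgmono
    rw [hgbij.image_eq]
    exact hSord
  constructor
  · refine ⟨?_, ?_, ?_, ?_, ?_⟩
    · exact (hgcont.sub (hH3cont.mono hTsub)).congr fun z _ => hHdef z
    · intro z1 h1 z2 h2 h12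
      rw [hHdef_eq z1 h1, hHdef_eq z2 h2]
      exact hDmono (hgS z1 h1) (hgS z2 h2) (hgmono h1 h2 h12)
    · have hg0 : g 0 = 0 := hgeq 0 0 h0S (by rw [hD0, hH30]; ring)
      rw [hHdef 0]
      show g 0 - H3 0 = 0
      rw [hg0, hH30]
      ring
    · refine ⟨?_, ?_, ?_⟩
      · intro z hz
        show Hdef z + H3 z ∈ S
        rw [hsum z hz]
        exact hgS z hz
      · intro z1 h1 z2 h2 he
        simp only at he
        rw [hsum z1 h1, hsum z2 h2] at he
        exact hgmono.injOn h1 h2 he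
      · intro x hx
        obtain ⟨z, hz, hgz⟩ := hgsurj x hx
        exact ⟨z, hz, (hsum z hz).trans hgz⟩
    · intro z hz
      have : Hdef z + H3 z = g z := hsum z hz
      rw [this]
      exact (hHdef_eq z hz).symm
  · rintro H' ⟨_, _, _, hbij', heq'⟩ z hz
    have hxS : H' z + H3 z ∈ S := hbij'.mapsTo hz
    have hDh : (H' z + H3 z) - D (H' z + H3 z) = H3 z := by
      rw [heq' z hz]
      ring
    have hgz : g z = H' z + H3 z := hgeq z _ hxS hDh
    rw [hHdef z]
    show H' z = g z - H3 z
    rw [hgz]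
    ring
end

section
/- Let b ∈ (0, +∞], and let ψ:[0,b)→ℝ be continuous, strictly increasing, with ψ(0)=0, and differentiable on (0,b). Let A, B:[0,b)→ℝ with B continuous, strictly increasing and B(0)=0, and suppose there is a function c:(0,b)→(0,∞) such that for every y ∈ (0,b) and every x ∈ (0, c(y)) with B(x)+y < b, the functional equation A(ψ(x)) + ψ(y) = ψ(B(x)+y) holds. Then there exists m > 0 such that ψ(y) = m·y for all y ∈ [0,b). -/
open Filter Set Topology
open scoped ENNReal

/-- the key step in the proof of Theorem 3.4. If `ψ : [0,b) → ℝ` is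
continuous, strictly increasing, `ψ(0) = 0`, differentiable on `(0,b)`, `B` is continuous,
strictly increasing with `B(0) = 0`, and for every `y ∈ (0,b)` and every `x ∈ (0, c(y))`
with `B(x) + y < b` one has `A(ψ(x)) + ψ(y) = ψ(B(x) + y)`, then `ψ(y) = m y` on `[0,b)`
for some `m > 0`. Here `b ∈ (0, +∞]` is encoded as an extended nonnegative real and
`[0,b) = {y : 0 ≤ y, y < b}`. -/
theorem psi_linear_of_functional_eq
    (b : ℝ≥0∞) (hb : 0 < b) (ψ A B c : ℝ → ℝ) (S : Set ℝ)
    (hS : S = {y : ℝ | 0 ≤ y ∧ ENNReal.ofReal y < b})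
    (hψcont : ContinuousOn ψ S) (hψmono : StrictMonoOn ψ S) (hψ0 : ψ 0 = 0)
    (hψdiff : ∀ y : ℝ, 0 < y → ENNReal.ofReal y < b → DifferentiableAt ℝ ψ y)
    (hBcont : ContinuousOn B S) (hBmono : StrictMonoOn B S) (hB0 : B 0 = 0)
    (hcpos : ∀ y : ℝ, 0 < y → ENNReal.ofReal y < b → 0 < c y)
    (heq : ∀ y x : ℝ, 0 < y → ENNReal.ofReal y < b → 0 < x → x < c y →
      ENNReal.ofReal (B x + y) < b → A (ψ x) + ψ y = ψ (B x + y)) :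
    ∃ m : ℝ, 0 < m ∧ ∀ y : ℝ, 0 ≤ y → ENNReal.ofReal y < b → ψ y = m * y := by
  -- membership criterion for S
  have hmemS : ∀ y : ℝ, 0 ≤ y → ENNReal.ofReal y < b → y ∈ S := by
    intro y h1 h2; rw [hS]; exact ⟨h1, h2⟩
  -- room above any point of [0,b)
  have hroom : ∀ y : ℝ, 0 ≤ y → ENNReal.ofReal y < b →
      ∃ d : ℝ, 0 < d ∧ ENNReal.ofReal (y + d) < b := by
    intro y hy hyb
    obtain ⟨r, hr1, hr2⟩ := exists_between hyb
    have hrt : r ≠ ⊤ := ne_top_of_lt hr2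
    have hylt : y < r.toReal := (ENNReal.ofReal_lt_iff_lt_toReal hy hrt).mp hr1
    refine ⟨r.toReal - y, by linarith, ?_⟩
    have : y + (r.toReal - y) = r.toReal := by ring
    rw [this, ENNReal.ofReal_toReal hrt]; exact hr2
  -- KEY: for y₁ y₂ ∈ (0,b), the increments of ψ agree for small t > 0
  have key : ∀ y₁ y₂ : ℝ, 0 < y₁ → ENNReal.ofReal y₁ < b → 0 < y₂ → ENNReal.ofReal y₂ < b →
      ∀ᶠ t in 𝓝[>] (0:ℝ), ψ (y₁ + t) - ψ y₁ = ψ (y₂ + t) - ψ y₂ := by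
    intro y₁ y₂ hy₁ hy₁b hy₂ hy₂b
    obtain ⟨d₁, hd₁, hd₁b⟩ := hroom y₁ hy₁.le hy₁b
    obtain ⟨d₂, hd₂, hd₂b⟩ := hroom y₂ hy₂.le hy₂b
    set ε : ℝ := min (min (c y₁) (c y₂)) y₁ with hε
    have hεpos : 0 < ε :=
      lt_min (lt_min (hcpos y₁ hy₁ hy₁b) (hcpos y₂ hy₂ hy₂b)) hy₁
    have hεS : ε ∈ S := by
      refine hmemS ε hεpos.le ?_
      exact lt_of_le_of_lt (ENNReal.ofReal_le_ofReal (min_le_right _ _)) hy₁b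
    have h0S : (0:ℝ) ∈ S := hmemS 0 le_rfl (by simpa using hb)
    have hBε : 0 < B ε := by
      have := hBmono h0S hεS hεpos
      rwa [hB0] at this
    set δ : ℝ := min (B ε) (min d₁ d₂) with hδ
    have hδpos : 0 < δ := lt_min hBε (lt_min hd₁ hd₂)
    filter_upwards [Ioo_mem_nhdsGT_of_mem (show (0:ℝ) ∈ Ico 0 δ from ⟨le_rfl, hδpos⟩)]
      with t ht
    obtain ⟨ht0, htδ⟩ := ht
    -- find x ∈ (0, ε) with B x = t, via IVT
    have hIccS : Icc (0:ℝ) ε ⊆ S := by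
      intro z hz
      refine hmemS z hz.1 ?_
      have : z ≤ y₁ := le_trans hz.2 (min_le_right _ _)
      exact lt_of_le_of_lt (ENNReal.ofReal_le_ofReal this) hy₁b
    have hivt := intermediate_value_Ioo hεpos.le (hBcont.mono hIccS)
    have htmem : t ∈ Ioo (B 0) (B ε) := by
      rw [hB0]; exact ⟨ht0, lt_of_lt_of_le htδ (min_le_left _ _)⟩
    obtain ⟨x, hx, hBx⟩ := hivt htmem
    have hx1 : x < c y₁ := lt_of_lt_of_le hx.2 (le_trans (min_le_left _ _) (min_le_left _ _))
    have hx2 : x < c y₂ := lt_of_lt_of_le hx.2 (le_trans (min_le_left _ _) (min_le_right _ _))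
    have ht1 : t < d₁ := lt_of_lt_of_le htδ (le_trans (min_le_right _ _) (min_le_left _ _))
    have ht2 : t < d₂ := lt_of_lt_of_le htδ (le_trans (min_le_right _ _) (min_le_right _ _))
    have hb1 : ENNReal.ofReal (B x + y₁) < b := by
      rw [hBx]
      exact lt_of_le_of_lt (ENNReal.ofReal_le_ofReal (by linarith)) hd₁b
    have hb2 : ENNReal.ofReal (B x + y₂) < b := by
      rw [hBx]
      exact lt_of_le_of_lt (ENNReal.ofReal_le_ofReal (by linarith)) hd₂b
    have e1 := heq y₁ x hy₁ hy₁b hx.1 hx1 hb1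
    have e2 := heq y₂ x hy₂ hy₂b hx.1 hx2 hb2
    rw [hBx] at e1 e2
    have : ψ (t + y₁) - ψ y₁ = A (ψ x) := by linarith
    have : ψ (t + y₂) - ψ y₂ = A (ψ x) := by linarith
    rw [add_comm y₁ t, add_comm y₂ t]
    linarith
  -- hence the derivative of ψ is the same at all points of (0, b)
  have derivEq : ∀ y₁ y₂ : ℝ, 0 < y₁ → ENNReal.ofReal y₁ < b → 0 < y₂ → ENNReal.ofReal y₂ < b →
      deriv ψ y₁ = deriv ψ y₂ := by
    intro y₁ y₂ hy₁ hy₁b hy₂ hy₂b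
    have slopeT : ∀ y : ℝ, 0 < y → ENNReal.ofReal y < b →
        Tendsto (fun t : ℝ => slope ψ y (y + t)) (𝓝[>] (0:ℝ)) (𝓝 (deriv ψ y)) := by
      intro y hy hyb
      have hder := (hψdiff y hy hyb).hasDerivAt
      have h1 : Tendsto (slope ψ y) (𝓝[≠] y) (𝓝 (deriv ψ y)) :=
        hasDerivAt_iff_tendsto_slope.mp hder
      have h2 : Tendsto (fun t : ℝ => y + t) (𝓝[>] (0:ℝ)) (𝓝[≠] y) := by
        apply tendsto_nhdsWithin_of_tendsto_nhds_of_eventually_within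
        · have : Tendsto (fun t : ℝ => y + t) (𝓝 (0:ℝ)) (𝓝 (y + 0)) :=
            (continuous_const.add continuous_id).tendsto 0
          rw [add_zero] at this
          exact this.mono_left nhdsWithin_le_nhds
        · filter_upwards [self_mem_nhdsWithin] with t (ht : 0 < t)
          simp only [mem_compl_iff, mem_singleton_iff]
          intro h
          nlinarith [h]
      exact h1.comp h2
    have hfe : (fun t : ℝ => slope ψ y₁ (y₁ + t)) =ᶠ[𝓝[>] (0:ℝ)]
        (fun t : ℝ => slope ψ y₂ (y₂ + t)) := by
      filter_upwards [key y₁ y₂ hy₁ hy₁b hy₂ hy₂b] with t ht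
      simp only [slope, vsub_eq_sub, add_sub_cancel_left]
      rw [ht]
    exact tendsto_nhds_unique ((slopeT y₁ hy₁ hy₁b).congr' hfe) (slopeT y₂ hy₂ hy₂b)
  -- pick a base point y₀ ∈ (0,b)
  obtain ⟨r, hr0, hrb⟩ := exists_between hb
  have hrt : r ≠ ⊤ := ne_top_of_lt hrb
  set y₀ : ℝ := r.toReal with hy₀def
  have hy₀pos : 0 < y₀ := ENNReal.toReal_pos (by exact hr0.ne') hrt
  have hy₀b : ENNReal.ofReal y₀ < b := by rw [hy₀def, ENNReal.ofReal_toReal hrt]; exact hrb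
  set m : ℝ := deriv ψ y₀ with hm
  -- ψ has derivative m at every point of (0,b)
  have hasD : ∀ y : ℝ, 0 < y → ENNReal.ofReal y < b → HasDerivAt ψ m y := by
    intro y hy hyb
    have := (hψdiff y hy hyb).hasDerivAt
    rwa [derivEq y y₀ hy hyb hy₀pos hy₀b] at this
  -- g := ψ - m • id is constant on (0,b)
  have gconst : ∀ y₁ y₂ : ℝ, 0 < y₁ → 0 < y₂ → ENNReal.ofReal y₂ < b → y₁ ≤ y₂ →
      ψ y₁ - m * y₁ = ψ y₂ - m * y₂ := by
    intro y₁ y₂ hy₁ hy₂ hy₂b h12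
    have hIccS : Icc y₁ y₂ ⊆ S := by
      intro z hz
      refine hmemS z (le_trans hy₁.le hz.1) ?_
      exact lt_of_le_of_lt (ENNReal.ofReal_le_ofReal hz.2) hy₂b
    have hderiv : ∀ x ∈ Ico y₁ y₂,
        HasDerivWithinAt (fun y => ψ y - m * y) 0 (Ici x) x := by
      intro x hx
      have hxpos : 0 < x := lt_of_lt_of_le hy₁ hx.1
      have hxb : ENNReal.ofReal x < b :=
        lt_of_le_of_lt (ENNReal.ofReal_le_ofReal (le_of_lt hx.2)) hy₂b
      have hlin : HasDerivAt (fun y : ℝ => m * y) m x := by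
        simpa using (hasDerivAt_id x).const_mul m
      have h1 : HasDerivAt (fun y => ψ y - m * y) (m - m) x :=
        (hasD x hxpos hxb).sub hlin
      rw [sub_self] at h1
      exact h1.hasDerivWithinAt
    have hcont : ContinuousOn (fun y => ψ y - m * y) (Icc y₁ y₂) :=
      (hψcont.mono hIccS).sub ((continuous_const.mul continuous_id).continuousOn)
    have := constant_of_has_deriv_right_zero hcont hderiv y₂ ⟨h12, le_rfl⟩
    linarith [this]
  have gconst' : ∀ y : ℝ, 0 < y → ENNReal.ofReal y < b →
      ψ y - m * y = ψ y₀ - m * y₀ := by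
    intro y hy hyb
    rcases le_total y y₀ with h | h
    · exact gconst y y₀ hy hy₀pos hy₀b h
    · exact (gconst y₀ y hy₀pos hy hyb h).symm
  -- the constant is 0: let y → 0⁺
  have h0S : (0:ℝ) ∈ S := hmemS 0 le_rfl (by simpa using hb)
  have hk0 : ψ y₀ - m * y₀ = 0 := by
    have hlim : Tendsto (fun y => ψ y - m * y) (𝓝[>] (0:ℝ)) (𝓝 (ψ 0 - m * 0)) := by
      have hsub : Ioo (0:ℝ) y₀ ⊆ S := by
        intro z hz
        refine hmemS z hz.1.le ?_
        exact lt_of_le_of_lt (ENNReal.ofReal_le_ofReal hz.2.le) hy₀b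
      have h1 : Tendsto ψ (𝓝[S] (0:ℝ)) (𝓝 (ψ 0)) := hψcont 0 h0S
      have h2 : 𝓝[>] (0:ℝ) ≤ 𝓝[S] (0:ℝ) := by
        rw [← nhdsWithin_Ioo_eq_nhdsGT hy₀pos]
        exact nhdsWithin_mono 0 hsub
      exact ((h1.mono_left h2).sub
        (((continuous_const.mul continuous_id).tendsto 0).mono_left nhdsWithin_le_nhds))
    have heventually : (fun y => ψ y - m * y) =ᶠ[𝓝[>] (0:ℝ)]
        (fun _ => ψ y₀ - m * y₀) := by
      filter_upwards [Ioo_mem_nhdsGT_of_mem (show (0:ℝ) ∈ Ico 0 y₀ from ⟨le_rfl, hy₀pos⟩)]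
        with z hz
      exact gconst' z hz.1 (lt_of_le_of_lt (ENNReal.ofReal_le_ofReal hz.2.le) hy₀b)
    have hlim2 : Tendsto (fun y => ψ y - m * y) (𝓝[>] (0:ℝ)) (𝓝 (ψ y₀ - m * y₀)) := by
      rw [tendsto_congr' heventually]; exact tendsto_const_nhds
    have := tendsto_nhds_unique hlim hlim2
    rw [hψ0] at this
    linarith
  -- conclude
  have hval : ∀ y : ℝ, 0 ≤ y → ENNReal.ofReal y < b → ψ y = m * y := by
    intro y hy hyb
    rcases eq_or_lt_of_le hy with h | h
    · rw [← h, hψ0, mul_zero]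
    · have := gconst' y h hyb
      rw [hk0] at this
      linarith
  have hmpos : 0 < m := by
    have hy₀S : y₀ ∈ S := hmemS y₀ hy₀pos.le hy₀b
    have := hψmono h0S hy₀S hy₀pos
    rw [hψ0, hval y₀ hy₀pos.le hy₀b] at this
    nlinarith [this, hy₀pos]
  exact ⟨m, hmpos, hval⟩
end

section
/- Let D1, D2 be distortions relative to G with D1(x_G) ≥ D2(x_G), let C_AMO be the associated Archimedean-based Marshall-Olkin copula, and let μ be a probability measure on [0,1]² such that μ([0,u]×[0,v]) = C_AMO(u,v) for all (u,v) ∈ [0,1]². Then for every t ∈ (0,1), the Kendall function of C_AMO satisfies μ({(u,v) ∈ [0,1]² : C_AMO(u,v) ≤ t}) = K_G(t) + G′(G^{-1}(t))·T^{-1}(G^{-1}(t)), where K_G(t) = t − G′(G^{-1}(t))·G^{-1}(t) and T(x) = D̂1^{-1}(x) + D̂2^{-1}(x) − x. -/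
open MeasureTheory Filter Set Topology
open scoped ENNReal

/-- `x_G := inf {x ≥ 0 : G x = 0}`, an extended nonnegative real (`⊤` if `G` never vanishes). -/
noncomputable def xG (G : ℝ → ℝ) : ℝ≥0∞ :=
  sInf {y : ℝ≥0∞ | ∃ x : ℝ, 0 ≤ x ∧ G x = 0 ∧ y = ENNReal.ofReal x}

/-- The interval `[0, x_G]` as a subset of `ℝ` (all of `[0,∞)` when `x_G = +∞`). -/
def distortionDomain (G : ℝ → ℝ) : Set ℝ :=
  {x : ℝ | 0 ≤ x ∧ ENNReal.ofReal x ≤ xG G}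

/-- The hypotheses on the Archimedean generator `G`: `G(0) = 1`, `G : [0,∞) → [0,1]`,
`G` is differentiable on `(0,∞)` with non-positive, non-decreasing and concave derivative,
and `G` is strictly decreasing on `[0, x_G)`. -/
structure IsGenerator (G : ℝ → ℝ) : Prop where
  one_at_zero : G 0 = 1
  mem_Icc : ∀ x : ℝ, 0 ≤ x → G x ∈ Set.Icc (0:ℝ) 1
  diff : ∀ x ∈ Set.Ioi (0:ℝ), DifferentiableAt ℝ G x
  deriv_nonpos : ∀ x ∈ Set.Ioi (0:ℝ), deriv G x ≤ 0
  deriv_mono : MonotoneOn (deriv G) (Set.Ioi (0:ℝ))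
  deriv_concave : ConcaveOn ℝ (Set.Ioi (0:ℝ)) (deriv G)
  strictAnti : ∀ a b : ℝ, 0 ≤ a → a < b → ENNReal.ofReal b < xG G → G b < G a

/-- `Ginv` is the inverse of `G`, mapping `(0,1]` onto `[0, x_G)`. -/
structure IsGenInv (G Ginv : ℝ → ℝ) : Prop where
  nonneg : ∀ u ∈ Set.Ioc (0:ℝ) 1, 0 ≤ Ginv u
  le_xG : ∀ u ∈ Set.Ioc (0:ℝ) 1, ENNReal.ofReal (Ginv u) ≤ xG G
  right_inv : ∀ u ∈ Set.Ioc (0:ℝ) 1, G (Ginv u) = u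
  left_inv : ∀ x : ℝ, 0 ≤ x → ENNReal.ofReal x < xG G → Ginv (G x) = x

/-- A distortion relative to `G`: a strictly increasing continuous function on `[0, x_G]`
with `D(0) = 0`, such that `D̂(x) = x − D(x)` is also strictly increasing and, when
`x_G = +∞`, both `D` and `D̂` tend to `+∞`. -/
structure IsDistortion (G D : ℝ → ℝ) : Prop where
  strictMono : StrictMonoOn D (distortionDomain G)
  cont : ContinuousOn D (distortionDomain G)
  zero : D 0 = 0
  hatStrictMono : StrictMonoOn (fun x => x - D x) (distortionDomain G)
  tendsto_top : xG G = ⊤ → Filter.Tendsto D Filter.atTop Filter.atTop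
  hat_tendsto_top : xG G = ⊤ → Filter.Tendsto (fun x => x - D x) Filter.atTop Filter.atTop

/-- `C` is the Archimedean-based Marshall-Olkin copula with generator `G` (with inverse
`Ginv`) and distortions `D1`, `D2`, where `f = D̂₂⁻¹ ∘ D̂₁` and `finv = D̂₁⁻¹ ∘ D̂₂`:
it vanishes on the boundary `u = 0` or `v = 0`, and on `(0,1]²` it is given by the
two-case piecewise formula of Definition 3.3, the case being selected according to
whether `D₁(x_G) ≥ D₂(x_G)` or `D₁(x_G) < D₂(x_G)`. -/
def AMOSpec (G Ginv D1 D2 f finv : ℝ → ℝ) (C : ℝ → ℝ → ℝ) : Prop :=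
  (∀ u : ℝ, C u 0 = 0 ∧ C 0 u = 0) ∧
  ((xG G ≠ ⊤ → D2 ((xG G).toReal) ≤ D1 ((xG G).toReal)) →
    ∀ u ∈ Set.Ioc (0:ℝ) 1, ∀ v ∈ Set.Ioc (0:ℝ) 1,
      (v ≤ G (f (Ginv u)) → C u v = G (D1 (Ginv u) + Ginv v)) ∧
      (G (f (Ginv u)) < v → C u v = G (Ginv u + D2 (Ginv v)))) ∧
  ((xG G ≠ ⊤ ∧ D1 ((xG G).toReal) < D2 ((xG G).toReal)) →
    ∀ u ∈ Set.Ioc (0:ℝ) 1, ∀ v ∈ Set.Ioc (0:ℝ) 1,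
      (G (finv (Ginv v)) ≤ u → C u v = G (D1 (Ginv u) + Ginv v)) ∧
      (u < G (finv (Ginv v)) → C u v = G (Ginv u + D2 (Ginv v))))


private lemma chain_le' {u : ℕ → ℝ} {n : ℕ} (h : ∀ i, i < n → u i ≤ u (i+1)) :
    ∀ i j, i ≤ j → j ≤ n → u i ≤ u j := by
  intro i j
  induction j with
  | zero => intro hij _; have : i = 0 := Nat.le_zero.mp hij; rw [this]
  | succ m ih =>
    intro hij hjn
    rcases Nat.eq_or_lt_of_le hij with rfl | hlt
    · exact le_rfl
    · exact le_trans (ih (Nat.lt_succ_iff.mp hlt) (by omega)) (h m (by omega))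

private lemma staircase_measure (μ : Measure (ℝ × ℝ)) (C : ℝ → ℝ → ℝ)
    (hμ : ∀ u ∈ Set.Icc (0:ℝ) 1, ∀ v ∈ Set.Icc (0:ℝ) 1,
      μ (Set.Icc 0 u ×ˢ Set.Icc 0 v) = ENNReal.ofReal (C u v)) (U V : ℕ → ℝ) :
    ∀ n : ℕ,
    (∀ i, i ≤ n → U i ∈ Set.Icc (0:ℝ) 1) →
    (∀ i, i ≤ n → V i ∈ Set.Icc (0:ℝ) 1) →
    (∀ i, i < n → U i ≤ U (i+1)) →
    (∀ i, i < n → V (i+1) ≤ V i) →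
    (∀ i, i < n → 0 ≤ C (U i) (V (i+1))) →
    (∀ i, i < n → C (U i) (V (i+1)) ≤ C (U (i+1)) (V (i+1))) →
    0 ≤ C (U 0) (V 0) →
    μ (⋃ i ∈ Finset.range (n+1), Set.Icc 0 (U i) ×ˢ Set.Icc 0 (V i))
      = ENNReal.ofReal (C (U 0) (V 0)
          + ∑ i ∈ Finset.range n, (C (U (i+1)) (V (i+1)) - C (U i) (V (i+1)))) := by
  intro n
  induction n with
  | zero =>
    intro hU hV _ _ _ _ _
    have : (⋃ i ∈ Finset.range (0+1), Set.Icc 0 (U i) ×ˢ Set.Icc 0 (V i))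
        = Set.Icc 0 (U 0) ×ˢ Set.Icc 0 (V 0) := by
      apply Set.Subset.antisymm
      · intro p hp
        simp only [Set.mem_iUnion] at hp
        obtain ⟨i, hi, hpi⟩ := hp
        have : i = 0 := by have := Finset.mem_range.mp hi; omega
        rwa [this] at hpi
      · intro p hp
        simp only [Set.mem_iUnion]
        exact ⟨0, Finset.mem_range.mpr (by omega), hp⟩
    rw [this, Finset.sum_range_zero, add_zero]
    exact hμ (U 0) (hU 0 le_rfl) (V 0) (hV 0 le_rfl)
  | succ n ih =>
    intro hU hV hUm hVm hC0 hCm hC00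
    have key := ih (fun i hi => hU i (by omega)) (fun i hi => hV i (by omega))
      (fun i hi => hUm i (by omega)) (fun i hi => hVm i (by omega))
      (fun i hi => hC0 i (by omega)) (fun i hi => hCm i (by omega)) hC00
    -- abbreviations
    set Sn := ⋃ i ∈ Finset.range (n+1), Set.Icc 0 (U i) ×ˢ Set.Icc 0 (V i) with hSn
    have hSnm : MeasurableSet Sn := by
      apply MeasurableSet.biUnion (Finset.range (n+1)).countable_toSet
      intro i _
      exact measurableSet_Icc.prod measurableSet_Icc
    set R := Set.Ioc (U n) (U (n+1)) ×ˢ Set.Icc (0:ℝ) (V (n+1)) with hR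
    have hRm : MeasurableSet R := measurableSet_Ioc.prod measurableSet_Icc
    have hUn0 : (0:ℝ) ≤ U n := (hU n (by omega)).1
    have hUmn := hUm n (by omega)
    have hsplit : Set.Icc (0:ℝ) (U (n+1)) = Set.Icc 0 (U n) ∪ Set.Ioc (U n) (U (n+1)) :=
      (Set.Icc_union_Ioc_eq_Icc hUn0 hUmn).symm
    have hsmall_sub : Set.Icc (0:ℝ) (U n) ×ˢ Set.Icc (0:ℝ) (V (n+1)) ⊆ Sn := by
      intro p hp
      rw [hSn]
      simp only [Set.mem_iUnion]
      refine ⟨n, Finset.mem_range.mpr (by omega), ?_⟩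
      exact ⟨hp.1, hp.2.1, le_trans hp.2.2 (hVm n (by omega))⟩
    have hSn_bound : ∀ p ∈ Sn, p.1 ≤ U n := by
      intro p hp
      rw [hSn] at hp
      simp only [Set.mem_iUnion] at hp
      obtain ⟨i, hi, hpi⟩ := hp
      have : U i ≤ U n := chain_le' (fun j hj => hUm j (by omega)) i n
        (by have := Finset.mem_range.mp hi; omega) le_rfl
      exact le_trans hpi.1.2 this
    have hdisj : Disjoint Sn R := by
      rw [Set.disjoint_left]
      intro p hp hpR
      exact absurd (hSn_bound p hp) (not_le.mpr hpR.1.1)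
    -- union identity
    have hunion : (⋃ i ∈ Finset.range (n+1+1), Set.Icc 0 (U i) ×ˢ Set.Icc 0 (V i)) = Sn ∪ R := by
      rw [Finset.range_add_one]
      rw [Finset.set_biUnion_insert]
      rw [← hSn]
      apply Set.Subset.antisymm
      · apply Set.union_subset
        · intro p hp
          rw [hsplit, Set.union_prod] at hp
          rcases hp with hp | hp
          · exact Set.mem_union_left _ (hsmall_sub hp)
          · exact Set.mem_union_right _ hp
        · exact Set.subset_union_left
      · apply Set.union_subset
        · exact Set.subset_union_right
        · intro p hp
          apply Set.mem_union_left
          rw [hsplit, Set.union_prod]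
          exact Set.mem_union_right _ hp
    -- measure of R
    have hdisj2 : Disjoint (Set.Icc (0:ℝ) (U n) ×ˢ Set.Icc (0:ℝ) (V (n+1))) R := by
      rw [Set.disjoint_left]
      intro p hp hpR
      exact absurd hp.1.2 (not_le.mpr hpR.1.1)
    have hrect : Set.Icc (0:ℝ) (U (n+1)) ×ˢ Set.Icc (0:ℝ) (V (n+1))
        = (Set.Icc (0:ℝ) (U n) ×ˢ Set.Icc (0:ℝ) (V (n+1))) ∪ R := by
      rw [hsplit, Set.union_prod]
    have hmeasrect := hμ (U (n+1)) (hU (n+1) le_rfl) (V (n+1)) (hV (n+1) le_rfl)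
    rw [hrect, measure_union hdisj2 hRm, hμ (U n) (hU n (by omega)) (V (n+1)) (hV (n+1) le_rfl)] at hmeasrect
    have hdiffnn : 0 ≤ C (U (n+1)) (V (n+1)) - C (U n) (V (n+1)) := by
      have := hCm n (by omega); linarith
    have hμR : μ R = ENNReal.ofReal (C (U (n+1)) (V (n+1)) - C (U n) (V (n+1))) := by
      have h2 : ENNReal.ofReal (C (U n) (V (n+1))) + μ R
          = ENNReal.ofReal (C (U n) (V (n+1)))
            + ENNReal.ofReal (C (U (n+1)) (V (n+1)) - C (U n) (V (n+1))) := by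
        rw [hmeasrect, ← ENNReal.ofReal_add (hC0 n (by omega)) hdiffnn]
        congr 1
        ring
      exact (ENNReal.add_right_inj ENNReal.ofReal_ne_top).mp h2
    -- sum nonneg
    have hsumnn : 0 ≤ C (U 0) (V 0)
        + ∑ i ∈ Finset.range n, (C (U (i+1)) (V (i+1)) - C (U i) (V (i+1))) := by
      have : 0 ≤ ∑ i ∈ Finset.range n, (C (U (i+1)) (V (i+1)) - C (U i) (V (i+1))) := by
        apply Finset.sum_nonneg
        intro i hi
        have hi' : i < n + 1 := by have := Finset.mem_range.mp hi; omega
        linarith [hCm i hi']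
      linarith
    rw [hunion, measure_union hdisj hRm, key, hμR,
      ← ENNReal.ofReal_add hsumnn hdiffnn]
    congr 1
    rw [Finset.sum_range_succ]
    ring


private lemma tendsto_mul_shift {G : ℝ → ℝ} {a L : ℝ} (h : HasDerivAt G L a) (c : ℝ) (hc : c ≠ 0) :
    Tendsto (fun k : ℕ => (k:ℝ) * (G (a + c / k) - G a)) atTop (nhds (c * L)) := by
  have hslope := hasDerivAt_iff_tendsto_slope.mp h
  have hz0 : Tendsto (fun k : ℕ => a + c / k) atTop (nhds a) := by
    have := (tendsto_const_div_atTop_nhds_zero_nat c).const_add a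
    simpa using this
  have hzne : ∀ᶠ k : ℕ in atTop, a + c / k ∈ ({a}ᶜ : Set ℝ) := by
    filter_upwards [eventually_ge_atTop 1] with k hk
    have hkne : (k:ℝ) ≠ 0 := by positivity
    simp only [Set.mem_compl_iff, Set.mem_singleton_iff]
    intro hcon
    have : c / k = 0 := by linarith
    exact hc (by field_simp at this; simpa using this)
  have hz : Tendsto (fun k : ℕ => a + c / k) atTop (nhdsWithin a ({a}ᶜ)) :=
    tendsto_nhdsWithin_iff.mpr ⟨hz0, hzne⟩
  have hcomp : Tendsto (fun k : ℕ => slope G a (a + c / k)) atTop (nhds L) := hslope.comp hz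
  have hmul : Tendsto (fun k : ℕ => slope G a (a + c / k) * c) atTop (nhds (L * c)) :=
    hcomp.mul_const c
  rw [mul_comm c L]
  apply hmul.congr'
  filter_upwards [eventually_ge_atTop 1] with k hk
  have hkne : (k:ℝ) ≠ 0 := by positivity
  rw [slope_def_field, show a + c / (k:ℝ) - a = c / k by ring, div_div_eq_mul_div,
    div_mul_cancel₀ _ hc]
  ring

set_option maxHeartbeats 4000000 in
/-- Theorem 4.1: the Kendall function of the Archimedean-based
Marshall-Olkin copula: for `t ∈ (0,1)`,
`μ({(u,v) ∈ [0,1]² : C_AMO(u,v) ≤ t}) = K_G(t) + G′(G⁻¹(t))·T⁻¹(G⁻¹(t))`, where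
`K_G(t) = t − G′(G⁻¹(t))·G⁻¹(t)` and `T(x) = D̂₁⁻¹(x) + D̂₂⁻¹(x) − x`. -/
theorem AMO_kendall_function
    (G Ginv D1 D2 f finv T Tinv : ℝ → ℝ) (ST : Set ℝ) (C : ℝ → ℝ → ℝ)
    (μ : Measure (ℝ × ℝ)) [IsProbabilityMeasure μ]
    (hG : IsGenerator G)
    (hG' : ∀ x : ℝ, 0 < x → ENNReal.ofReal x < xG G → deriv G x < 0)
    (hGinv : IsGenInv G Ginv)
    (hD1 : IsDistortion G D1) (hD2 : IsDistortion G D2)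
    (hcase : xG G ≠ ⊤ → D2 ((xG G).toReal) ≤ D1 ((xG G).toReal))
    (hf : ∀ x : ℝ, f x = Function.invFunOn (fun w => w - D2 w) (distortionDomain G) (x - D1 x))
    (hfinv : ∀ x : ℝ, finv x =
      Function.invFunOn (fun w => w - D1 w) (distortionDomain G) (x - D2 x))
    (hC : AMOSpec G Ginv D1 D2 f finv C)
    (hT : ∀ x : ℝ, T x = Function.invFunOn (fun w => w - D1 w) (distortionDomain G) x +
        Function.invFunOn (fun w => w - D2 w) (distortionDomain G) x - x)
    (hST : ST = ((fun w => w - D1 w) '' distortionDomain G) ∩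
        ((fun w => w - D2 w) '' distortionDomain G))
    (hTinv : ∀ y : ℝ, Tinv y = Function.invFunOn T ST y)
    (hμ : ∀ u ∈ Set.Icc (0:ℝ) 1, ∀ v ∈ Set.Icc (0:ℝ) 1,
      μ (Set.Icc 0 u ×ˢ Set.Icc 0 v) = ENNReal.ofReal (C u v)) :
    ∀ t ∈ Set.Ioo (0:ℝ) 1,
      (μ {p : ℝ × ℝ | p.1 ∈ Set.Icc (0:ℝ) 1 ∧ p.2 ∈ Set.Icc (0:ℝ) 1 ∧ C p.1 p.2 ≤ t}).toReal =
        (t - deriv G (Ginv t) * Ginv t) + deriv G (Ginv t) * Tinv (Ginv t) := by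
  classical
  intro t ht
  obtain ⟨ht0, ht1⟩ := ht
  have htIoc : t ∈ Set.Ioc (0:ℝ) 1 := ⟨ht0, le_of_lt ht1⟩
  set a := Ginv t with ha_def
  have ha0 : 0 ≤ a := hGinv.nonneg t htIoc
  have hGa : G a = t := hGinv.right_inv t htIoc
  have hGnn : ∀ x : ℝ, 0 ≤ x → 0 ≤ G x := fun x hx => (hG.mem_Icc x hx).1
  have hGle1 : ∀ x : ℝ, 0 ≤ x → G x ≤ 1 := fun x hx => (hG.mem_Icc x hx).2
  -- G is antitone on [0,∞)
  have hGanti : ∀ x y : ℝ, 0 ≤ x → x ≤ y → G y ≤ G x := by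
    intro x y hx hxy
    rcases eq_or_lt_of_le hx with h0 | h0
    · rw [← h0] at hxy ⊢
      rw [hG.one_at_zero]
      exact hGle1 y hxy
    · have hmono : AntitoneOn G (Set.Ici x) := by
        apply antitoneOn_of_deriv_nonpos (convex_Ici x)
        · intro z hz
          exact (hG.diff z (lt_of_lt_of_le h0 hz)).continuousAt.continuousWithinAt
        · intro z hz
          rw [interior_Ici] at hz
          exact (hG.diff z (lt_trans h0 hz)).differentiableWithinAt
        · intro z hz
          rw [interior_Ici] at hz
          exact hG.deriv_nonpos z (lt_trans h0 hz)
      exact hmono Set.self_mem_Ici hxy hxy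
  have hapos : 0 < a := by
    rcases eq_or_lt_of_le ha0 with h0 | h0
    · exfalso
      rw [← h0, hG.one_at_zero] at hGa
      linarith
    · exact h0
  -- G x > 0 implies x is below x_G
  have hA3 : ∀ x : ℝ, 0 < x → 0 < G x → ENNReal.ofReal x < xG G := by
    intro x hxpos hGx
    by_contra hcon
    push_neg at hcon
    have hzgt : ∀ z : ℝ, 0 ≤ z → G z = 0 → x < z := by
      intro z hz hGz
      by_contra hle
      push_neg at hle
      have h1 := hGanti z x hz hle
      rw [hGz] at h1
      linarith
    have hseq : ∀ n : ℕ, ∃ z : ℝ, 0 ≤ z ∧ G z = 0 ∧ x < z ∧ z < x + 1/((n:ℝ)+1) := by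
      intro n
      have hpos : (0:ℝ) < 1/((n:ℝ)+1) := by positivity
      have h1 : xG G < ENNReal.ofReal (x + 1/((n:ℝ)+1)) := by
        refine lt_of_le_of_lt hcon ?_
        rw [ENNReal.ofReal_lt_ofReal_iff (by linarith)]
        linarith
      obtain ⟨w, hw, hwlt⟩ := sInf_lt_iff.mp h1
      obtain ⟨z, hz0, hGz, rfl⟩ := hw
      refine ⟨z, hz0, hGz, hzgt z hz0 hGz, ?_⟩
      rwa [ENNReal.ofReal_lt_ofReal_iff (by linarith)] at hwlt
    choose zs hz0 hGz hzgt' hzlt using hseq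
    have hub : Tendsto (fun n : ℕ => x + 1/((n:ℝ)+1)) atTop (nhds x) := by
      have h2 : Tendsto (fun n : ℕ => 1/((n:ℝ)+1)) atTop (nhds 0) :=
        tendsto_one_div_add_atTop_nhds_zero_nat
      have := h2.const_add x
      simpa using this
    have hz_tendsto : Tendsto zs atTop (nhds x) :=
      tendsto_of_tendsto_of_tendsto_of_le_of_le tendsto_const_nhds hub
        (fun n => le_of_lt (hzgt' n)) (fun n => le_of_lt (hzlt n))
    have hca : ContinuousAt G x := (hG.diff x hxpos).continuousAt
    have h3 : Tendsto (fun n => G (zs n)) atTop (nhds (G x)) := hca.tendsto.comp hz_tendsto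
    have h4 : Tendsto (fun _ : ℕ => (0:ℝ)) atTop (nhds (G x)) := by
      apply h3.congr
      intro n
      rw [hGz n]
    have h5 := tendsto_nhds_unique h4 tendsto_const_nhds
    linarith
  have haxG : ENNReal.ofReal a < xG G := hA3 a hapos (by rw [hGa]; exact ht0)
  have haxle : ∀ x : ℝ, 0 ≤ x → x ≤ a → ENNReal.ofReal x < xG G :=
    fun x _ hxa => lt_of_le_of_lt (ENNReal.ofReal_le_ofReal hxa) haxG
  have hGstrict : ∀ x y : ℝ, 0 ≤ x → x < y → y ≤ a → G y < G x :=
    fun x y hx hxy hya => hG.strictAnti x y hx hxy (haxle y (by linarith) hya)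
  have hginv : ∀ x : ℝ, 0 ≤ x → x ≤ a → Ginv (G x) = x :=
    fun x hx hxa => hGinv.left_inv x hx (haxle x hx hxa)
  have hGposa : ∀ x : ℝ, 0 ≤ x → x ≤ a → t ≤ G x := by
    intro x hx hxa
    have := hGanti x a hx hxa
    rwa [hGa] at this
  have hGIoc : ∀ x : ℝ, 0 ≤ x → x ≤ a → G x ∈ Set.Ioc (0:ℝ) 1 :=
    fun x hx hxa => ⟨lt_of_lt_of_le ht0 (hGposa x hx hxa), hGle1 x hx⟩
  have hGIcc : ∀ x : ℝ, 0 ≤ x → x ≤ a → G x ∈ Set.Icc (0:ℝ) 1 :=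
    fun x hx hxa => ⟨hGnn x hx, hGle1 x hx⟩
  -- domain facts
  have hdom_mem : ∀ x : ℝ, 0 ≤ x → x ≤ a → x ∈ distortionDomain G :=
    fun x hx hxa => ⟨hx, le_of_lt (haxle x hx hxa)⟩
  have h0dom : (0:ℝ) ∈ distortionDomain G := hdom_mem 0 le_rfl ha0
  have hadom : a ∈ distortionDomain G := hdom_mem a ha0 le_rfl
  have hdom_lower : ∀ x y : ℝ, y ∈ distortionDomain G → 0 ≤ x → x ≤ y → x ∈ distortionDomain G :=
    fun x y hy hx hxy => ⟨hx, le_trans (ENNReal.ofReal_le_ofReal hxy) hy.2⟩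
  have hginvdom : ∀ u ∈ Set.Ioc (0:ℝ) 1, Ginv u ∈ distortionDomain G :=
    fun u hu => ⟨hGinv.nonneg u hu, hGinv.le_xG u hu⟩
  -- distortion facts
  have Dfacts : ∀ D : ℝ → ℝ, IsDistortion G D →
      (∀ x ∈ distortionDomain G, 0 ≤ D x) ∧ (∀ x ∈ distortionDomain G, D x ≤ x) := by
    intro D hD
    have h2 : ∀ x ∈ distortionDomain G, 0 ≤ x - D x := by
      intro x hx
      have := hD.hatStrictMono.monotoneOn h0dom hx hx.1
      simpa [hD.zero] using this
    constructor
    · intro x hx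
      have := hD.strictMono.monotoneOn h0dom hx hx.1
      rwa [hD.zero] at this
    · intro x hx
      linarith [h2 x hx]
  obtain ⟨hD1nn, hD1le⟩ := Dfacts D1 hD1
  obtain ⟨hD2nn, hD2le⟩ := Dfacts D2 hD2
  have hD1hat : ∀ x ∈ distortionDomain G, 0 ≤ x - D1 x := fun x hx => by linarith [hD1le x hx]
  have hD2hat : ∀ x ∈ distortionDomain G, 0 ≤ x - D2 x := fun x hx => by linarith [hD2le x hx]
  -- IVT helper on the domain
  have ivt : ∀ F : ℝ → ℝ, ContinuousOn F (distortionDomain G) → F 0 = 0 →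
      ∀ b ∈ distortionDomain G, ∀ c : ℝ, 0 ≤ c → c ≤ F b →
      ∃ z ∈ distortionDomain G, z ≤ b ∧ F z = c := by
    intro F hF hF0 b hb c hc hcb
    have hb0 : 0 ≤ b := hb.1
    have hsub : Set.Icc (0:ℝ) b ⊆ distortionDomain G := fun z hz => hdom_lower z b hb hz.1 hz.2
    have hiv := intermediate_value_Icc hb0 (hF.mono hsub)
    have hmem : c ∈ Set.Icc (F 0) (F b) := by rw [hF0]; exact ⟨hc, hcb⟩
    obtain ⟨z, hz, hzc⟩ := hiv hmem
    exact ⟨z, hsub hz, hz.2, hzc⟩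
  -- the function f is characterized as the D̂2-inverse of D̂1
  have htopD : ∀ x ∈ distortionDomain G, ∃ b ∈ distortionDomain G, x ≤ b ∧ x - D1 x ≤ b - D2 b := by
    intro x hx
    by_cases hxg : xG G = ⊤
    · have h1 := (hD2.hat_tendsto_top hxg).eventually_ge_atTop (x - D1 x)
      have h2 := eventually_ge_atTop x
      obtain ⟨b, hb1, hb2⟩ := (h1.and h2).exists
      exact ⟨b, ⟨le_trans hx.1 hb2, by rw [hxg]; exact le_top⟩, hb2, hb1⟩
    · refine ⟨(xG G).toReal, ⟨ENNReal.toReal_nonneg, by rw [ENNReal.ofReal_toReal hxg]⟩, ?_, ?_⟩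
      · have h1 := hx.2
        have h2 := ENNReal.toReal_mono hxg h1
        rwa [ENNReal.toReal_ofReal hx.1] at h2
      · have hxgdom : (xG G).toReal ∈ distortionDomain G :=
          ⟨ENNReal.toReal_nonneg, by rw [ENNReal.ofReal_toReal hxg]⟩
        have hxxg : x ≤ (xG G).toReal := by
          have h2 := ENNReal.toReal_mono hxg hx.2
          rwa [ENNReal.toReal_ofReal hx.1] at h2
        have hc := hcase hxg
        have h3 : x - D1 x ≤ (xG G).toReal - D1 ((xG G).toReal) :=
          hD1.hatStrictMono.monotoneOn hx hxgdom hxxg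
        linarith
  have hfspec : ∀ x ∈ distortionDomain G, f x ∈ distortionDomain G ∧ f x - D2 (f x) = x - D1 x := by
    intro x hx
    obtain ⟨b, hb, hxb, hble⟩ := htopD x hx
    have hcont : ContinuousOn (fun w => w - D2 w) (distortionDomain G) :=
      continuousOn_id.sub hD2.cont
    obtain ⟨z, hz, hzb, hzc⟩ := ivt (fun w => w - D2 w) hcont (by simp [hD2.zero]) b hb
      (x - D1 x) (hD1hat x hx) hble
    have hex : ∃ w ∈ distortionDomain G, w - D2 w = x - D1 x := ⟨z, hz, hzc⟩
    constructor
    · rw [hf x]; exact Function.invFunOn_mem hex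
    · rw [hf x]; exact Function.invFunOn_eq hex
  have hfcong : ∀ x ∈ distortionDomain G, ∀ w ∈ distortionDomain G,
      w - D2 w = x - D1 x → f x = w := by
    intro x hx w hw hweq
    obtain ⟨hfd, hfe⟩ := hfspec x hx
    apply hD2.hatStrictMono.injOn hfd hw
    show f x - D2 (f x) = w - D2 w
    rw [hfe, hweq]
  have hfnn : ∀ x ∈ distortionDomain G, 0 ≤ f x := fun x hx => ((hfspec x hx).1).1
  have hfmono : ∀ x ∈ distortionDomain G, ∀ x' ∈ distortionDomain G, x ≤ x' → f x ≤ f x' := by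
    intro x hx x' hx' hxx'
    obtain ⟨hd, he⟩ := hfspec x hx
    obtain ⟨hd', he'⟩ := hfspec x' hx'
    have h1 : x - D1 x ≤ x' - D1 x' := hD1.hatStrictMono.monotoneOn hx hx' hxx'
    by_contra hcon
    push_neg at hcon
    have h2 := hD2.hatStrictMono hd' hd hcon
    simp only at h2
    linarith
  have hfstrict : ∀ x ∈ distortionDomain G, ∀ x' ∈ distortionDomain G, x < x' → f x < f x' := by
    intro x hx x' hx' hxx'
    obtain ⟨hd, he⟩ := hfspec x hx
    obtain ⟨hd', he'⟩ := hfspec x' hx'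
    have h1 : x - D1 x < x' - D1 x' := hD1.hatStrictMono hx hx' hxx'
    by_contra hcon
    push_neg at hcon
    have h2 := hD2.hatStrictMono.monotoneOn hd' hd hcon
    linarith
  -- construction of the crossing point xstar
  have hsubIcc : Set.Icc (0:ℝ) a ⊆ distortionDomain G := fun z hz => hdom_mem z hz.1 hz.2
  have hmapsto : ∀ x ∈ Set.Icc (0:ℝ) a, a - D1 x ∈ Set.Icc (0:ℝ) a := by
    intro x hx
    have hxd := hdom_mem x hx.1 hx.2
    constructor
    · have := hD1le x hxd; linarith [hx.2]
    · linarith [hD1nn x hxd]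
  have hD1c : ContinuousOn D1 (Set.Icc 0 a) := hD1.cont.mono hsubIcc
  have hD2c : ContinuousOn (fun x => D2 (a - D1 x)) (Set.Icc 0 a) := by
    apply hD2.cont.comp (continuousOn_const.sub hD1c)
    intro x hx
    exact hsubIcc (hmapsto x hx)
  have hFc : ContinuousOn (fun x => (a - D1 x) - D2 (a - D1 x) - (x - D1 x)) (Set.Icc 0 a) :=
    ((continuousOn_const.sub hD1c).sub hD2c).sub (continuousOn_id.sub hD1c)
  have hFa0 : (a - D1 a) - D2 (a - D1 a) - (a - D1 a) ≤ 0 := by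
    have := hD2nn (a - D1 a) (hsubIcc (hmapsto a ⟨ha0, le_rfl⟩))
    linarith
  have hF00 : 0 ≤ (a - D1 0) - D2 (a - D1 0) - (0 - D1 0) := by
    rw [hD1.zero]
    simp only [sub_zero]
    have := hD2hat a hadom
    linarith
  obtain ⟨xstar, hxsIcc, hFxs⟩ :=
    intermediate_value_Icc' (le_of_lt hapos) hFc (Set.mem_Icc.mpr ⟨hFa0, hF00⟩)
  have hxsd : xstar ∈ distortionDomain G := hsubIcc hxsIcc
  have hysIcc : a - D1 xstar ∈ Set.Icc (0:ℝ) a := hmapsto xstar hxsIcc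
  have hysd : (a - D1 xstar) ∈ distortionDomain G := hsubIcc hysIcc
  have hhat_eq : (a - D1 xstar) - D2 (a - D1 xstar) = xstar - D1 xstar := by
    have : (a - D1 xstar) - D2 (a - D1 xstar) - (xstar - D1 xstar) = 0 := hFxs
    linarith
  have hD2hat0 : (0:ℝ) < a - D2 a := by
    have := hD2.hatStrictMono h0dom hadom hapos
    simpa [hD2.zero] using this
  have hxspos : 0 < xstar := by
    rcases eq_or_lt_of_le hxsIcc.1 with h0 | h0
    · exfalso
      have h1 := hhat_eq
      rw [← h0, hD1.zero] at h1
      simp only [sub_zero] at h1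
      linarith
    · exact h0
  have hD1hatpos : 0 < xstar - D1 xstar := by
    have := hD1.hatStrictMono h0dom hxsd hxspos
    simpa [hD1.zero] using this
  have hyspos : 0 < a - D1 xstar := by
    rcases eq_or_lt_of_le hysIcc.1 with h0 | h0
    · exfalso
      rw [← h0] at hhat_eq
      simp [hD2.zero] at hhat_eq
      linarith
    · exact h0
  have hD1xspos : 0 < D1 xstar := by
    have := hD1.strictMono h0dom hxsd hxspos
    rwa [hD1.zero] at this
  have hD2yspos : 0 < D2 (a - D1 xstar) := by
    have := hD2.strictMono h0dom hysd hyspos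
    rwa [hD2.zero] at this
  have hxslta : xstar < a := by
    -- a - xstar = D2 ystar
    linarith [hhat_eq, hD2yspos]
  have hyslta : a - D1 xstar < a := by linarith
  have hfxs : f xstar = a - D1 xstar := hfcong xstar hxsd (a - D1 xstar) hysd hhat_eq
  have hD2ys : D2 (a - D1 xstar) = a - xstar := by linarith [hhat_eq]
  -- Tinv a = xstar - D1 xstar
  have hTinv_a : Tinv a = xstar - D1 xstar := by
    have hrng1 : ∃ w ∈ distortionDomain G, (fun w => w - D1 w) w = xstar - D1 xstar :=
      ⟨xstar, hxsd, rfl⟩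
    have hrng2 : ∃ w ∈ distortionDomain G, (fun w => w - D2 w) w = xstar - D1 xstar :=
      ⟨a - D1 xstar, hysd, hhat_eq⟩
    have hi1 : Function.invFunOn (fun w => w - D1 w) (distortionDomain G) (xstar - D1 xstar)
        = xstar := by
      apply hD1.hatStrictMono.injOn (Function.invFunOn_mem hrng1) hxsd
      show _ = xstar - D1 xstar
      exact Function.invFunOn_eq hrng1
    have hi2 : Function.invFunOn (fun w => w - D2 w) (distortionDomain G) (xstar - D1 xstar)
        = a - D1 xstar := by
      apply hD2.hatStrictMono.injOn (Function.invFunOn_mem hrng2) hysd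
      show _ = (a - D1 xstar) - D2 (a - D1 xstar)
      rw [hhat_eq]
      exact Function.invFunOn_eq hrng2
    have hTr : T (xstar - D1 xstar) = a := by
      rw [hT _, hi1, hi2]
      ring
    have hTval : ∀ s ∈ ST, ∃ xs ∈ distortionDomain G, ∃ ys ∈ distortionDomain G,
        xs - D1 xs = s ∧ ys - D2 ys = s ∧ T s = xs + ys - s := by
      intro s hs
      rw [hST] at hs
      obtain ⟨⟨xs1, hxs1, hxs1e⟩, ⟨ys1, hys1, hys1e⟩⟩ := hs
      refine ⟨xs1, hxs1, ys1, hys1, hxs1e, hys1e, ?_⟩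
      have hex1 : ∃ w ∈ distortionDomain G, (fun w => w - D1 w) w = s := ⟨xs1, hxs1, hxs1e⟩
      have hex2 : ∃ w ∈ distortionDomain G, (fun w => w - D2 w) w = s := ⟨ys1, hys1, hys1e⟩
      have e1 : Function.invFunOn (fun w => w - D1 w) (distortionDomain G) s = xs1 := by
        apply hD1.hatStrictMono.injOn (Function.invFunOn_mem hex1) hxs1
        show _ = xs1 - D1 xs1
        have h' : xs1 - D1 xs1 = s := hxs1e
        rw [h']
        exact Function.invFunOn_eq hex1
      have e2 : Function.invFunOn (fun w => w - D2 w) (distortionDomain G) s = ys1 := by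
        apply hD2.hatStrictMono.injOn (Function.invFunOn_mem hex2) hys1
        show _ = ys1 - D2 ys1
        have h' : ys1 - D2 ys1 = s := hys1e
        rw [h']
        exact Function.invFunOn_eq hex2
      rw [hT s, e1, e2]
    have hTmono : StrictMonoOn T ST := by
      intro s hs s' hs' hss'
      obtain ⟨xs1, hxs1, ys1, hys1, he1, he2, hTs⟩ := hTval s hs
      obtain ⟨xs2, hxs2, ys2, hys2, he1', he2', hTs'⟩ := hTval s' hs'
      rw [hTs, hTs']
      have hx12 : xs1 < xs2 := by
        by_contra hcon
        push_neg at hcon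
        have := hD1.hatStrictMono.monotoneOn hxs2 hxs1 hcon
        rw [he1, he1'] at this
        linarith
      have hy12 : ys1 < ys2 := by
        by_contra hcon
        push_neg at hcon
        have := hD2.hatStrictMono.monotoneOn hys2 hys1 hcon
        rw [he2, he2'] at this
        linarith
      have hD1lt : D1 xs1 < D1 xs2 := hD1.strictMono hxs1 hxs2 hx12
      have hs_eq : s = xs1 - D1 xs1 := he1.symm
      have hs'_eq : s' = xs2 - D1 xs2 := he1'.symm
      rw [hs_eq, hs'_eq]
      linarith
    have hrST : (xstar - D1 xstar) ∈ ST := by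
      rw [hST]
      exact ⟨⟨xstar, hxsd, rfl⟩, ⟨a - D1 xstar, hysd, hhat_eq⟩⟩
    have hex : ∃ s ∈ ST, T s = a := ⟨xstar - D1 xstar, hrST, hTr⟩
    rw [hTinv a]
    apply hTmono.injOn (Function.invFunOn_mem hex) hrST
    rw [hTr]
    exact Function.invFunOn_eq hex
  -- extract the copula spec
  have hCspec := hC.2.1 hcase
  have hCu0 : ∀ u : ℝ, C u 0 = 0 := fun u => (hC.1 u).1
  have hC0u : ∀ u : ℝ, C 0 u = 0 := fun u => (hC.1 u).2
  -- value lemmas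
  have hGlt' : ∀ w z : ℝ, 0 ≤ w → w < z → w < a → G z < G w := by
    intro w z hw hwz hwa
    rcases le_or_gt z a with hza | hza
    · exact hGstrict w z hw hwz hza
    · exact lt_of_le_of_lt (hGanti a z ha0 (le_of_lt hza)) (hGstrict w a hw hwa le_rfl)
  have hCval1 : ∀ x w : ℝ, 0 ≤ x → x ≤ a → 0 ≤ w → w ≤ a → f x ≤ w →
      C (G x) (G w) = G (D1 x + w) := by
    intro x w hx hxa hw hwa hfxw
    have hu := hGIoc x hx hxa
    have hv := hGIoc w hw hwa
    have hxd := hdom_mem x hx hxa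
    have hbranch : G w ≤ G (f x) := hGanti (f x) w (hfnn x hxd) hfxw
    have hform := (hCspec (G x) hu (G w) hv).1
    rw [hginv x hx hxa] at hform
    rw [hform hbranch, hginv w hw hwa]
  have hCval2 : ∀ x w : ℝ, 0 ≤ x → x ≤ a → 0 ≤ w → w < a → w < f x →
      C (G x) (G w) = G (x + D2 w) := by
    intro x w hx hxa hw hwa hwfx
    have hu := hGIoc x hx hxa
    have hv := hGIoc w hw (le_of_lt hwa)
    have hbranch : G (f x) < G w := hGlt' w (f x) hw hwfx hwa
    have hform := (hCspec (G x) hu (G w) hv).2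
    rw [hginv x hx hxa] at hform
    rw [hform hbranch, hginv w hw (le_of_lt hwa)]
  -- nonnegativity of C
  have hCnn : ∀ u ∈ Set.Icc (0:ℝ) 1, ∀ v ∈ Set.Icc (0:ℝ) 1, 0 ≤ C u v := by
    intro u hu v hv
    rcases eq_or_lt_of_le hu.1 with h0 | hupos
    · rw [← h0, hC0u]
    rcases eq_or_lt_of_le hv.1 with h0 | hvpos
    · rw [← h0, hCu0]
    have huI : u ∈ Set.Ioc (0:ℝ) 1 := ⟨hupos, hu.2⟩
    have hvI : v ∈ Set.Ioc (0:ℝ) 1 := ⟨hvpos, hv.2⟩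
    have hud := hginvdom u huI
    have hvd := hginvdom v hvI
    rcases le_or_gt v (G (f (Ginv u))) with hb | hb
    · rw [(hCspec u huI v hvI).1 hb]
      exact hGnn _ (add_nonneg (hD1nn _ hud) hvd.1)
    · rw [(hCspec u huI v hvI).2 hb]
      exact hGnn _ (add_nonneg hud.1 (hD2nn _ hvd))
  -- Ginv is antitone
  have hginv_anti : ∀ u v : ℝ, u ∈ Set.Ioc (0:ℝ) 1 → v ∈ Set.Ioc (0:ℝ) 1 → u ≤ v →
      Ginv v ≤ Ginv u := by
    intro u v hu hv huv
    by_contra hcon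
    push_neg at hcon
    have h1 : G (Ginv v) ≤ G (Ginv u) := hGanti _ _ (hGinv.nonneg u hu) (le_of_lt hcon)
    rw [hGinv.right_inv u hu, hGinv.right_inv v hv] at h1
    have h2 : u = v := le_antisymm huv h1
    rw [h2] at hcon
    exact lt_irrefl _ hcon
  -- if v ≤ G z then z ≤ Ginv v
  have hginv_ge : ∀ v ∈ Set.Ioc (0:ℝ) 1, ∀ z : ℝ, 0 ≤ z → v ≤ G z → z ≤ Ginv v := by
    intro v hv z hz hvz
    by_contra hcon
    push_neg at hcon
    have h1 : G z ≤ G (Ginv v) := hGanti _ _ (hGinv.nonneg v hv) (le_of_lt hcon)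
    rw [hGinv.right_inv v hv] at h1
    have h2 : G z = v := le_antisymm h1 hvz
    have hzpos : 0 < z := by
      rcases eq_or_lt_of_le hz with h0 | h0
      · exfalso
        rw [← h0] at hcon
        linarith [hGinv.nonneg v hv]
      · exact h0
    have h3 := hG.strictAnti (Ginv v) z (hGinv.nonneg v hv) hcon
      (hA3 z hzpos (by rw [h2]; exact hv.1))
    rw [hGinv.right_inv v hv, h2] at h3
    exact lt_irrefl _ h3
  -- C is monotone in the first variable
  have hCmono_u : ∀ v ∈ Set.Icc (0:ℝ) 1, ∀ u u' : ℝ, 0 ≤ u → u ≤ u' → u' ≤ 1 →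
      C u v ≤ C u' v := by
    intro v hv u u' hu huu' hu1
    rcases eq_or_lt_of_le hu with h0 | hupos
    · rw [← h0, hC0u]
      exact hCnn u' ⟨by linarith, hu1⟩ v hv
    rcases eq_or_lt_of_le hv.1 with h0 | hvpos
    · rw [← h0, hCu0, hCu0]
    have huI : u ∈ Set.Ioc (0:ℝ) 1 := ⟨hupos, le_trans huu' hu1⟩
    have huI' : u' ∈ Set.Ioc (0:ℝ) 1 := ⟨lt_of_lt_of_le hupos huu', hu1⟩
    have hvI : v ∈ Set.Ioc (0:ℝ) 1 := ⟨hvpos, hv.2⟩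
    have hbd := hginvdom u huI
    have hsd2 := hginvdom u' huI'
    have hwd := hginvdom v hvI
    have hxsb : Ginv u' ≤ Ginv u := hginv_anti u u' huI huI' huu'
    rcases le_or_gt v (G (f (Ginv u))) with hb | hb
    · rw [(hCspec u huI v hvI).1 hb]
      rcases le_or_gt v (G (f (Ginv u'))) with hs | hs
      · rw [(hCspec u' huI' v hvI).1 hs]
        apply hGanti _ _ (add_nonneg (hD1nn _ hsd2) hwd.1)
        have := hD1.strictMono.monotoneOn hsd2 hbd hxsb
        linarith
      · exfalso
        have h1 : G (f (Ginv u)) ≤ G (f (Ginv u')) :=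
          hGanti _ _ (hfnn _ hsd2) (hfmono _ hsd2 _ hbd hxsb)
        linarith
    · rw [(hCspec u huI v hvI).2 hb]
      rcases le_or_gt v (G (f (Ginv u'))) with hs | hs
      · rw [(hCspec u' huI' v hvI).1 hs]
        have hwfxb : Ginv v < f (Ginv u) := by
          by_contra hcon
          push_neg at hcon
          have h1 : G (Ginv v) ≤ G (f (Ginv u)) := hGanti _ _ (hfnn _ hbd) hcon
          rw [hGinv.right_inv v hvI] at h1
          linarith
        have hkey : Ginv v - D2 (Ginv v) ≤ Ginv u - D1 (Ginv u) := by
          have h1 : Ginv v - D2 (Ginv v) ≤ f (Ginv u) - D2 (f (Ginv u)) :=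
            hD2.hatStrictMono.monotoneOn hwd (hfspec _ hbd).1 (le_of_lt hwfxb)
          rw [(hfspec _ hbd).2] at h1
          exact h1
        apply hGanti _ _ (add_nonneg (hD1nn _ hsd2) hwd.1)
        have h2 : D1 (Ginv u') ≤ D1 (Ginv u) := hD1.strictMono.monotoneOn hsd2 hbd hxsb
        linarith
      · rw [(hCspec u' huI' v hvI).2 hs]
        apply hGanti _ _ (add_nonneg hsd2.1 (hD2nn _ hwd))
        linarith
  -- C is monotone in the second variable
  have hCmono_v : ∀ u ∈ Set.Icc (0:ℝ) 1, ∀ v v' : ℝ, 0 ≤ v → v ≤ v' → v' ≤ 1 →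
      C u v ≤ C u v' := by
    intro u hu v v' hvnn hvv' hv1
    rcases eq_or_lt_of_le hu.1 with h0 | hupos
    · rw [← h0, hC0u, hC0u]
    rcases eq_or_lt_of_le hvnn with h0 | hvpos
    · rw [← h0, hCu0]
      exact hCnn u hu v' ⟨by linarith, hv1⟩
    have huI : u ∈ Set.Ioc (0:ℝ) 1 := ⟨hupos, hu.2⟩
    have hvI : v ∈ Set.Ioc (0:ℝ) 1 := ⟨hvpos, le_trans hvv' hv1⟩
    have hvI' : v' ∈ Set.Ioc (0:ℝ) 1 := ⟨lt_of_lt_of_le hvpos hvv', hv1⟩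
    have hxd := hginvdom u huI
    have hw1d := hginvdom v hvI
    have hw2d := hginvdom v' hvI'
    have hw21 : Ginv v' ≤ Ginv v := hginv_anti v v' hvI hvI' hvv'
    rcases le_or_gt v (G (f (Ginv u))) with hb | hb
    · rw [(hCspec u huI v hvI).1 hb]
      rcases le_or_gt v' (G (f (Ginv u))) with hs | hs
      · rw [(hCspec u huI v' hvI').1 hs]
        exact hGanti _ _ (add_nonneg (hD1nn _ hxd) hw2d.1) (by linarith)
      · rw [(hCspec u huI v' hvI').2 hs]
        have hwfx : Ginv v' < f (Ginv u) := by
          by_contra hcon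
          push_neg at hcon
          have h1 : G (Ginv v') ≤ G (f (Ginv u)) := hGanti _ _ (hfnn _ hxd) hcon
          rw [hGinv.right_inv v' hvI'] at h1
          linarith
        -- from v ≤ G (f (Ginv u)) we get f (Ginv u) ≤ Ginv v
        have hfw1 : f (Ginv u) ≤ Ginv v := hginv_ge v hvI _ (hfnn _ hxd) hb
        -- x + D2 w2 ≤ x + D2 (f x) = D1 x + f x ≤ D1 x + w1
        have hident : Ginv u + D2 (f (Ginv u)) = D1 (Ginv u) + f (Ginv u) := by
          have := (hfspec _ hxd).2
          linarith
        have hmono2 : D2 (Ginv v') ≤ D2 (f (Ginv u)) :=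
          hD2.strictMono.monotoneOn hw2d (hfspec _ hxd).1 (le_of_lt hwfx)
        apply hGanti _ _ (add_nonneg hxd.1 (hD2nn _ hw2d))
        linarith
    · rw [(hCspec u huI v hvI).2 hb]
      rcases le_or_gt v' (G (f (Ginv u))) with hs | hs
      · exfalso; linarith
      · rw [(hCspec u huI v' hvI').2 hs]
        apply hGanti _ _ (add_nonneg hxd.1 (hD2nn _ hw2d))
        have := hD2.strictMono.monotoneOn hw2d hw1d hw21
        linarith
  -- strict lower bound for points strictly above a curve point
  have hCgt : ∀ P W : ℝ, 0 ≤ P → P ≤ a → 0 ≤ W → W ≤ a → D1 P + W ≤ a → P + D2 W ≤ a →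
      ∀ p : ℝ, p ≤ 1 → G P < p → t < C p (G W) := by
    intro P W hP hPa hW hWa h1 h2 p hp1 hGPp
    have hPd := hdom_mem P hP hPa
    have hWd := hdom_mem W hW hWa
    have hpI : p ∈ Set.Ioc (0:ℝ) 1 := ⟨lt_of_le_of_lt (hGnn P hP) hGPp, hp1⟩
    have hGWI : G W ∈ Set.Ioc (0:ℝ) 1 := hGIoc W hW hWa
    have hxd := hginvdom p hpI
    have hxsP : Ginv p < P := by
      by_contra hcon
      push_neg at hcon
      have h3 : G (Ginv p) ≤ G P := hGanti P (Ginv p) hP hcon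
      rw [hGinv.right_inv p hpI] at h3
      linarith
    rcases le_or_gt (G W) (G (f (Ginv p))) with hb | hb
    · have hform := (hCspec p hpI (G W) hGWI).1 hb
      rw [hginv W hW hWa] at hform
      rw [hform]
      have harg : D1 (Ginv p) + W < a := by
        have : D1 (Ginv p) < D1 P := hD1.strictMono hxd hPd hxsP
        linarith
      rw [← hGa]
      exact hGstrict (D1 (Ginv p) + W) a (add_nonneg (hD1nn _ hxd) hW) harg le_rfl
    · have hform := (hCspec p hpI (G W) hGWI).2 hb
      rw [hginv W hW hWa] at hform
      rw [hform]
      have harg : Ginv p + D2 W < a := by linarith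
      rw [← hGa]
      exact hGstrict (Ginv p + D2 W) a (add_nonneg hxd.1 (hD2nn W hWd)) harg le_rfl
  -- comparison helpers
  have hD1le_rev : ∀ u ∈ distortionDomain G, ∀ v ∈ distortionDomain G, D1 u ≤ D1 v → u ≤ v := by
    intro u hu v hv h
    by_contra hcon
    push_neg at hcon
    have := hD1.strictMono hv hu hcon
    linarith
  have hD2le_rev : ∀ u ∈ distortionDomain G, ∀ v ∈ distortionDomain G, D2 u ≤ D2 v → u ≤ v := by
    intro u hu v hv h
    by_contra hcon
    push_neg at hcon
    have := hD2.strictMono hv hu hcon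
    linarith
  have hD2lt_rev : ∀ u ∈ distortionDomain G, ∀ v ∈ distortionDomain G, D2 u < D2 v → u < v := by
    intro u hu v hv h
    by_contra hcon
    push_neg at hcon
    have := hD2.strictMono.monotoneOn hv hu hcon
    linarith
  have hD2hatle_rev : ∀ u ∈ distortionDomain G, ∀ v ∈ distortionDomain G,
      u - D2 u ≤ v - D2 v → u ≤ v := by
    intro u hu v hv h
    by_contra hcon
    push_neg at hcon
    have := hD2.hatStrictMono hv hu hcon
    simp only at this
    linarith
  have hD2hatlt_rev : ∀ u ∈ distortionDomain G, ∀ v ∈ distortionDomain G,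
      u - D2 u < v - D2 v → u < v := by
    intro u hu v hv h
    by_contra hcon
    push_neg at hcon
    have := hD2.hatStrictMono.monotoneOn hv hu hcon
    linarith
  -- the sandwich bounds, for each k ≥ 1
  have hsandwich : ∀ k : ℕ, 1 ≤ k →
      ENNReal.ofReal (t + ((k:ℝ) * (t - G (a + (a - xstar)/k)) + (k:ℝ) * (t - G (a + D1 xstar/k))))
        ≤ μ {p : ℝ × ℝ | p.1 ∈ Set.Icc (0:ℝ) 1 ∧ p.2 ∈ Set.Icc (0:ℝ) 1 ∧ C p.1 p.2 ≤ t} ∧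
      μ {p : ℝ × ℝ | p.1 ∈ Set.Icc (0:ℝ) 1 ∧ p.2 ∈ Set.Icc (0:ℝ) 1 ∧ C p.1 p.2 ≤ t}
        ≤ ENNReal.ofReal (t + ((k:ℝ) * (G (a - (a - xstar)/k) - t)
            + (k:ℝ) * (G (a - D1 xstar/k) - t))) := by
    intro k hk
    have hkR : (0:ℝ) < (k:ℝ) := by exact_mod_cast Nat.lt_of_lt_of_le Nat.zero_lt_one hk
    set dA := (a - xstar)/k with hdA
    set dB := D1 xstar/k with hdB
    have hdApos : 0 < dA := div_pos (by linarith) hkR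
    have hdBpos : 0 < dB := div_pos hD1xspos hkR
    have hkdA : (k:ℝ) * dA = a - xstar := by
      rw [hdA]; field_simp
    have hkdB : (k:ℝ) * dB = D1 xstar := by
      rw [hdB]; field_simp
    have hdAle : dA ≤ a - xstar := by
      nlinarith [mul_le_mul_of_nonneg_right (show (1:ℝ) ≤ k by exact_mod_cast hk) (le_of_lt hdApos)]
    have hdBle : dB ≤ D1 xstar := by
      nlinarith [mul_le_mul_of_nonneg_right (show (1:ℝ) ≤ k by exact_mod_cast hk) (le_of_lt hdBpos)]
    -- grid in the second regime
    set pp : ℕ → ℝ := fun i => a - i * dA with hpp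
    have hppIcc : ∀ i : ℕ, i ≤ k → xstar ≤ pp i ∧ pp i ≤ a := by
      intro i hi
      constructor
      · have h1 : (i:ℝ) * dA ≤ (k:ℝ) * dA :=
          mul_le_mul_of_nonneg_right (by exact_mod_cast hi) (le_of_lt hdApos)
        rw [hkdA] at h1
        simp only [hpp]
        linarith
      · simp only [hpp]
        have : 0 ≤ (i:ℝ) * dA := by positivity
        linarith
    have hpp0 : ∀ i : ℕ, i ≤ k → 0 ≤ pp i := fun i hi => le_trans (le_of_lt hxspos) (hppIcc i hi).1
    have hppk : pp k = xstar := by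
      simp only [hpp]
      linarith [hkdA]
    have hpplt : ∀ i : ℕ, i < k → xstar < pp i := by
      intro i hi
      have h1 : (i:ℝ) * dA < (k:ℝ) * dA := by
        apply mul_lt_mul_of_pos_right _ hdApos
        exact_mod_cast hi
      rw [hkdA] at h1
      simp only [hpp]
      linarith
    set yy : ℕ → ℝ := fun i => Function.invFunOn D2 (distortionDomain G) ((i:ℝ) * dA) with hyy
    have hyyspec : ∀ i : ℕ, i ≤ k →
        yy i ∈ distortionDomain G ∧ D2 (yy i) = (i:ℝ) * dA ∧ yy i ≤ a - D1 xstar := by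
      intro i hi
      have hc0 : (0:ℝ) ≤ (i:ℝ) * dA := by positivity
      have hck : (i:ℝ) * dA ≤ D2 (a - D1 xstar) := by
        have h1 : (i:ℝ) * dA ≤ (k:ℝ) * dA :=
          mul_le_mul_of_nonneg_right (by exact_mod_cast hi) (le_of_lt hdApos)
        rw [hkdA] at h1
        rw [hD2ys]
        exact h1
      obtain ⟨z, hz, hzb, hze⟩ := ivt D2 hD2.cont hD2.zero (a - D1 xstar) hysd _ hc0 hck
      have hex : ∃ w ∈ distortionDomain G, D2 w = (i:ℝ) * dA := ⟨z, hz, hze⟩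
      have hmem := Function.invFunOn_mem hex
      have heq : D2 (yy i) = (i:ℝ) * dA := Function.invFunOn_eq hex
      refine ⟨hmem, heq, ?_⟩
      apply hD2le_rev _ hmem _ hysd
      rw [heq, hD2ys]
      have h1 : (i:ℝ) * dA ≤ (k:ℝ) * dA :=
        mul_le_mul_of_nonneg_right (by exact_mod_cast hi) (le_of_lt hdApos)
      rw [hkdA] at h1
      exact h1
    have hyy0 : yy 0 = 0 := by
      have h1 := (hyyspec 0 (by omega)).2.1
      simp only [Nat.cast_zero, zero_mul] at h1
      apply hD2.strictMono.injOn (hyyspec 0 (by omega)).1 h0dom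
      rw [h1, hD2.zero]
    have hyyk : yy k = a - D1 xstar := by
      have h1 := (hyyspec k le_rfl).2.1
      apply hD2.strictMono.injOn (hyyspec k le_rfl).1 hysd
      rw [h1, hkdA, hD2ys]
    have hyylt : ∀ i : ℕ, i < k → yy i < a - D1 xstar := by
      intro i hi
      apply hD2lt_rev _ (hyyspec i (by omega)).1 _ hysd
      rw [(hyyspec i (by omega)).2.1, hD2ys, ← hkdA]
      apply mul_lt_mul_of_pos_right _ hdApos
      exact_mod_cast hi
    -- grid in the first regime
    set xx : ℕ → ℝ := fun j => Function.invFunOn D1 (distortionDomain G) (D1 xstar - (j:ℝ) * dB)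
      with hxx
    have hxxspec : ∀ j : ℕ, j ≤ k →
        xx j ∈ distortionDomain G ∧ D1 (xx j) = D1 xstar - (j:ℝ) * dB ∧ xx j ≤ xstar := by
      intro j hj
      have h1 : (j:ℝ) * dB ≤ (k:ℝ) * dB :=
        mul_le_mul_of_nonneg_right (by exact_mod_cast hj) (le_of_lt hdBpos)
      rw [hkdB] at h1
      have hc0 : (0:ℝ) ≤ D1 xstar - (j:ℝ) * dB := by linarith
      have hck : D1 xstar - (j:ℝ) * dB ≤ D1 xstar := by
        have : 0 ≤ (j:ℝ) * dB := by positivity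
        linarith
      obtain ⟨z, hz, hzb, hze⟩ := ivt D1 hD1.cont hD1.zero xstar hxsd _ hc0 hck
      have hex : ∃ w ∈ distortionDomain G, D1 w = D1 xstar - (j:ℝ) * dB := ⟨z, hz, hze⟩
      have hmem := Function.invFunOn_mem hex
      have heq : D1 (xx j) = D1 xstar - (j:ℝ) * dB := Function.invFunOn_eq hex
      refine ⟨hmem, heq, ?_⟩
      apply hD1le_rev _ hmem _ hxsd
      rw [heq]
      have : 0 ≤ (j:ℝ) * dB := by positivity
      linarith
    have hxx0 : xx 0 = xstar := by
      have h1 := (hxxspec 0 (by omega)).2.1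
      simp only [Nat.cast_zero, zero_mul, sub_zero] at h1
      exact hD1.strictMono.injOn (hxxspec 0 (by omega)).1 hxsd h1
    have hxxk : xx k = 0 := by
      have h1 := (hxxspec k le_rfl).2.1
      apply hD1.strictMono.injOn (hxxspec k le_rfl).1 h0dom
      rw [h1, hkdB, hD1.zero]
      ring
    have hxxnn : ∀ j : ℕ, j ≤ k → 0 ≤ xx j := fun j hj => ((hxxspec j hj).1).1
    have hxxa : ∀ j : ℕ, j ≤ k → xx j ≤ a :=
      fun j hj => le_trans (hxxspec j hj).2.2 (le_of_lt hxslta)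
    -- the w-values of the first regime
    have hwIcc : ∀ j : ℕ, j ≤ k → a - D1 xstar ≤ a - D1 (xx j) ∧ a - D1 (xx j) ≤ a := by
      intro j hj
      have h1 : D1 (xx j) ≤ D1 xstar := by
        rw [(hxxspec j hj).2.1]
        have : 0 ≤ (j:ℝ) * dB := by positivity
        linarith
      have h2 : 0 ≤ D1 (xx j) := hD1nn _ (hxxspec j hj).1
      exact ⟨by linarith, by linarith⟩
    have hwnn : ∀ j : ℕ, j ≤ k → 0 ≤ a - D1 (xx j) :=
      fun j hj => le_trans (le_of_lt hyspos) (hwIcc j hj).1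
    -- curve values, regime A
    have hcurveA : ∀ i : ℕ, i ≤ k → C (G (pp i)) (G (yy i)) = t := by
      intro i hi
      rcases eq_or_lt_of_le hi with rfl | hik
      · rw [hppk, hyyk, hCval1 xstar (a - D1 xstar) (le_of_lt hxspos) (le_of_lt hxslta)
          (le_of_lt hyspos) (by linarith) (le_of_eq hfxs)]
        rw [show D1 xstar + (a - D1 xstar) = a by ring, hGa]
      · have hylt : yy i < f (pp i) := by
          apply hD2hatlt_rev _ (hyyspec i hi).1 _ (hfspec (pp i) (hdom_mem _ (hpp0 i hi) (hppIcc i hi).2)).1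
          rw [(hfspec (pp i) (hdom_mem _ (hpp0 i hi) (hppIcc i hi).2)).2]
          have h1 : yy i - D2 (yy i) ≤ (a - D1 xstar) - D2 (a - D1 xstar) :=
            hD2.hatStrictMono.monotoneOn (hyyspec i hi).1 hysd (hyyspec i hi).2.2
          rw [hhat_eq] at h1
          have h2 : xstar - D1 xstar < pp i - D1 (pp i) :=
            hD1.hatStrictMono hxsd (hdom_mem _ (hpp0 i hi) (hppIcc i hi).2) (hpplt i hik)
          linarith
        rw [hCval2 (pp i) (yy i) (hpp0 i hi) (hppIcc i hi).2 ((hyyspec i hi).1).1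
          (lt_of_le_of_lt (hyyspec i hi).2.2 hyslta) hylt]
        rw [(hyyspec i hi).2.1]
        rw [show pp i + (i:ℝ) * dA = a by simp only [hpp]; ring, hGa]
    -- curve values, regime B
    have hcurveB : ∀ j : ℕ, j ≤ k → C (G (xx j)) (G (a - D1 (xx j))) = t := by
      intro j hj
      have hfle : f (xx j) ≤ a - D1 (xx j) := by
        apply hD2hatle_rev _ (hfspec (xx j) (hxxspec j hj).1).1 _
          (hdom_mem _ (hwnn j hj) (hwIcc j hj).2)
        rw [(hfspec (xx j) (hxxspec j hj).1).2]
        have h1 : xx j - D1 (xx j) ≤ xstar - D1 xstar :=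
          hD1.hatStrictMono.monotoneOn (hxxspec j hj).1 hxsd (hxxspec j hj).2.2
        have h2 : (a - D1 xstar) - D2 (a - D1 xstar) ≤ (a - D1 (xx j)) - D2 (a - D1 (xx j)) :=
          hD2.hatStrictMono.monotoneOn hysd (hdom_mem _ (hwnn j hj) (hwIcc j hj).2) (hwIcc j hj).1
        rw [hhat_eq] at h2
        linarith
      rw [hCval1 (xx j) (a - D1 (xx j)) (hxxnn j hj) (hxxa j hj) (hwnn j hj) (hwIcc j hj).2 hfle]
      rw [show D1 (xx j) + (a - D1 (xx j)) = a by ring, hGa]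
    -- outer corner values
    have houterA : ∀ i : ℕ, i + 1 ≤ k → C (G (pp (i+1))) (G (yy i)) = G (a - dA) := by
      intro i hi
      have hylt : yy i < f (pp (i+1)) := by
        apply lt_of_lt_of_le (hyylt i (by omega))
        rw [← hfxs]
        exact hfmono xstar hxsd (pp (i+1)) (hdom_mem _ (hpp0 _ hi) (hppIcc _ hi).2)
          (hppIcc _ hi).1
      rw [hCval2 (pp (i+1)) (yy i) (hpp0 _ hi) (hppIcc _ hi).2 ((hyyspec i (by omega)).1).1
        (lt_of_le_of_lt (hyyspec i (by omega)).2.2 hyslta) hylt]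
      rw [(hyyspec i (by omega)).2.1]
      congr 1
      simp only [hpp]
      push_cast
      ring
    have houterB : ∀ j : ℕ, j + 1 ≤ k → C (G (xx (j+1))) (G (a - D1 (xx j))) = G (a - dB) := by
      intro j hj
      have hfle : f (xx (j+1)) ≤ a - D1 (xx j) := by
        have h1 : f (xx (j+1)) ≤ f xstar :=
          hfmono (xx (j+1)) (hxxspec _ hj).1 xstar hxsd (hxxspec _ hj).2.2
        rw [hfxs] at h1
        exact le_trans h1 (hwIcc j (by omega)).1
      rw [hCval1 (xx (j+1)) (a - D1 (xx j)) (hxxnn _ hj) (hxxa _ hj) (hwnn j (by omega))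
        (hwIcc j (by omega)).2 hfle]
      rw [(hxxspec (j+1) hj).2.1, (hxxspec j (by omega)).2.1]
      congr 1
      push_cast
      ring
    -- inner corner values
    have hinnerA : ∀ i : ℕ, i + 1 ≤ k → C (G (pp i)) (G (yy (i+1))) = G (a + dA) := by
      intro i hi
      have hylt : yy (i+1) < f (pp i) := by
        apply lt_of_le_of_lt (hyyspec (i+1) hi).2.2
        rw [← hfxs]
        exact hfstrict xstar hxsd (pp i) (hdom_mem _ (hpp0 i (by omega)) (hppIcc i (by omega)).2)
          (hpplt i (by omega))
      rw [hCval2 (pp i) (yy (i+1)) (hpp0 i (by omega)) (hppIcc i (by omega)).2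
        ((hyyspec (i+1) hi).1).1 (lt_of_le_of_lt (hyyspec (i+1) hi).2.2 hyslta) hylt]
      rw [(hyyspec (i+1) hi).2.1]
      congr 1
      simp only [hpp]
      push_cast
      ring
    have hinnerB : ∀ j : ℕ, j + 1 ≤ k → C (G (xx j)) (G (a - D1 (xx (j+1)))) = G (a + dB) := by
      intro j hj
      have hfle : f (xx j) ≤ a - D1 (xx (j+1)) := by
        have h1 : f (xx j) ≤ f xstar :=
          hfmono (xx j) (hxxspec j (by omega)).1 xstar hxsd (hxxspec j (by omega)).2.2
        rw [hfxs] at h1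
        exact le_trans h1 (hwIcc (j+1) hj).1
      rw [hCval1 (xx j) (a - D1 (xx (j+1))) (hxxnn j (by omega)) (hxxa j (by omega))
        (hwnn (j+1) hj) (hwIcc (j+1) hj).2 hfle]
      rw [(hxxspec j (by omega)).2.1, (hxxspec (j+1) hj).2.1]
      congr 1
      push_cast
      ring
    -- corner sequences
    set UU : ℕ → ℝ := fun i => if i ≤ k then G (pp i) else G (xx (i - k)) with hUU
    set VV : ℕ → ℝ := fun i => if i ≤ k then G (yy i) else G (a - D1 (xx (i - k))) with hVV
    have hUUA : ∀ i : ℕ, i ≤ k → UU i = G (pp i) := by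
      intro i hi; simp only [hUU, if_pos hi]
    have hVVA : ∀ i : ℕ, i ≤ k → VV i = G (yy i) := by
      intro i hi; simp only [hVV, if_pos hi]
    have hUUB : ∀ i : ℕ, k ≤ i → UU i = G (xx (i - k)) := by
      intro i hi
      rcases eq_or_lt_of_le hi with rfl | hlt
      · simp only [hUU, if_pos le_rfl, Nat.sub_self, hxx0, hppk]
      · simp only [hUU, if_neg (by omega : ¬ i ≤ k)]
    have hVVB : ∀ i : ℕ, k ≤ i → VV i = G (a - D1 (xx (i - k))) := by
      intro i hi
      rcases eq_or_lt_of_le hi with rfl | hlt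
      · simp only [hVV, if_pos le_rfl, Nat.sub_self, hxx0, hyyk]
      · simp only [hVV, if_neg (by omega : ¬ i ≤ k)]
    have hUUIcc : ∀ i : ℕ, i ≤ 2*k → UU i ∈ Set.Icc (0:ℝ) 1 := by
      intro i hi
      rcases le_or_gt i k with h1 | h1
      · rw [hUUA i h1]; exact hGIcc _ (hpp0 i h1) (hppIcc i h1).2
      · rw [hUUB i (le_of_lt h1)]
        exact hGIcc _ (hxxnn _ (by omega)) (hxxa _ (by omega))
    have hVVIcc : ∀ i : ℕ, i ≤ 2*k → VV i ∈ Set.Icc (0:ℝ) 1 := by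
      intro i hi
      rcases le_or_gt i k with h1 | h1
      · rw [hVVA i h1]
        exact hGIcc _ ((hyyspec i h1).1).1 (le_trans (hyyspec i h1).2.2 (le_of_lt hyslta))
      · rw [hVVB i (le_of_lt h1)]
        exact hGIcc _ (hwnn _ (by omega)) (hwIcc _ (by omega)).2
    have hUUmono : ∀ i : ℕ, i < 2*k → UU i ≤ UU (i+1) := by
      intro i hi
      rcases le_or_gt (i+1) k with h1 | h1
      · rw [hUUA i (by omega), hUUA (i+1) h1]
        apply hGanti _ _ (hpp0 (i+1) h1)
        simp only [hpp]
        push_cast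
        nlinarith [hdApos]
      · rw [hUUB i (by omega), hUUB (i+1) (by omega),
          show i + 1 - k = (i - k) + 1 from by omega]
        have hjk : (i - k) + 1 ≤ k := by omega
        apply hGanti _ _ (hxxnn _ hjk)
        apply hD1le_rev _ (hxxspec _ hjk).1 _ (hxxspec _ (by omega : i - k ≤ k)).1
        rw [(hxxspec _ hjk).2.1, (hxxspec _ (by omega : i - k ≤ k)).2.1]
        push_cast
        nlinarith [hdBpos]
    have hVVanti : ∀ i : ℕ, i < 2*k → VV (i+1) ≤ VV i := by
      intro i hi
      rcases le_or_gt (i+1) k with h1 | h1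
      · rw [hVVA i (by omega), hVVA (i+1) h1]
        apply hGanti _ _ ((hyyspec i (by omega)).1).1
        apply hD2le_rev _ (hyyspec i (by omega)).1 _ (hyyspec (i+1) h1).1
        rw [(hyyspec i (by omega)).2.1, (hyyspec (i+1) h1).2.1]
        push_cast
        nlinarith [hdApos]
      · rw [hVVB i (by omega), hVVB (i+1) (by omega),
          show i + 1 - k = (i - k) + 1 from by omega]
        have h2 : D1 (xx ((i-k)+1)) ≤ D1 (xx (i-k)) := by
          rw [(hxxspec _ (by omega : (i-k)+1 ≤ k)).2.1, (hxxspec _ (by omega : i-k ≤ k)).2.1]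
          push_cast
          nlinarith [hdBpos]
        apply hGanti _ _ (hwnn _ (by omega : i - k ≤ k))
        linarith
    have hUU0 : UU 0 = t := by
      rw [hUUA 0 (by omega)]
      have h1 : pp 0 = a := by simp [hpp]
      rw [h1, hGa]
    have hVV0 : VV 0 = 1 := by
      rw [hVVA 0 (by omega), hyy0, hG.one_at_zero]
    have hUU2k : UU (2*k) = 1 := by
      rw [hUUB (2*k) (by omega), show 2*k - k = k from by omega, hxxk, hG.one_at_zero]
    have hUVcurve : ∀ i : ℕ, i ≤ 2*k → C (UU i) (VV i) = t := by
      intro i hi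
      rcases le_or_gt i k with h1 | h1
      · rw [hUUA i h1, hVVA i h1]; exact hcurveA i h1
      · rw [hUUB i (by omega), hVVB i (by omega)]; exact hcurveB (i-k) (by omega)
    have hUVouter : ∀ i : ℕ, i < 2*k →
        C (UU (i+1)) (VV i) = G (a - (if i < k then dA else dB)) := by
      intro i hi
      rcases lt_or_ge i k with h1 | h1
      · rw [if_pos h1, hUUA (i+1) (by omega), hVVA i (by omega)]
        exact houterA i (by omega)
      · rw [if_neg (not_lt.mpr h1), hUUB (i+1) (by omega), hVVB i (by omega),
          show i + 1 - k = (i - k) + 1 from by omega]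
        exact houterB (i-k) (by omega)
    have hUVinner : ∀ i : ℕ, i < 2*k →
        C (UU i) (VV (i+1)) = G (a + (if i < k then dA else dB)) := by
      intro i hi
      rcases lt_or_ge i k with h1 | h1
      · rw [if_pos h1, hUUA i (by omega), hVVA (i+1) (by omega)]
        exact hinnerA i (by omega)
      · rw [if_neg (not_lt.mpr h1), hUUB i (by omega), hVVB (i+1) (by omega),
          show i + 1 - k = (i - k) + 1 from by omega]
        exact hinnerB (i-k) (by omega)
    -- inner staircase
    have hSin := staircase_measure μ C hμ UU VV (2*k) hUUIcc hVVIcc hUUmono hVVanti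
      (fun i hi => by
        rw [hUVinner i hi]
        apply hGnn
        rcases lt_or_ge i k with h1 | h1
        · rw [if_pos h1]; linarith
        · rw [if_neg (not_lt.mpr h1)]; linarith)
      (fun i hi => by
        rw [hUVinner i hi, hUVcurve (i+1) (by omega), ← hGa]
        apply hGanti a _ ha0
        rcases lt_or_ge i k with h1 | h1
        · rw [if_pos h1]; linarith
        · rw [if_neg (not_lt.mpr h1)]; linarith)
      (by rw [hUVcurve 0 (by omega)]; linarith)
    have hsplitsum : ∀ g : ℕ → ℝ, (∑ i ∈ Finset.range (2*k), g i)
        = (∑ i ∈ Finset.Ico 0 k, g i) + ∑ i ∈ Finset.Ico k (2*k), g i := by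
      intro g
      rw [Finset.range_eq_Ico,
        ← Finset.sum_Ico_consecutive _ (Nat.zero_le k) (by omega : k ≤ 2*k)]
    have hSin_eq : μ (⋃ i ∈ Finset.range (2*k+1), Set.Icc 0 (UU i) ×ˢ Set.Icc 0 (VV i))
        = ENNReal.ofReal (t + ((k:ℝ) * (t - G (a + dA)) + (k:ℝ) * (t - G (a + dB)))) := by
      rw [hSin, hUVcurve 0 (by omega)]
      congr 1
      have hcong : ∀ i ∈ Finset.range (2*k), C (UU (i+1)) (VV (i+1)) - C (UU i) (VV (i+1))
          = (fun i => t - G (a + (if i < k then dA else dB))) i := by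
        intro i hi
        have hi' : i < 2*k := Finset.mem_range.mp hi
        rw [hUVcurve (i+1) (by omega), hUVinner i hi']
      rw [Finset.sum_congr rfl hcong,
        hsplitsum (fun i => t - G (a + (if i < k then dA else dB)))]
      have e1 : (∑ i ∈ Finset.Ico 0 k, (t - G (a + (if i < k then dA else dB))))
          = ∑ _i ∈ Finset.Ico 0 k, (t - G (a + dA)) :=
        Finset.sum_congr rfl (fun i hi => by rw [if_pos (Finset.mem_Ico.mp hi).2])
      have e2 : (∑ i ∈ Finset.Ico k (2*k), (t - G (a + (if i < k then dA else dB))))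
          = ∑ _i ∈ Finset.Ico k (2*k), (t - G (a + dB)) :=
        Finset.sum_congr rfl (fun i hi => by
          rw [if_neg (not_lt.mpr (Finset.mem_Ico.mp hi).1)])
      rw [e1, e2, Finset.sum_const, Finset.sum_const, Nat.card_Ico, Nat.card_Ico,
        show 2*k - k = k from by omega, Nat.sub_zero, nsmul_eq_mul, nsmul_eq_mul]
    have hSin_sub : (⋃ i ∈ Finset.range (2*k+1), Set.Icc 0 (UU i) ×ˢ Set.Icc 0 (VV i))
        ⊆ {p : ℝ × ℝ | p.1 ∈ Set.Icc (0:ℝ) 1 ∧ p.2 ∈ Set.Icc (0:ℝ) 1 ∧ C p.1 p.2 ≤ t} := by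
      intro p hp
      simp only [Set.mem_iUnion] at hp
      obtain ⟨i, hi, hpmem⟩ := hp
      have hik : i ≤ 2*k := by
        have := Finset.mem_range.mp hi
        omega
      have hp1 : p.1 ∈ Set.Icc (0:ℝ) (UU i) := hpmem.1
      have hp2 : p.2 ∈ Set.Icc (0:ℝ) (VV i) := hpmem.2
      have hU1 := hUUIcc i hik
      have hV1 := hVVIcc i hik
      refine ⟨⟨hp1.1, le_trans hp1.2 hU1.2⟩, ⟨hp2.1, le_trans hp2.2 hV1.2⟩, ?_⟩
      calc C p.1 p.2 ≤ C (UU i) p.2 :=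
            hCmono_u p.2 ⟨hp2.1, le_trans hp2.2 hV1.2⟩ p.1 (UU i) hp1.1 hp1.2 hU1.2
        _ ≤ C (UU i) (VV i) := hCmono_v (UU i) hU1 p.2 (VV i) hp2.1 hp2.2 hV1.2
        _ = t := hUVcurve i hik
    -- outer staircase
    have hSout := staircase_measure μ C hμ (fun i => UU (i+1)) (fun i => VV i) (2*k-1)
      (fun i hi => hUUIcc (i+1) (by omega))
      (fun i hi => hVVIcc i (by omega))
      (fun i hi => hUUmono (i+1) (by omega))
      (fun i hi => hVVanti i (by omega))
      (fun i hi => by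
        show 0 ≤ C (UU (i+1)) (VV (i+1))
        rw [hUVcurve (i+1) (by omega)]
        linarith)
      (fun i hi => by
        show C (UU (i+1)) (VV (i+1)) ≤ C (UU (i+1+1)) (VV (i+1))
        rw [hUVcurve (i+1) (by omega), hUVouter (i+1) (by omega)]
        apply hGposa
        · rcases lt_or_ge (i+1) k with h1 | h1
          · rw [if_pos h1]; linarith
          · rw [if_neg (not_lt.mpr h1)]; linarith
        · rcases lt_or_ge (i+1) k with h1 | h1
          · rw [if_pos h1]; linarith
          · rw [if_neg (not_lt.mpr h1)]; linarith)
      (by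
        show 0 ≤ C (UU (0+1)) (VV 0)
        rw [hUVouter 0 (by omega), if_pos (by omega : 0 < k)]
        have := hGposa (a - dA) (by linarith) (by linarith)
        linarith)
    have hout_real : C (UU (0+1)) (VV 0) + (∑ i ∈ Finset.range (2*k-1),
          (C (UU (i+1+1)) (VV (i+1)) - C (UU (i+1)) (VV (i+1))))
        = t + ((k:ℝ) * (G (a - dA) - t) + (k:ℝ) * (G (a - dB) - t)) := by
      have hcong : ∀ i ∈ Finset.range (2*k-1),
          C (UU (i+1+1)) (VV (i+1)) - C (UU (i+1)) (VV (i+1))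
          = (fun i => G (a - (if i + 1 < k then dA else dB)) - t) i := by
        intro i hi
        have hi' : i < 2*k-1 := Finset.mem_range.mp hi
        rw [hUVcurve (i+1) (by omega), hUVouter (i+1) (by omega)]
      rw [Finset.sum_congr rfl hcong]
      rw [hUVouter 0 (by omega), if_pos (by omega : 0 < k)]
      rw [Finset.range_eq_Ico,
        ← Finset.sum_Ico_consecutive _ (Nat.zero_le (k-1)) (by omega : k-1 ≤ 2*k-1)]
      have e1 : (∑ i ∈ Finset.Ico 0 (k-1), (G (a - (if i + 1 < k then dA else dB)) - t))
          = ∑ _i ∈ Finset.Ico 0 (k-1), (G (a - dA) - t) :=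
        Finset.sum_congr rfl (fun i hi => by
          rw [if_pos (by have := (Finset.mem_Ico.mp hi).2; omega : i + 1 < k)])
      have e2 : (∑ i ∈ Finset.Ico (k-1) (2*k-1), (G (a - (if i + 1 < k then dA else dB)) - t))
          = ∑ _i ∈ Finset.Ico (k-1) (2*k-1), (G (a - dB) - t) :=
        Finset.sum_congr rfl (fun i hi => by
          rw [if_neg (by have := (Finset.mem_Ico.mp hi).1; omega : ¬ i + 1 < k)])
      rw [e1, e2, Finset.sum_const, Finset.sum_const, Nat.card_Ico, Nat.card_Ico, Nat.sub_zero,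
          show 2*k-1 - (k-1) = k from by omega, nsmul_eq_mul, nsmul_eq_mul]
      have hcast : ((k-1 : ℕ) : ℝ) = (k:ℝ) - 1 := by
        rw [Nat.cast_sub hk]
        simp
      rw [hcast]
      ring
    have hAsub : {p : ℝ × ℝ | p.1 ∈ Set.Icc (0:ℝ) 1 ∧ p.2 ∈ Set.Icc (0:ℝ) 1 ∧ C p.1 p.2 ≤ t}
        ⊆ ⋃ i ∈ Finset.range (2*k-1+1), Set.Icc 0 (UU (i+1)) ×ˢ Set.Icc 0 (VV i) := by
      rintro p ⟨hp1, hp2, hpC⟩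
      simp only [Set.mem_iUnion, Finset.mem_range]
      by_cases hP0 : UU 0 < p.1
      · obtain ⟨istar, hspec, hile, hgreat⟩ : ∃ m : ℕ, (UU m < p.1) ∧ m ≤ 2*k-1
            ∧ ∀ j : ℕ, m < j → j ≤ 2*k-1 → ¬ UU j < p.1 := by
          haveI hdec : DecidablePred (fun i : ℕ => UU i < p.1) := Classical.decPred _
          refine ⟨@Nat.findGreatest (fun i : ℕ => UU i < p.1) hdec (2*k-1), ?_, ?_, ?_⟩
          · exact Nat.findGreatest_spec (P := fun i : ℕ => UU i < p.1) (Nat.zero_le _) hP0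
          · exact Nat.findGreatest_le _
          · intro j hj hj2
            exact Nat.findGreatest_is_greatest (P := fun i : ℕ => UU i < p.1) hj hj2
        have hnext : p.1 ≤ UU (istar + 1) := by
          rcases lt_or_ge istar (2*k-1) with hlt | hge
          · by_contra hcon
            push_neg at hcon
            exact hgreat (istar+1) (by omega) (by omega) hcon
          · have h2 : istar + 1 = 2*k := by omega
            rw [h2, hUU2k]
            exact hp1.2
        have hq : p.2 ≤ VV istar := by
          by_contra hcon
          push_neg at hcon
          have hgt : t < C p.1 (VV istar) := by
            rcases le_or_gt istar k with h1 | h1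
            · rw [hVVA istar h1]
              rw [hUUA istar h1] at hspec
              have hWa : yy istar ≤ a :=
                le_trans (hyyspec istar h1).2.2 (le_of_lt hyslta)
              have hsum2 : pp istar + D2 (yy istar) = a := by
                rw [(hyyspec istar h1).2.1]
                simp only [hpp]
                ring
              have hha : yy istar - D2 (yy istar) ≤ pp istar - D1 (pp istar) := by
                have h_a : yy istar - D2 (yy istar)
                    ≤ (a - D1 xstar) - D2 (a - D1 xstar) :=
                  hD2.hatStrictMono.monotoneOn (hyyspec istar h1).1 hysd
                    (hyyspec istar h1).2.2
                have h_b : xstar - D1 xstar ≤ pp istar - D1 (pp istar) :=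
                  hD1.hatStrictMono.monotoneOn hxsd
                    (hdom_mem _ (hpp0 istar h1) (hppIcc istar h1).2) (hppIcc istar h1).1
                rw [hhat_eq] at h_a
                linarith
              exact hCgt (pp istar) (yy istar) (hpp0 istar h1) (hppIcc istar h1).2
                ((hyyspec istar h1).1).1 hWa (by linarith) (le_of_eq hsum2)
                p.1 hp1.2 hspec
            · rw [hVVB istar (le_of_lt h1)]
              rw [hUUB istar (le_of_lt h1)] at hspec
              have hjk : istar - k ≤ k := by omega
              have hh2 : xx (istar - k) + D2 (a - D1 (xx (istar - k))) ≤ a := by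
                have hh1 : (a - D1 xstar) - D2 (a - D1 xstar)
                    ≤ (a - D1 (xx (istar - k))) - D2 (a - D1 (xx (istar - k))) :=
                  hD2.hatStrictMono.monotoneOn hysd
                    (hdom_mem _ (hwnn _ hjk) (hwIcc _ hjk).2) (hwIcc _ hjk).1
                have hh3 : xx (istar - k) - D1 (xx (istar - k)) ≤ xstar - D1 xstar :=
                  hD1.hatStrictMono.monotoneOn (hxxspec _ hjk).1 hxsd (hxxspec _ hjk).2.2
                rw [hhat_eq] at hh1
                linarith
              exact hCgt (xx (istar - k)) (a - D1 (xx (istar - k))) (hxxnn _ hjk)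
                (hxxa _ hjk) (hwnn _ hjk) (hwIcc _ hjk).2 (le_of_eq (by ring)) hh2
                p.1 hp1.2 hspec
          have hmono := hCmono_v p.1 ⟨hp1.1, hp1.2⟩ (VV istar) p.2
            (hVVIcc istar (by omega)).1 (le_of_lt hcon) hp2.2
          linarith
        exact ⟨istar, by omega, ⟨⟨hp1.1, hnext⟩, ⟨hp2.1, hq⟩⟩⟩
      · push_neg at hP0
        refine ⟨0, by omega, ⟨⟨hp1.1, ?_⟩, ⟨hp2.1, ?_⟩⟩⟩
        · exact le_trans hP0 (hUUmono 0 (by omega))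
        · rw [hVV0]
          exact hp2.2
    constructor
    · calc ENNReal.ofReal (t + ((k:ℝ) * (t - G (a + dA)) + (k:ℝ) * (t - G (a + dB))))
          = μ (⋃ i ∈ Finset.range (2*k+1), Set.Icc 0 (UU i) ×ˢ Set.Icc 0 (VV i)) :=
            hSin_eq.symm
        _ ≤ μ {p : ℝ × ℝ | p.1 ∈ Set.Icc (0:ℝ) 1 ∧ p.2 ∈ Set.Icc (0:ℝ) 1 ∧ C p.1 p.2 ≤ t} :=
            measure_mono hSin_sub
    · calc μ {p : ℝ × ℝ | p.1 ∈ Set.Icc (0:ℝ) 1 ∧ p.2 ∈ Set.Icc (0:ℝ) 1 ∧ C p.1 p.2 ≤ t}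
          ≤ μ (⋃ i ∈ Finset.range (2*k-1+1), Set.Icc 0 (UU (i+1)) ×ˢ Set.Icc 0 (VV i)) :=
            measure_mono hAsub
        _ = ENNReal.ofReal (t + ((k:ℝ) * (G (a - dA) - t) + (k:ℝ) * (G (a - dB) - t))) :=
            hSout.trans (congrArg ENNReal.ofReal hout_real)
  -- pass to toReal bounds
  have hμfin : μ {p : ℝ × ℝ | p.1 ∈ Set.Icc (0:ℝ) 1 ∧ p.2 ∈ Set.Icc (0:ℝ) 1 ∧ C p.1 p.2 ≤ t}
      ≠ ⊤ := measure_ne_top μ _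
  have hbounds : ∀ k : ℕ, 1 ≤ k →
      t + ((k:ℝ) * (t - G (a + (a - xstar)/k)) + (k:ℝ) * (t - G (a + D1 xstar/k)))
        ≤ (μ {p : ℝ × ℝ | p.1 ∈ Set.Icc (0:ℝ) 1 ∧ p.2 ∈ Set.Icc (0:ℝ) 1 ∧ C p.1 p.2 ≤ t}).toReal
      ∧ (μ {p : ℝ × ℝ | p.1 ∈ Set.Icc (0:ℝ) 1 ∧ p.2 ∈ Set.Icc (0:ℝ) 1 ∧ C p.1 p.2 ≤ t}).toReal
        ≤ t + ((k:ℝ) * (G (a - (a - xstar)/k) - t) + (k:ℝ) * (G (a - D1 xstar/k) - t)) := by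
    intro k hk
    obtain ⟨hlo, hhi⟩ := hsandwich k hk
    have hk1 : (1:ℝ) ≤ (k:ℝ) := by exact_mod_cast hk
    have hkR : (0:ℝ) < (k:ℝ) := by linarith
    have hdAle : (a - xstar)/k ≤ a - xstar := div_le_self (by linarith) hk1
    have hdBle : D1 xstar/k ≤ D1 xstar := div_le_self (by linarith) hk1
    have hdApos : 0 < (a - xstar)/k := div_pos (by linarith) hkR
    have hdBpos : 0 < D1 xstar/k := div_pos hD1xspos hkR
    have ht1' : t ≤ G (a - (a - xstar)/k) := hGposa _ (by linarith) (by linarith)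
    have ht2' : t ≤ G (a - D1 xstar/k) := hGposa _ (by linarith) (by linarith)
    constructor
    · exact (ENNReal.ofReal_le_iff_le_toReal hμfin).mp hlo
    · have hnn : 0 ≤ t + ((k:ℝ) * (G (a - (a - xstar)/k) - t)
          + (k:ℝ) * (G (a - D1 xstar/k) - t)) := by
        have h1 : 0 ≤ (k:ℝ) * (G (a - (a - xstar)/k) - t) := by
          apply mul_nonneg (le_of_lt hkR)
          linarith
        have h2 : 0 ≤ (k:ℝ) * (G (a - D1 xstar/k) - t) := by
          apply mul_nonneg (le_of_lt hkR)
          linarith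
        linarith
      calc (μ {p : ℝ × ℝ | p.1 ∈ Set.Icc (0:ℝ) 1 ∧ p.2 ∈ Set.Icc (0:ℝ) 1 ∧ C p.1 p.2 ≤ t}).toReal
          ≤ (ENNReal.ofReal (t + ((k:ℝ) * (G (a - (a - xstar)/k) - t)
              + (k:ℝ) * (G (a - D1 xstar/k) - t)))).toReal :=
            ENNReal.toReal_mono ENNReal.ofReal_ne_top hhi
        _ = _ := ENNReal.toReal_ofReal hnn
  -- limits
  have hderiv : HasDerivAt G (deriv G a) a := (hG.diff a hapos).hasDerivAt
  have hlim_inA := tendsto_mul_shift hderiv (a - xstar) (by linarith)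
  have hlim_inB := tendsto_mul_shift hderiv (D1 xstar) (by linarith)
  have hlim_outA := tendsto_mul_shift hderiv (-(a - xstar)) (by intro h; apply (by linarith : a - xstar ≠ 0); linarith)
  have hlim_outB := tendsto_mul_shift hderiv (-(D1 xstar)) (by intro h; apply (by linarith : D1 xstar ≠ 0); linarith)
  have hlow : Tendsto (fun k : ℕ => t + ((k:ℝ) * (t - G (a + (a - xstar)/k))
      + (k:ℝ) * (t - G (a + D1 xstar/k)))) atTop
      (nhds (t - (a - xstar + D1 xstar) * deriv G a)) := by
    have h1 := ((hlim_inA.add hlim_inB).neg).const_add t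
    have h2 : t + -((a - xstar) * deriv G a + D1 xstar * deriv G a)
        = t - (a - xstar + D1 xstar) * deriv G a := by ring
    rw [h2] at h1
    apply h1.congr
    intro k
    rw [← hGa]
    ring
  have hupp : Tendsto (fun k : ℕ => t + ((k:ℝ) * (G (a - (a - xstar)/k) - t)
      + (k:ℝ) * (G (a - D1 xstar/k) - t))) atTop
      (nhds (t - (a - xstar + D1 xstar) * deriv G a)) := by
    have h1 := (hlim_outA.add hlim_outB).const_add t
    have h2 : t + (-(a - xstar) * deriv G a + -(D1 xstar) * deriv G a)
        = t - (a - xstar + D1 xstar) * deriv G a := by ring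
    rw [h2] at h1
    apply h1.congr
    intro k
    rw [show a + -(a - xstar)/(k:ℝ) = a - (a - xstar)/k by ring,
      show a + -(D1 xstar)/(k:ℝ) = a - D1 xstar/k by ring, ← hGa]
  have hto : (μ {p : ℝ × ℝ | p.1 ∈ Set.Icc (0:ℝ) 1 ∧ p.2 ∈ Set.Icc (0:ℝ) 1 ∧ C p.1 p.2 ≤ t}).toReal
      = t - (a - xstar + D1 xstar) * deriv G a := by
    apply le_antisymm
    · exact ge_of_tendsto hupp (eventually_atTop.mpr ⟨1, fun k hk => (hbounds k hk).2⟩)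
    · exact le_of_tendsto hlow (eventually_atTop.mpr ⟨1, fun k hk => (hbounds k hk).1⟩)
  rw [hto, hTinv_a]
  ring
end

section
/- Let D1, D2 be distortions relative to G with D1(x_G) ≥ D2(x_G), let C_AMO be the associated Archimedean-based Marshall-Olkin copula, and let μ be a probability measure on [0,1]² with μ([0,u]×[0,v]) = C_AMO(u,v) for all (u,v). Fix t ∈ (0,1), set g = D1 + f, u_t = G(g^{-1}(G^{-1}(t))), and B1 = {(u,v) ∈ [0,1]² : u ∈ [u_t, 1], v ≤ G(G^{-1}(t) − D1(G^{-1}(u)))}. Then μ(B1) = −G′(G^{-1}(t))·D1(G^{-1}(u_t)). -/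
open MeasureTheory Filter Set Topology
open scoped ENNReal

private lemma ofReal_sum_le' {ι : Type*} (s : Finset ι) (F : ι → ℝ) :
    ENNReal.ofReal (∑ i ∈ s, F i) ≤ ∑ i ∈ s, ENNReal.ofReal (F i) := by
  classical
  induction s using Finset.induction with
  | empty => simp
  | @insert a s h ih =>
      rw [Finset.sum_insert h, Finset.sum_insert h]
      exact le_trans ENNReal.ofReal_add_le (add_le_add le_rfl ih)

private lemma Icc_prod_diff (a b Y : ℝ) (h0a : 0 ≤ a) :
    Set.Icc (0:ℝ) b ×ˢ Set.Icc (0:ℝ) Y \ Set.Icc (0:ℝ) a ×ˢ Set.Icc (0:ℝ) Y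
      = Set.Ioc a b ×ˢ Set.Icc (0:ℝ) Y := by
  ext ⟨x, y⟩
  simp only [Set.mem_diff, Set.mem_prod, Set.mem_Icc, Set.mem_Ioc]
  constructor
  · rintro ⟨⟨⟨hx0, hxb⟩, hy⟩, hn⟩
    refine ⟨⟨?_, hxb⟩, hy⟩
    by_contra hc; push_neg at hc
    exact hn ⟨⟨hx0, hc⟩, hy⟩
  · rintro ⟨⟨hax, hxb⟩, hy⟩
    exact ⟨⟨⟨le_trans h0a hax.le, hxb⟩, hy⟩, fun hc => absurd hc.1.2 (not_le.mpr hax)⟩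

set_option maxHeartbeats 2000000 in
/-- in the proof of Theorem 4.1, with `g = D1 + f`,
`u_t = G(g⁻¹(G⁻¹(t)))` and
`B₁ = {(u,v) ∈ [0,1]² : u ∈ [u_t,1], v ≤ G(G⁻¹(t) − D₁(G⁻¹(u)))}`, one has
`μ(B₁) = −G′(G⁻¹(t))·D₁(G⁻¹(u_t))`. -/
theorem AMO_kendall_B1_mass
    (G Ginv D1 D2 f finv g : ℝ → ℝ) (C : ℝ → ℝ → ℝ)
    (μ : Measure (ℝ × ℝ)) [IsProbabilityMeasure μ]
    (hG : IsGenerator G)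
    (hG' : ∀ x : ℝ, 0 < x → ENNReal.ofReal x < xG G → deriv G x < 0)
    (hGinv : IsGenInv G Ginv)
    (hD1 : IsDistortion G D1) (hD2 : IsDistortion G D2)
    (hcase : xG G ≠ ⊤ → D2 ((xG G).toReal) ≤ D1 ((xG G).toReal))
    (hf : ∀ x : ℝ, f x = Function.invFunOn (fun w => w - D2 w) (distortionDomain G) (x - D1 x))
    (hfinv : ∀ x : ℝ, finv x =
      Function.invFunOn (fun w => w - D1 w) (distortionDomain G) (x - D2 x))
    (hg : ∀ x : ℝ, g x = D1 x + f x)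
    (hC : AMOSpec G Ginv D1 D2 f finv C)
    (hμ : ∀ u ∈ Set.Icc (0:ℝ) 1, ∀ v ∈ Set.Icc (0:ℝ) 1,
      μ (Set.Icc 0 u ×ˢ Set.Icc 0 v) = ENNReal.ofReal (C u v)) :
    ∀ t ∈ Set.Ioo (0:ℝ) 1, ∀ ut : ℝ,
      ut = G (Function.invFunOn g (distortionDomain G) (Ginv t)) →
      (μ {p : ℝ × ℝ | p.1 ∈ Set.Icc ut 1 ∧ p.2 ∈ Set.Icc (0:ℝ) 1 ∧
          p.2 ≤ G (Ginv t - D1 (Ginv p.1))}).toReal =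
        -(deriv G (Ginv t) * D1 (Ginv ut)) := by
  intro t ht ut hut
  obtain ⟨ht0, ht1⟩ := ht
  set dom := distortionDomain G with hdomdef
  set xt := Ginv t with hxtdef
  have htIoc : t ∈ Set.Ioc (0:ℝ) 1 := ⟨ht0, ht1.le⟩
  have hxt0 : 0 ≤ xt := hGinv.nonneg t htIoc
  have hGxt : G xt = t := hGinv.right_inv t htIoc
  have hxtpos : 0 < xt := by
    rcases hxt0.lt_or_eq with h | h
    · exact h
    · exfalso
      have : t = 1 := by rw [← hGxt, ← h, hG.one_at_zero]
      linarith
  have hxG_le : ENNReal.ofReal xt ≤ xG G := hGinv.le_xG t htIoc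
  have hxGpos : 0 < xG G := lt_of_lt_of_le (ENNReal.ofReal_pos.mpr hxtpos) hxG_le
  -- G vanishes at the right endpoint when `xG` is finite
  have hGbar : xG G ≠ ⊤ → G ((xG G).toReal) = 0 := by
    intro hfin
    set xb := (xG G).toReal with hxbdef
    have hxbpos : 0 < xb := ENNReal.toReal_pos hxGpos.ne' hfin
    have hxGofReal : ENNReal.ofReal xb = xG G := ENNReal.ofReal_toReal hfin
    by_contra hne
    have hGpos : 0 < |G xb| := abs_pos.mpr hne
    have hcont : ContinuousAt G xb := (hG.diff xb hxbpos).continuousAt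
    obtain ⟨δ, hδpos, hδ⟩ := Metric.continuousAt_iff.mp hcont _ hGpos
    have hlt : xG G < xG G + ENNReal.ofReal δ :=
      ENNReal.lt_add_right hfin (by simp [ENNReal.ofReal_eq_zero, not_le, hδpos])
    have hlt' : sInf {y : ℝ≥0∞ | ∃ x : ℝ, 0 ≤ x ∧ G x = 0 ∧ y = ENNReal.ofReal x}
        < xG G + ENNReal.ofReal δ := hlt
    obtain ⟨y, hyS, hylt⟩ := sInf_lt_iff.mp hlt'
    obtain ⟨x, hx0, hGx, rfl⟩ := hyS
    have hxge : xb ≤ x := by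
      have h1 : xG G ≤ ENNReal.ofReal x := sInf_le ⟨x, hx0, hGx, rfl⟩
      rw [← hxGofReal] at h1
      exact (ENNReal.ofReal_le_ofReal_iff hx0).mp h1
    have hxlt : x < xb + δ := by
      rw [← hxGofReal, ← ENNReal.ofReal_add hxbpos.le hδpos.le] at hylt
      exact (ENNReal.ofReal_lt_ofReal_iff_of_nonneg hx0).mp hylt
    have hdist : dist x xb < δ := by
      rw [Real.dist_eq, abs_lt]; constructor <;> linarith
    have hcontr := hδ hdist
    rw [hGx, Real.dist_eq, zero_sub, abs_neg] at hcontr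
    exact absurd hcontr (lt_irrefl _)
  have hxtlt : ENNReal.ofReal xt < xG G := by
    rcases hxG_le.lt_or_eq with h | h
    · exact h
    · exfalso
      have hfin : xG G ≠ ⊤ := by rw [← h]; exact ENNReal.ofReal_ne_top
      have hxb : (xG G).toReal = xt := by rw [← h, ENNReal.toReal_ofReal hxt0]
      have h0 := hGbar hfin
      rw [hxb, hGxt] at h0
      linarith
  have hGinvlt : ∀ u : ℝ, 0 < u → u ≤ 1 → ENNReal.ofReal (Ginv u) < xG G := by
    intro u hu0 hu1
    rcases (hGinv.le_xG u ⟨hu0, hu1⟩).lt_or_eq with h | h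
    · exact h
    · exfalso
      have hfin : xG G ≠ ⊤ := by rw [← h]; exact ENNReal.ofReal_ne_top
      have hnn := hGinv.nonneg u ⟨hu0, hu1⟩
      have hxb : (xG G).toReal = Ginv u := by rw [← h, ENNReal.toReal_ofReal hnn]
      have h0 := hGbar hfin
      rw [hxb, hGinv.right_inv u ⟨hu0, hu1⟩] at h0
      linarith
  have hGanti : ∀ a b : ℝ, 0 ≤ a → a ≤ b → ENNReal.ofReal b < xG G → G b ≤ G a := by
    intro a b ha hab hb
    rcases hab.lt_or_eq with h | h
    · exact (hG.strictAnti a b ha h hb).le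
    · rw [h]
  have hmem : ∀ x : ℝ, 0 ≤ x → x ≤ xt → x ∈ dom := fun x hx hxle =>
    ⟨hx, le_trans (ENNReal.ofReal_le_ofReal hxle) hxG_le⟩
  have h0dom : (0:ℝ) ∈ dom := hmem 0 le_rfl hxt0
  have hltxG : ∀ x : ℝ, x ≤ xt → ENNReal.ofReal x < xG G := fun x h =>
    lt_of_le_of_lt (ENNReal.ofReal_le_ofReal h) hxtlt
  have hD1mono : MonotoneOn D1 dom := hD1.strictMono.monotoneOn
  have hD2mono : MonotoneOn D2 dom := hD2.strictMono.monotoneOn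
  have hD1nonneg : ∀ x ∈ dom, 0 ≤ D1 x := by
    intro x hx
    have := hD1mono h0dom hx hx.1
    rwa [hD1.zero] at this
  have hD2nonneg : ∀ x ∈ dom, 0 ≤ D2 x := by
    intro x hx
    have := hD2mono h0dom hx hx.1
    rwa [hD2.zero] at this
  have hhat1nonneg : ∀ x ∈ dom, 0 ≤ x - D1 x := by
    intro x hx
    have := hD1.hatStrictMono.monotoneOn h0dom hx hx.1
    simpa [hD1.zero] using this
  have hhat2nonneg : ∀ x ∈ dom, 0 ≤ x - D2 x := by
    intro x hx
    have := hD2.hatStrictMono.monotoneOn h0dom hx hx.1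
    simpa [hD2.zero] using this
  have hdom_top : xG G = ⊤ → ∀ x : ℝ, 0 ≤ x → x ∈ dom := fun h x hx => ⟨hx, by simp [h]⟩
  have hdom_fin : xG G ≠ ⊤ → ∀ x : ℝ, 0 ≤ x → x ≤ (xG G).toReal → x ∈ dom := by
    intro h x hx hle
    exact ⟨hx, by rw [← ENNReal.ofReal_toReal h]; exact ENNReal.ofReal_le_ofReal hle⟩
  -- the defining property of `f` on the domain
  have hfval : ∀ y ∈ dom, f y ∈ dom ∧ f y - D2 (f y) = y - D1 y := by
    intro y hy
    have hc0 : 0 ≤ y - D1 y := hhat1nonneg y hy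
    have hex : ∃ z ∈ dom, z - D2 z = y - D1 y := by
      rcases eq_or_ne (xG G) ⊤ with htop | hfin
      · obtain ⟨M, hM1, hM2⟩ := ((Filter.tendsto_atTop.mp (hD2.hat_tendsto_top htop)
          (y - D1 y)).and (Filter.eventually_ge_atTop 0)).exists
        have hsub : Set.Icc (0:ℝ) M ⊆ dom := fun x hx => hdom_top htop x hx.1
        have hcont : ContinuousOn (fun w => w - D2 w) (Set.Icc (0:ℝ) M) :=
          (continuousOn_id.sub (hD2.cont.mono hsub))
        have hival : y - D1 y ∈ Set.Icc ((0:ℝ) - D2 0) (M - D2 M) := by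
          rw [hD2.zero]; exact ⟨by simpa using hc0, hM1⟩
        obtain ⟨z, hz, hz2⟩ := intermediate_value_Icc hM2 hcont hival
        exact ⟨z, hsub hz, hz2⟩
      · set xb := (xG G).toReal with hxbdef
        have hxb0 : 0 ≤ xb := ENNReal.toReal_nonneg
        have hxbdom : xb ∈ dom := hdom_fin hfin xb hxb0 le_rfl
        have hydom : y ≤ xb := by
          have h' := hy.2
          rw [← ENNReal.ofReal_toReal hfin] at h'
          exact (ENNReal.ofReal_le_ofReal_iff hxb0).mp h' 
        have hub : y - D1 y ≤ xb - D2 xb := by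
          have h1 : y - D1 y ≤ xb - D1 xb := by
            have := hD1.hatStrictMono.monotoneOn hy hxbdom hydom
            simpa using this
          have h2 := hcase hfin
          linarith
        have hsub : Set.Icc (0:ℝ) xb ⊆ dom := fun x hx => hdom_fin hfin x hx.1 hx.2
        have hcont : ContinuousOn (fun w => w - D2 w) (Set.Icc (0:ℝ) xb) :=
          (continuousOn_id.sub (hD2.cont.mono hsub))
        have hival : y - D1 y ∈ Set.Icc ((0:ℝ) - D2 0) (xb - D2 xb) := by
          rw [hD2.zero]; exact ⟨by simpa using hc0, hub⟩
        obtain ⟨z, hz, hz2⟩ := intermediate_value_Icc hxb0 hcont hival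
        exact ⟨z, hsub hz, hz2⟩
    constructor
    · rw [hf y]; exact Function.invFunOn_mem hex
    · rw [hf y]; exact Function.invFunOn_eq hex
  have hfmono : ∀ y ∈ dom, ∀ y' ∈ dom, y ≤ y' → f y ≤ f y' := by
    intro y hy y' hy' hle
    obtain ⟨hfy, hfy2⟩ := hfval y hy
    obtain ⟨hfy', hfy'2⟩ := hfval y' hy'
    by_contra hlt
    push_neg at hlt
    have h1 := hD2.hatStrictMono hfy' hfy hlt
    simp only [] at h1
    rw [hfy2, hfy'2] at h1
    have h2 := hD1.hatStrictMono.monotoneOn hy hy' hle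
    linarith
  -- existence of a point where g = xt
  have hgex : ∃ w ∈ dom, g w = xt := by
    have hsub : Set.Icc (0:ℝ) xt ⊆ dom := fun x hx => hmem x hx.1 hx.2
    set ψ : ℝ → ℝ := fun z => (xt - D2 z) - D1 (xt - D2 z) - (z - D2 z) with hψdef
    have hmap : ∀ z ∈ Set.Icc (0:ℝ) xt, xt - D2 z ∈ Set.Icc (0:ℝ) xt := by
      intro z hz
      have hzdom := hsub hz
      have h2 := hD2nonneg z hzdom
      have h3 : D2 z ≤ z := by have := hhat2nonneg z hzdom; linarith
      exact ⟨by linarith [hz.2], by linarith⟩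
    have hcontψ : ContinuousOn ψ (Set.Icc 0 xt) := by
      have hc2 : ContinuousOn D2 (Set.Icc (0:ℝ) xt) := hD2.cont.mono hsub
      have hc1 : ContinuousOn (fun z => D1 (xt - D2 z)) (Set.Icc (0:ℝ) xt) :=
        (hD1.cont.mono hsub).comp (continuousOn_const.sub hc2) hmap
      exact ((continuousOn_const.sub hc2).sub hc1).sub (continuousOn_id.sub hc2)
    have hψ0 : ψ 0 = xt - D1 xt := by simp [hψdef, hD2.zero]
    have hψxt_le : ψ xt ≤ 0 := by
      have hm : xt - D2 xt ∈ Set.Icc (0:ℝ) xt := hmap xt ⟨le_rfl.trans hxt0, le_rfl⟩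
      have h1 := hD1nonneg _ (hsub hm)
      simp only [hψdef]
      linarith
    have hψ0_ge : 0 ≤ ψ 0 := by rw [hψ0]; exact hhat1nonneg xt (hmem xt hxt0 le_rfl)
    obtain ⟨z0, hz0mem, hz0⟩ := intermediate_value_Icc' hxt0 hcontψ ⟨hψxt_le, hψ0_ge⟩
    set w := xt - D2 z0 with hwdef0
    have hwmem : w ∈ Set.Icc (0:ℝ) xt := hmap z0 hz0mem
    have hwdom : w ∈ dom := hsub hwmem
    have hz0dom : z0 ∈ dom := hsub hz0mem
    have hkey : w - D1 w = z0 - D2 z0 := by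
      have : ψ z0 = 0 := hz0
      simp only [hψdef] at this
      linarith
    obtain ⟨hfw, hfw2⟩ := hfval w hwdom
    have hfz : f w = z0 := by
      have h1 : f w - D2 (f w) = z0 - D2 z0 := by rw [hfw2, hkey]
      by_contra hne
      rcases lt_or_gt_of_ne hne with h | h
      · have := hD2.hatStrictMono hfw hz0dom h
        simp only [] at this; linarith
      · have := hD2.hatStrictMono hz0dom hfw h
        simp only [] at this; linarith
    refine ⟨w, hwdom, ?_⟩
    rw [hg w, hfz]
    have : D1 w = xt - z0 := by
      have hww : w = xt - D2 z0 := hwdef0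
      linarith [hkey]
    linarith
  set xs := Function.invFunOn g dom xt with hxsdef
  have hxsdom : xs ∈ dom := Function.invFunOn_mem hgex
  have hgxs : g xs = xt := Function.invFunOn_eq hgex
  have hgxs' : D1 xs + f xs = xt := by rw [← hg xs]; exact hgxs
  obtain ⟨hfxsdom, hfxs2⟩ := hfval xs hxsdom
  have hfxs_nonneg : 0 ≤ f xs := hfxsdom.1
  have hD1xs_le : D1 xs ≤ xt := by linarith
  have hxs_nonneg : 0 ≤ xs := hxsdom.1
  have hxs_le : xs ≤ xt := by
    have h2 := hD2nonneg (f xs) hfxsdom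
    linarith [hfxs2]
  have hxs_pos : 0 < xs := by
    rcases hxs_nonneg.lt_or_eq with h | h
    · exact h
    · exfalso
      have hD10 : D1 xs = 0 := by rw [← h, hD1.zero]
      have hfxt : f xs = xt := by linarith
      have h1 : f xs - D2 (f xs) = 0 := by rw [hfxs2, ← h]; simp [hD1.zero]
      have h2 := hD2.hatStrictMono h0dom (hmem xt hxt0 le_rfl) hxtpos
      simp only [hD2.zero] at h2
      rw [hfxt] at h1
      linarith
  have hxs_lt : xs < xt := by
    rcases hxs_le.lt_or_eq with h | h
    · exact h
    · exfalso
      have hc : f xs = xs - D1 xs := by rw [h] at hgxs' ⊢; linarith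
      have h3 : D2 (f xs) = 0 := by linarith [hfxs2, hc]
      have hfpos : 0 < f xs := by
        have := hD1.hatStrictMono h0dom hxsdom hxs_pos
        simp only [hD1.zero] at this
        rw [hc]; linarith
      have := hD2.strictMono h0dom hfxsdom hfpos
      rw [hD2.zero, h3] at this
      exact lt_irrefl 0 this
  have hut_val : ut = G xs := hut
  have hut_gt : t < ut := by
    rw [hut_val, ← hGxt]
    exact hG.strictAnti xs xt hxs_nonneg hxs_lt hxtlt
  have hut_lt1 : ut < 1 := by
    rw [hut_val, ← hG.one_at_zero]
    exact hG.strictAnti 0 xs le_rfl hxs_pos (hltxG xs hxs_le)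
  have hut_pos : 0 < ut := lt_trans ht0 hut_gt
  have hGinv1 : Ginv 1 = 0 := by
    have := hGinv.left_inv 0 le_rfl (by simpa using hxGpos)
    rwa [hG.one_at_zero] at this
  have hGinv_ut : Ginv ut = xs := by
    rw [hut_val]; exact hGinv.left_inv xs hxs_nonneg (hltxG xs hxs_le)
  -- boundary value C u 1 = u
  have hCu1 : ∀ u : ℝ, t < u → u < 1 → C u 1 = u := by
    intro u htu hu1
    have hu0 : 0 < u := lt_trans ht0 htu
    have huIoc : u ∈ Set.Ioc (0:ℝ) 1 := ⟨hu0, hu1.le⟩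
    have hy0 : 0 ≤ Ginv u := hGinv.nonneg u huIoc
    have hGy : G (Ginv u) = u := hGinv.right_inv u huIoc
    have hylt : ENNReal.ofReal (Ginv u) < xG G := hGinvlt u hu0 hu1.le
    have hydom : Ginv u ∈ dom := ⟨hy0, hylt.le⟩
    have hypos : 0 < Ginv u := by
      rcases hy0.lt_or_eq with h | h
      · exact h
      · exfalso; rw [← h, hG.one_at_zero] at hGy; linarith
    obtain ⟨hfydom, hfy2⟩ := hfval (Ginv u) hydom
    have hfypos : 0 < f (Ginv u) := by
      rcases hfydom.1.lt_or_eq with h | h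
      · exact h
      · exfalso
        have hs := hD1.hatStrictMono h0dom hydom hypos
        simp only [hD1.zero, sub_zero] at hs
        rw [← h] at hfy2
        simp only [hD2.zero, sub_zero] at hfy2
        linarith
    have hGfy_lt : G (f (Ginv u)) < 1 := by
      rcases hfydom.2.lt_or_eq with h | h
      · rw [← hG.one_at_zero]
        exact hG.strictAnti 0 (f (Ginv u)) le_rfl hfypos h
      · have hfin : xG G ≠ ⊤ := by rw [← h]; exact ENNReal.ofReal_ne_top
        have heq : (xG G).toReal = f (Ginv u) := by rw [← h, ENNReal.toReal_ofReal hfydom.1]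
        have h0 := hGbar hfin
        rw [heq] at h0
        rw [h0]; linarith
    have hval := (hC.2.1 hcase u huIoc 1 ⟨one_pos, le_rfl⟩).2 hGfy_lt
    rw [hval, hGinv1, hD2.zero, add_zero, hGy]
  -- the strip next to the vertical line u = ut
  have hstrip : ∀ u' : ℝ, t < u' → u' < ut →
      μ (Set.Ioc u' ut ×ˢ Set.Icc (0:ℝ) 1) = ENNReal.ofReal (ut - u') := by
    intro u' h1 h2
    have hu'0 : 0 < u' := lt_trans ht0 h1
    have hu'1 : u' < 1 := h2.trans hut_lt1
    have hset := Icc_prod_diff u' ut 1 hu'0.le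
    rw [← hset]
    rw [measure_diff (Set.prod_mono (Set.Icc_subset_Icc le_rfl h2.le) le_rfl)
        (measurableSet_Icc.prod measurableSet_Icc).nullMeasurableSet (measure_ne_top μ _)]
    rw [hμ ut ⟨hut_pos.le, hut_lt1.le⟩ 1 ⟨zero_le_one, le_rfl⟩,
        hμ u' ⟨hu'0.le, hu'1.le⟩ 1 ⟨zero_le_one, le_rfl⟩,
        hCu1 ut hut_gt hut_lt1, hCu1 u' h1 hu'1]
    exact (ENNReal.ofReal_sub _ hu'0.le).symm
  -- the value of C at points (G a, G (xt − D1 c)) on/below the level curve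
  have hCval : ∀ a c : ℝ, 0 ≤ a → a ≤ xs → 0 ≤ c → c ≤ xs → f a + D1 c ≤ xt →
      C (G a) (G (xt - D1 c)) = G (D1 a + (xt - D1 c)) := by
    intro a c ha haxs hc hcxs hfa
    have haxt : a ≤ xt := haxs.trans hxs_le
    have hadom : a ∈ dom := hmem a ha haxt
    have hcdom : c ∈ dom := hmem c hc (hcxs.trans hxs_le)
    have hD1c_nonneg : 0 ≤ D1 c := hD1nonneg c hcdom
    have hD1c_le : D1 c ≤ xt := le_trans (hD1mono hcdom hxsdom hcxs) hD1xs_le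
    have hY0 : 0 ≤ xt - D1 c := by linarith
    have hYxt : xt - D1 c ≤ xt := by linarith
    have hu_pos : 0 < G a := lt_of_lt_of_le ht0 (by rw [← hGxt]; exact hGanti a xt ha haxt hxtlt)
    have hu_le1 : G a ≤ 1 := (hG.mem_Icc a ha).2
    have hY_pos : 0 < G (xt - D1 c) :=
      lt_of_lt_of_le ht0 (by rw [← hGxt]; exact hGanti _ xt hY0 hYxt hxtlt)
    have hY_le1 : G (xt - D1 c) ≤ 1 := (hG.mem_Icc _ hY0).2
    have hGinva : Ginv (G a) = a := hGinv.left_inv a ha (hltxG a haxt)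
    have hGinvY : Ginv (G (xt - D1 c)) = xt - D1 c := hGinv.left_inv _ hY0 (hltxG _ hYxt)
    have hfa0 : 0 ≤ f a := (hfval a hadom).1.1
    have hbranch : G (xt - D1 c) ≤ G (f (Ginv (G a))) := by
      rw [hGinva]
      exact hGanti (f a) (xt - D1 c) hfa0 (by linarith) (hltxG _ hYxt)
    have hval := (hC.2.1 hcase (G a) ⟨hu_pos, hu_le1⟩ (G (xt - D1 c)) ⟨hY_pos, hY_le1⟩).1 hbranch
    rw [hval, hGinva, hGinvY]
  -- the measure of a rectangle under the level curve
  have hrect : ∀ a b c : ℝ, 0 ≤ a → a ≤ b → b ≤ xs → 0 ≤ c → c ≤ b →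
      μ (Set.Ioc (G b) (G a) ×ˢ Set.Icc (0:ℝ) (G (xt - D1 c))) =
        ENNReal.ofReal (G (D1 a + (xt - D1 c)) - G (D1 b + (xt - D1 c))) := by
    intro a b c ha hab hbxs hc hcb
    have hb0 : 0 ≤ b := ha.trans hab
    have hcxs : c ≤ xs := hcb.trans hbxs
    have hadom := hmem a ha ((hab.trans hbxs).trans hxs_le)
    have hbdom := hmem b hb0 (hbxs.trans hxs_le)
    have hcdom := hmem c hc (hcxs.trans hxs_le)
    have hfbc : f b + D1 b ≤ xt := by
      have h1 : f b ≤ f xs := hfmono b hbdom xs hxsdom hbxs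
      have h2 : D1 b ≤ D1 xs := hD1mono hbdom hxsdom hbxs
      linarith [hgxs']
    have hD1cb : D1 c ≤ D1 b := hD1mono hcdom hbdom hcb
    have hfab : f a ≤ f b := hfmono a hadom b hbdom hab
    have hCa := hCval a c ha (hab.trans hbxs) hc hcxs (by linarith)
    have hCb := hCval b c hb0 hbxs hc hcxs (by linarith)
    have hD1c_nonneg : 0 ≤ D1 c := hD1nonneg c hcdom
    have hD1b_nonneg : 0 ≤ D1 b := hD1nonneg b hbdom
    have hD1c_le : D1 c ≤ xt := le_trans (hD1mono hcdom hxsdom hcxs) hD1xs_le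
    have hY0 : (0:ℝ) ≤ G (xt - D1 c) := (hG.mem_Icc _ (by linarith)).1
    have hYle1 : G (xt - D1 c) ≤ 1 := (hG.mem_Icc _ (by linarith)).2
    have huab : G b ≤ G a := hGanti a b ha hab (hltxG b (hbxs.trans hxs_le))
    have hGa_mem : G a ∈ Set.Icc (0:ℝ) 1 := hG.mem_Icc a ha
    have hGb_mem : G b ∈ Set.Icc (0:ℝ) 1 := hG.mem_Icc b hb0
    have hset := Icc_prod_diff (G b) (G a) (G (xt - D1 c)) hGb_mem.1
    rw [← hset]
    rw [measure_diff (Set.prod_mono (Set.Icc_subset_Icc le_rfl huab) le_rfl)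
        (measurableSet_Icc.prod measurableSet_Icc).nullMeasurableSet (measure_ne_top μ _)]
    rw [hμ (G a) hGa_mem _ ⟨hY0, hYle1⟩, hμ (G b) hGb_mem _ ⟨hY0, hYle1⟩, hCa, hCb]
    have hnn : 0 ≤ G (D1 b + (xt - D1 c)) := (hG.mem_Icc _ (by linarith)).1
    exact (ENNReal.ofReal_sub _ hnn).symm
  rw [hGinv_ut]
  set B : Set (ℝ × ℝ) := {p : ℝ × ℝ | p.1 ∈ Set.Icc ut 1 ∧ p.2 ∈ Set.Icc (0:ℝ) 1 ∧
      p.2 ≤ G (xt - D1 (Ginv p.1))} with hBdef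
  have hderiv_nonpos : deriv G xt ≤ 0 := hG.deriv_nonpos xt hxtpos
  have hD1xs_nonneg : 0 ≤ D1 xs := hD1nonneg xs hxsdom
  have hmain : ∀ ε : ℝ, 0 < ε →
      -(deriv G xt * D1 xs) - ε * (D1 xs + 1) ≤ (μ B).toReal ∧
      (μ B).toReal ≤ -(deriv G xt * D1 xs) + ε * (D1 xs + 1) := by
    intro ε hε
    obtain ⟨δ, hδpos, hδ⟩ : ∃ δ > 0, ∀ h : ℝ, |h| < δ →
        |G (xt + h) - G xt - h * deriv G xt| ≤ ε * |h| := by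
      have hd := (hG.diff xt hxtpos).hasDerivAt
      rw [hasDerivAt_iff_isLittleO] at hd
      have hev := hd.def hε
      rw [Metric.eventually_nhds_iff] at hev
      obtain ⟨δ, hδpos, hδ⟩ := hev
      refine ⟨δ, hδpos, fun h hh => ?_⟩
      have h2 := hδ (y := xt + h) (by rw [Real.dist_eq]; simpa using hh)
      simpa [Real.norm_eq_abs, smul_eq_mul] using h2
    obtain ⟨η, hηpos, hη⟩ : ∃ η > 0, ∀ x ∈ Set.Icc (0:ℝ) xs, ∀ y ∈ Set.Icc (0:ℝ) xs,
        dist x y < η → dist (D1 x) (D1 y) < δ := by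
      have hucont := isCompact_Icc.uniformContinuousOn_of_continuous
        (hD1.cont.mono (fun x (hx : x ∈ Set.Icc (0:ℝ) xs) => hmem x hx.1 (hx.2.trans hxs_le)))
      exact Metric.uniformContinuousOn_iff.mp hucont δ hδpos
    obtain ⟨n, hnpos, hnsmall⟩ : ∃ n : ℕ, 0 < n ∧ xs / n < η := by
      obtain ⟨m, hm⟩ := exists_nat_gt (xs / η)
      refine ⟨m + 1, Nat.succ_pos m, ?_⟩
      have hcast : ((m + 1 : ℕ) : ℝ) = (m : ℝ) + 1 := by push_cast; ring
      have hmpos : (0:ℝ) < ((m + 1 : ℕ) : ℝ) := by rw [hcast]; positivity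
      rw [div_lt_iff₀ hmpos]
      have h1 : xs / η < ((m+1 : ℕ) : ℝ) := by rw [hcast]; linarith
      have h2 : xs / η * η = xs := div_mul_cancel₀ xs hηpos.ne'
      nlinarith [mul_lt_mul_of_pos_right h1 hηpos]
    set w : ℕ → ℝ := fun i => xs * i / n with hwdef
    have hn' : (0:ℝ) < (n:ℝ) := Nat.cast_pos.mpr hnpos
    have hw0 : w 0 = 0 := by simp [hwdef]
    have hwn : w n = xs := by simp only [hwdef]; exact mul_div_cancel_right₀ xs hn'.ne'
    have hwmono : ∀ i j : ℕ, i ≤ j → w i ≤ w j := by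
      intro i j hij
      have hc : (i:ℝ) ≤ (j:ℝ) := Nat.cast_le.mpr hij
      simp only [hwdef]
      exact (div_le_div_iff_of_pos_right hn').mpr (mul_le_mul_of_nonneg_left hc hxs_nonneg)
    have hw_mem : ∀ i : ℕ, i ≤ n → w i ∈ Set.Icc (0:ℝ) xs := fun i hi =>
      ⟨by rw [← hw0]; exact hwmono 0 i (Nat.zero_le i), by rw [← hwn]; exact hwmono i n hi⟩
    have hwdom : ∀ i : ℕ, i ≤ n → w i ∈ dom := fun i hi =>
      hmem _ (hw_mem i hi).1 ((hw_mem i hi).2.trans hxs_le)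
    have hwdiff : ∀ i : ℕ, w (i+1) - w i = xs / n := by
      intro i; simp only [hwdef]; push_cast; field_simp; ring
    set dd : ℕ → ℝ := fun i => D1 (w (i+1)) - D1 (w i) with hdddef
    have hδi : ∀ i : ℕ, i < n → 0 ≤ dd i ∧ dd i < δ := by
      intro i hi
      have h1 := hw_mem i hi.le
      have h2 := hw_mem (i+1) hi
      constructor
      · have := hD1mono (hwdom i hi.le) (hwdom (i+1) hi) (hwmono i (i+1) (Nat.le_succ i))
        simp only [hdddef]; linarith
      · have hd := hη (w (i+1)) h2 (w i) h1 (by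
          rw [Real.dist_eq, hwdiff i, abs_of_nonneg (div_nonneg hxs_nonneg hn'.le)]
          exact hnsmall)
        rw [Real.dist_eq] at hd
        simp only [hdddef]
        calc D1 (w (i+1)) - D1 (w i) ≤ |D1 (w (i+1)) - D1 (w i)| := le_abs_self _
          _ < δ := hd
    have hdd_le : ∀ i : ℕ, i < n → dd i ≤ D1 xs := by
      intro i hi
      have h1 := hD1mono (hwdom (i+1) hi) hxsdom (hw_mem (i+1) hi).2
      have h2 := hD1nonneg (w i) (hwdom i hi.le)
      simp only [hdddef]; linarith
    have htel : ∑ i ∈ Finset.range n, dd i = D1 xs := by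
      simp only [hdddef]
      rw [Finset.sum_range_sub (fun i => D1 (w i)), hwn, hw0, hD1.zero, sub_zero]
    set u' : ℝ := max ((t + ut)/2) (ut - ε) with hu'def
    have hu'_lt_ut : u' < ut := max_lt (by linarith) (by linarith)
    have hu'_gt_t : t < u' := lt_of_lt_of_le (by linarith : t < (t+ut)/2) (le_max_left _ _)
    have hu'_diff : ut - u' ≤ ε := by
      have := le_max_right ((t + ut)/2) (ut - ε)
      linarith
    -- the covering inclusion
    have hcover : B ⊆ (Set.Ioc u' ut ×ˢ Set.Icc (0:ℝ) 1) ∪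
        ⋃ i ∈ Finset.range n,
          Set.Ioc (G (w (i+1))) (G (w i)) ×ˢ Set.Icc (0:ℝ) (G (xt - D1 (w (i+1)))) := by
      intro p hp
      rw [hBdef] at hp
      simp only [Set.mem_setOf_eq, Set.mem_Icc] at hp
      obtain ⟨⟨hp1l, hp1r⟩, ⟨hp20, hp21⟩, hpcurve⟩ := hp
      rcases eq_or_lt_of_le hp1l with heq | hlt
      · left
        exact ⟨⟨by rw [← heq]; exact hu'_lt_ut, by rw [← heq]⟩, hp20, hp21⟩
      · right
        classical
        have hfind : ∃ i, i < n ∧ p.1 ≤ G (w i) ∧ G (w (i+1)) < p.1 := by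
          have hex2 : ∃ k, ¬ p.1 ≤ G (w k) := ⟨n, by rw [hwn, ← hut_val]; exact not_le.mpr hlt⟩
          have hP0 : p.1 ≤ G (w 0) := by rw [hw0, hG.one_at_zero]; exact hp1r
          have hkpos : 0 < Nat.find hex2 :=
            Nat.pos_of_ne_zero (fun h => (h ▸ Nat.find_spec hex2) hP0)
          have hkn : Nat.find hex2 ≤ n :=
            Nat.find_min' hex2 (by rw [hwn, ← hut_val]; exact not_le.mpr hlt)
          refine ⟨Nat.find hex2 - 1, by omega, ?_, ?_⟩
          · by_contra hcon
            exact Nat.find_min hex2 (by omega) hcon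
          · have he : Nat.find hex2 - 1 + 1 = Nat.find hex2 := by omega
            rw [he]
            exact not_le.mp (Nat.find_spec hex2)
        obtain ⟨i, hin, hup, hlow⟩ := hfind
        have hp1pos : 0 < p.1 := lt_trans hut_pos hlt
        have hy0 : 0 ≤ Ginv p.1 := hGinv.nonneg p.1 ⟨hp1pos, hp1r⟩
        have hGy : G (Ginv p.1) = p.1 := hGinv.right_inv p.1 ⟨hp1pos, hp1r⟩
        have hydomlt := hGinvlt p.1 hp1pos hp1r
        have hydom : Ginv p.1 ∈ dom := ⟨hy0, hydomlt.le⟩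
        have hwi1_mem := hw_mem (i+1) hin
        have hylt : Ginv p.1 ≤ w (i+1) := by
          by_contra hcon
          push_neg at hcon
          have := hG.strictAnti (w (i+1)) (Ginv p.1) hwi1_mem.1 hcon hydomlt
          rw [hGy] at this
          linarith
        have hD1le : D1 (Ginv p.1) ≤ D1 (w (i+1)) := hD1mono hydom (hwdom (i+1) hin) hylt
        have hD1wi1_le : D1 (w (i+1)) ≤ xt :=
          le_trans (hD1mono (hwdom (i+1) hin) hxsdom hwi1_mem.2) hD1xs_le
        have hD1y_nonneg : 0 ≤ D1 (Ginv p.1) := hD1nonneg _ hydom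
        refine Set.mem_biUnion (Finset.mem_range.mpr hin) ?_
        refine ⟨⟨hlow, hup⟩, hp20, ?_⟩
        refine le_trans hpcurve
          (hGanti (xt - D1 (w (i+1))) (xt - D1 (Ginv p.1)) (by linarith) (by linarith) ?_)
        exact hltxG _ (by linarith)
    have hGw_anti : ∀ i j : ℕ, i ≤ j → j ≤ n → G (w j) ≤ G (w i) := by
      intro i j hij hjn
      exact hGanti (w i) (w j) (hw_mem i (hij.trans hjn)).1 (hwmono i j hij)
        (hltxG _ ((hw_mem j hjn).2.trans hxs_le))
    have hsubB : (⋃ i ∈ Finset.range n,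
        Set.Ioc (G (w (i+1))) (G (w i)) ×ˢ Set.Icc (0:ℝ) (G (xt - D1 (w i)))) ⊆ B := by
      intro p hp
      simp only [Set.mem_iUnion, Set.mem_prod, Set.mem_Ioc, Set.mem_Icc,
        Finset.mem_range, exists_prop] at hp
      obtain ⟨i, hi, ⟨h1, h2⟩, h3, h4⟩ := hp
      have hi1n : i + 1 ≤ n := hi
      have hwi_mem := hw_mem i hi.le
      have hD1wi_nonneg : 0 ≤ D1 (w i) := hD1nonneg _ (hwdom i hi.le)
      have hD1wi_le : D1 (w i) ≤ xt :=
        le_trans (hD1mono (hwdom i hi.le) hxsdom hwi_mem.2) hD1xs_le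
      have hha : ut ≤ p.1 := by
        have := hGw_anti (i+1) n hi1n le_rfl
        rw [hwn, ← hut_val] at this
        exact this.trans h1.le
      have hhb : p.1 ≤ 1 := h2.trans (hG.mem_Icc _ hwi_mem.1).2
      have hp1pos : 0 < p.1 := lt_of_lt_of_le hut_pos hha
      have hy0 : 0 ≤ Ginv p.1 := hGinv.nonneg p.1 ⟨hp1pos, hhb⟩
      have hGy : G (Ginv p.1) = p.1 := hGinv.right_inv p.1 ⟨hp1pos, hhb⟩
      have hydomlt := hGinvlt p.1 hp1pos hhb
      have hydom : Ginv p.1 ∈ dom := ⟨hy0, hydomlt.le⟩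
      have hge : w i ≤ Ginv p.1 := by
        by_contra hcon
        push_neg at hcon
        have := hG.strictAnti (Ginv p.1) (w i) hy0 hcon (hltxG _ (hwi_mem.2.trans hxs_le))
        rw [hGy] at this
        linarith
      have hyxs : Ginv p.1 ≤ xs := by
        by_contra hcon
        push_neg at hcon
        have h5 := hG.strictAnti xs (Ginv p.1) hxs_nonneg hcon hydomlt
        rw [hGy, ← hut_val] at h5
        linarith
      have hD1y_le : D1 (Ginv p.1) ≤ xt := le_trans (hD1mono hydom hxsdom hyxs) hD1xs_le
      have hD1ge : D1 (w i) ≤ D1 (Ginv p.1) := hD1mono (hwdom i hi.le) hydom hge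
      rw [hBdef]
      simp only [Set.mem_setOf_eq, Set.mem_Icc]
      refine ⟨⟨hha, hhb⟩, ⟨h3, h4.trans (hG.mem_Icc _ (by linarith)).2⟩, ?_⟩
      exact h4.trans (hGanti (xt - D1 (Ginv p.1)) (xt - D1 (w i)) (by linarith)
        (by linarith) (hltxG _ (by linarith)))
    have hdisj : ((Finset.range n : Finset ℕ) : Set ℕ).PairwiseDisjoint
        (fun i => Set.Ioc (G (w (i+1))) (G (w i)) ×ˢ Set.Icc (0:ℝ) (G (xt - D1 (w i)))) := by
      intro i hi j hj hij
      simp only [Finset.coe_range, Set.mem_Iio] at hi hj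
      have key : ∀ a b : ℕ, a < b → b < n → Disjoint
          (Set.Ioc (G (w (a+1))) (G (w a)) ×ˢ Set.Icc (0:ℝ) (G (xt - D1 (w a))))
          (Set.Ioc (G (w (b+1))) (G (w b)) ×ˢ Set.Icc (0:ℝ) (G (xt - D1 (w b)))) := by
        intro a b hab hbn
        rw [Set.disjoint_left]
        rintro p ⟨⟨ha1, ha2⟩, -⟩ ⟨⟨hb1, hb2⟩, -⟩
        have : G (w b) ≤ G (w (a+1)) := hGw_anti (a+1) b hab hbn.le
        linarith
      rcases lt_or_gt_of_ne hij with h | h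
      · exact key i j h hj
      · exact (key j i h hi).symm
    have hUval : ∀ i ∈ Finset.range n,
        μ (Set.Ioc (G (w (i+1))) (G (w i)) ×ˢ Set.Icc (0:ℝ) (G (xt - D1 (w (i+1)))))
          = ENNReal.ofReal (G (xt - dd i) - t) := by
      intro i hi
      rw [Finset.mem_range] at hi
      rw [hrect (w i) (w (i+1)) (w (i+1)) (hw_mem i hi.le).1 (hwmono i (i+1) (Nat.le_succ i))
          (hw_mem (i+1) hi).2 (hw_mem (i+1) hi).1 le_rfl]
      have e1 : D1 (w i) + (xt - D1 (w (i+1))) = xt - dd i := by simp only [hdddef]; ring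
      have e2 : D1 (w (i+1)) + (xt - D1 (w (i+1))) = xt := by ring
      rw [e1, e2, hGxt]
    have hLval : ∀ i ∈ Finset.range n,
        μ (Set.Ioc (G (w (i+1))) (G (w i)) ×ˢ Set.Icc (0:ℝ) (G (xt - D1 (w i))))
          = ENNReal.ofReal (t - G (xt + dd i)) := by
      intro i hi
      rw [Finset.mem_range] at hi
      rw [hrect (w i) (w (i+1)) (w i) (hw_mem i hi.le).1 (hwmono i (i+1) (Nat.le_succ i))
          (hw_mem (i+1) hi).2 (hw_mem i hi.le).1 (hwmono i (i+1) (Nat.le_succ i))]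
      have e1 : D1 (w i) + (xt - D1 (w i)) = xt := by ring
      have e2 : D1 (w (i+1)) + (xt - D1 (w i)) = xt + dd i := by simp only [hdddef]; ring
      rw [e1, e2, hGxt]
    have hterm_up : ∀ i ∈ Finset.range n,
        G (xt - dd i) - t ≤ (-(deriv G xt) + ε) * dd i := by
      intro i hi
      rw [Finset.mem_range] at hi
      obtain ⟨hdi0, hdiδ⟩ := hδi i hi
      have h2 := hδ (-(dd i)) (by rw [abs_neg, abs_of_nonneg hdi0]; exact hdiδ)
      rw [abs_neg, abs_of_nonneg hdi0] at h2
      have e : xt + -(dd i) = xt - dd i := by ring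
      rw [e, hGxt] at h2
      have h3 := (abs_le.mp h2).2
      nlinarith [h3]
    have hterm_lo : ∀ i ∈ Finset.range n,
        (-(deriv G xt) - ε) * dd i ≤ t - G (xt + dd i) := by
      intro i hi
      rw [Finset.mem_range] at hi
      obtain ⟨hdi0, hdiδ⟩ := hδi i hi
      have h2 := hδ (dd i) (by rw [abs_of_nonneg hdi0]; exact hdiδ)
      rw [abs_of_nonneg hdi0, hGxt] at h2
      have h3 := (abs_le.mp h2).2
      nlinarith [h3]
    have hterm_up_nonneg : ∀ i ∈ Finset.range n, 0 ≤ G (xt - dd i) - t := by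
      intro i hi
      rw [Finset.mem_range] at hi
      obtain ⟨hdi0, -⟩ := hδi i hi
      have hle := hdd_le i hi
      have h1 := hGanti (xt - dd i) xt (by linarith) (by linarith) hxtlt
      rw [hGxt] at h1
      linarith
    have hUB : μ B ≤ ENNReal.ofReal (ut - u') +
        ∑ i ∈ Finset.range n, ENNReal.ofReal (G (xt - dd i) - t) := by
      calc μ B ≤ μ ((Set.Ioc u' ut ×ˢ Set.Icc (0:ℝ) 1) ∪
            ⋃ i ∈ Finset.range n,
              Set.Ioc (G (w (i+1))) (G (w i)) ×ˢ Set.Icc (0:ℝ) (G (xt - D1 (w (i+1))))) :=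
          measure_mono hcover
        _ ≤ μ (Set.Ioc u' ut ×ˢ Set.Icc (0:ℝ) 1) +
            μ (⋃ i ∈ Finset.range n,
              Set.Ioc (G (w (i+1))) (G (w i)) ×ˢ Set.Icc (0:ℝ) (G (xt - D1 (w (i+1))))) :=
          measure_union_le _ _
        _ ≤ μ (Set.Ioc u' ut ×ˢ Set.Icc (0:ℝ) 1) +
            ∑ i ∈ Finset.range n,
              μ (Set.Ioc (G (w (i+1))) (G (w i)) ×ˢ Set.Icc (0:ℝ) (G (xt - D1 (w (i+1))))) :=
          add_le_add le_rfl (measure_biUnion_finset_le _ _)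
        _ = ENNReal.ofReal (ut - u') +
            ∑ i ∈ Finset.range n, ENNReal.ofReal (G (xt - dd i) - t) := by
          rw [hstrip u' hu'_gt_t hu'_lt_ut]
          congr 1
          exact Finset.sum_congr rfl hUval
    have hLB : ∑ i ∈ Finset.range n, ENNReal.ofReal (t - G (xt + dd i)) ≤ μ B := by
      have heq := measure_biUnion_finset (μ := μ) hdisj
        (fun b _ => (measurableSet_Ioc.prod measurableSet_Icc))
      calc ∑ i ∈ Finset.range n, ENNReal.ofReal (t - G (xt + dd i))
          = ∑ i ∈ Finset.range n,
              μ (Set.Ioc (G (w (i+1))) (G (w i)) ×ˢ Set.Icc (0:ℝ) (G (xt - D1 (w i)))) :=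
          (Finset.sum_congr rfl hLval).symm
        _ = μ (⋃ i ∈ Finset.range n,
              Set.Ioc (G (w (i+1))) (G (w i)) ×ˢ Set.Icc (0:ℝ) (G (xt - D1 (w i)))) := heq.symm
        _ ≤ μ B := measure_mono hsubB
    have hsum_up : ∑ i ∈ Finset.range n, (G (xt - dd i) - t) ≤ (-(deriv G xt) + ε) * D1 xs := by
      calc ∑ i ∈ Finset.range n, (G (xt - dd i) - t)
          ≤ ∑ i ∈ Finset.range n, (-(deriv G xt) + ε) * dd i := Finset.sum_le_sum hterm_up
        _ = (-(deriv G xt) + ε) * ∑ i ∈ Finset.range n, dd i := by rw [Finset.mul_sum]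
        _ = (-(deriv G xt) + ε) * D1 xs := by rw [htel]
    have hsum_lo : (-(deriv G xt) - ε) * D1 xs ≤ ∑ i ∈ Finset.range n, (t - G (xt + dd i)) := by
      calc (-(deriv G xt) - ε) * D1 xs
          = ∑ i ∈ Finset.range n, (-(deriv G xt) - ε) * dd i := by rw [← Finset.mul_sum, htel]
        _ ≤ ∑ i ∈ Finset.range n, (t - G (xt + dd i)) := Finset.sum_le_sum hterm_lo
    constructor
    · have h1 : ENNReal.ofReal ((-(deriv G xt) - ε) * D1 xs) ≤ μ B :=
        le_trans (le_trans (ENNReal.ofReal_le_ofReal hsum_lo) (ofReal_sum_le' _ _)) hLB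
      rcases le_or_gt ((-(deriv G xt) - ε) * D1 xs) 0 with h | h
      · have h0 : -(deriv G xt * D1 xs) - ε * (D1 xs + 1) ≤ 0 := by nlinarith
        exact le_trans h0 ENNReal.toReal_nonneg
      · have h2 := ENNReal.toReal_mono (measure_ne_top μ B) h1
        rw [ENNReal.toReal_ofReal h.le] at h2
        nlinarith
    · have hprod : (0:ℝ) ≤ (-(deriv G xt) + ε) * D1 xs :=
        mul_nonneg (by linarith) hD1xs_nonneg
      have h1 : μ B ≤ ENNReal.ofReal ((ut - u') + (-(deriv G xt) + ε) * D1 xs) := by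
        rw [ENNReal.ofReal_add (by linarith) hprod]
        refine le_trans hUB (add_le_add le_rfl ?_)
        rw [← ENNReal.ofReal_sum_of_nonneg hterm_up_nonneg]
        exact ENNReal.ofReal_le_ofReal hsum_up
      have h2 := ENNReal.toReal_le_of_le_ofReal (by linarith) h1
      nlinarith
  have hfin1 : (μ B).toReal ≤ -(deriv G xt * D1 xs) := by
    apply le_of_forall_pos_le_add
    intro ε hε
    have hpos : 0 < D1 xs + 1 := by linarith
    have hm := (hmain (ε / (D1 xs + 1)) (div_pos hε hpos)).2
    have heq : ε / (D1 xs + 1) * (D1 xs + 1) = ε := div_mul_cancel₀ ε hpos.ne'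
    linarith
  have hfin2 : -(deriv G xt * D1 xs) ≤ (μ B).toReal := by
    have h2 : ∀ ε : ℝ, 0 < ε → -(deriv G xt * D1 xs) ≤ (μ B).toReal + ε := by
      intro ε hε
      have hpos : 0 < D1 xs + 1 := by linarith
      have hm := (hmain (ε / (D1 xs + 1)) (div_pos hε hpos)).1
      have heq : ε / (D1 xs + 1) * (D1 xs + 1) = ε := div_mul_cancel₀ ε hpos.ne'
      linarith
    exact le_of_forall_pos_le_add h2
  exact le_antisymm hfin1 hfin2
end

section
/- Let θ > 0, G(x) = (x+1)^{−1/θ} (the Clayton generator), and c > 0, and set K_AMO(t) = K_G(t) + (c/(c+1))·G′(G^{-1}(t))·G^{-1}(t), where K_G(t) = t − G′(G^{-1}(t))·G^{-1}(t). Then the Kendall's tau τ_AMO = 3 − 4∫₀¹ K_AMO(t) dt equals θ/(θ+2) + (c/(c+1))·(2/(2+θ)); equivalently, 4∫₀^∞ (G′(x))²·(c/(c+1))·x dx = (c/(c+1))·(2/(2+θ)). -/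
open MeasureTheory Filter Set Topology
open scoped ENNReal

/-- for the Clayton generator `G(x) = (x+1)^(−1/θ)`, `θ > 0`
(so `G⁻¹(t) = t^(−θ) − 1` and `τ_G = θ/(θ+2)`), and a proportionality constant `c > 0`
(corresponding to `H₃ = c(H₁+H₂)`, i.e. `T⁻¹(x) = (c/(c+1)) x`), the Kendall tau of the
Archimedean-based Marshall-Olkin copula, whose Kendall function is
`K_AMO(t) = K_G(t) + (c/(c+1)) G′(G⁻¹(t)) G⁻¹(t)`, equals
`τ_AMO = θ/(θ+2) + (c/(c+1))·(2/(2+θ))`; equivalently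
`4∫₀^∞ (G′(x))² (c/(c+1)) x dx = (c/(c+1))·(2/(2+θ))`. -/
theorem AMO_kendall_tau_clayton
    (θ c : ℝ) (hθ : 0 < θ) (hc : 0 < c)
    (G Ginv KG KAMO : ℝ → ℝ)
    (hG : ∀ x : ℝ, G x = (x + 1) ^ (-(1 / θ)))
    (hGinv : ∀ t : ℝ, Ginv t = t ^ (-θ) - 1)
    (hKG : ∀ t : ℝ, KG t = t - deriv G (Ginv t) * Ginv t)
    (hKAMO : ∀ t : ℝ, KAMO t = KG t + (c / (c + 1)) * (deriv G (Ginv t) * Ginv t)) :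
    3 - 4 * (∫ t in Set.Ioc (0:ℝ) 1, KAMO t) = θ / (θ + 2) + (c / (c + 1)) * (2 / (2 + θ)) ∧
    4 * (∫ x in Set.Ioi (0:ℝ), (deriv G x) ^ 2 * ((c / (c + 1)) * x)) =
      (c / (c + 1)) * (2 / (2 + θ)) := by
  have hθ0 : θ ≠ 0 := ne_of_gt hθ
  have hc1 : c + 1 ≠ 0 := by positivity
  have h2θ : (2:ℝ) + θ ≠ 0 := by positivity
  have hGfun : G = fun x : ℝ => (x + 1) ^ (-(1 / θ)) := funext hG
  -- derivative of G on x > -1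
  have hderivG : ∀ x : ℝ, -1 < x →
      deriv G x = (-(1 / θ)) * (x + 1) ^ (-(1 / θ) - 1) := by
    intro x hx
    have hx1 : x + 1 ≠ 0 := by nlinarith
    have h1 : HasDerivAt (fun y : ℝ => y + 1) 1 x := by
      simpa using (hasDerivAt_id x).add_const 1
    have h2 : HasDerivAt (fun y : ℝ => y ^ (-(1 / θ)))
        ((-(1 / θ)) * (x + 1) ^ (-(1 / θ) - 1)) (x + 1) :=
      Real.hasDerivAt_rpow_const (Or.inl hx1)
    have h3 : HasDerivAt G ((-(1 / θ)) * (x + 1) ^ (-(1 / θ) - 1) * 1) x := by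
      rw [hGfun]; exact h2.comp x h1
    simpa using h3.deriv
  set A : ℝ := 1 / ((c + 1) * θ) with hA
  -- Kendall function on (0,1]
  have hK : ∀ t ∈ Set.Ioc (0:ℝ) 1,
      KAMO t = (1 + A) * t - A * t ^ (1 + θ) := by
    intro t ht
    have ht0 : 0 < t := ht.1
    have htp : 0 < t ^ (-θ) := Real.rpow_pos_of_pos ht0 _
    have hGi : Ginv t = t ^ (-θ) - 1 := hGinv t
    have hgt : -1 < Ginv t := by rw [hGi]; linarith
    have hD : deriv G (Ginv t) = (-(1 / θ)) * t ^ (1 + θ) := by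
      rw [hderivG _ hgt, hGi]
      have : t ^ (-θ) - 1 + 1 = t ^ (-θ) := by ring
      have hexp : (-θ) * (-(1 / θ) - 1) = 1 + θ := by field_simp; ring
      rw [this, ← Real.rpow_mul ht0.le, hexp]
    have hmul : deriv G (Ginv t) * Ginv t = (t ^ (1 + θ) - t) / θ := by
      rw [hD, hGi]
      have h1 : t ^ (1 + θ) * t ^ (-θ) = t := by
        rw [← Real.rpow_add ht0]
        simp
      have : (-(1 / θ)) * t ^ (1 + θ) * (t ^ (-θ) - 1)
          = (-(1 / θ)) * (t ^ (1 + θ) * t ^ (-θ)) + (1 / θ) * t ^ (1 + θ) := by ring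
      rw [this, h1]; field_simp; ring
    rw [hKAMO, hKG, hmul, hA]
    field_simp
    ring
  -- first integral
  have hint1 : (∫ t in Set.Ioc (0:ℝ) 1, KAMO t)
      = (1 + A) * (1 / 2) - A * (1 / (2 + θ)) := by
    rw [setIntegral_congr_fun measurableSet_Ioc hK]
    rw [← intervalIntegral.integral_of_le (by norm_num : (0:ℝ) ≤ 1)]
    have hI1 : IntervalIntegrable (fun t : ℝ => (1 + A) * t) volume 0 1 :=
      (intervalIntegral.intervalIntegrable_id).const_mul _
    have hI2 : IntervalIntegrable (fun t : ℝ => A * t ^ (1 + θ)) volume 0 1 :=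
      (intervalIntegral.intervalIntegrable_rpow' (by linarith)).const_mul _
    rw [intervalIntegral.integral_sub hI1 hI2,
      intervalIntegral.integral_const_mul, intervalIntegral.integral_const_mul,
      integral_id,
      integral_rpow (Or.inl (by linarith))]
    rw [Real.one_rpow, Real.zero_rpow (by linarith)]
    rw [show (1:ℝ) + θ + 1 = 2 + θ by ring]
    norm_num
  constructor
  · rw [hint1, hA]
    field_simp
    ring
  -- second integral
  · set k : ℝ := c / (c + 1) / θ ^ 2 with hk
    set p : ℝ := -(2 / θ) - 2 with hp
    have hp1 : p + 1 < 0 := by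
      rw [hp]
      have : 0 < 2 / θ := by positivity
      linarith
    have hp2 : p + 2 < 0 := by
      rw [hp]
      have : 0 < 2 / θ := by positivity
      linarith
    have hp1' : p + 1 ≠ 0 := ne_of_lt hp1
    have hp2' : p + 2 ≠ 0 := ne_of_lt hp2
    set F : ℝ → ℝ := fun x =>
      k * ((x + 1) ^ (p + 2) / (p + 2) - (x + 1) ^ (p + 1) / (p + 1)) with hF
    have hFderiv : ∀ x ∈ Set.Ici (0:ℝ),
        HasDerivAt F ((deriv G x) ^ 2 * ((c / (c + 1)) * x)) x := by
      intro x hx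
      have hx0 : (0:ℝ) ≤ x := hx
      have hx1 : x + 1 ≠ 0 := by positivity
      have hxx : (0:ℝ) < x + 1 := by linarith
      have h1 : HasDerivAt (fun y : ℝ => y + 1) 1 x := by
        simpa using (hasDerivAt_id x).add_const 1
      have h2 : HasDerivAt (fun y : ℝ => y ^ (p + 2)) ((p + 2) * (x + 1) ^ (p + 1)) (x + 1) := by
        have := Real.hasDerivAt_rpow_const (x := x + 1) (p := p + 2) (Or.inl hx1)
        simpa [show p + 2 - 1 = p + 1 by ring] using this
      have h3 : HasDerivAt (fun y : ℝ => y ^ (p + 1)) ((p + 1) * (x + 1) ^ p) (x + 1) := by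
        have := Real.hasDerivAt_rpow_const (x := x + 1) (p := p + 1) (Or.inl hx1)
        simpa [show p + 1 - 1 = p by ring] using this
      have h2' : HasDerivAt (fun y : ℝ => (y + 1) ^ (p + 2))
          ((p + 2) * (x + 1) ^ (p + 1)) x := by simpa [Function.comp_def] using h2.comp x h1
      have h3' : HasDerivAt (fun y : ℝ => (y + 1) ^ (p + 1))
          ((p + 1) * (x + 1) ^ p) x := by simpa [Function.comp_def] using h3.comp x h1
      have hFd : HasDerivAt F
          (k * ((p + 2) * (x + 1) ^ (p + 1) / (p + 2) - (p + 1) * (x + 1) ^ p / (p + 1))) x := by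
        rw [hF]
        exact (((h2'.div_const (p + 2)).sub (h3'.div_const (p + 1))).const_mul k)
      have heq : k * ((p + 2) * (x + 1) ^ (p + 1) / (p + 2) - (p + 1) * (x + 1) ^ p / (p + 1))
          = (deriv G x) ^ 2 * ((c / (c + 1)) * x) := by
        rw [hderivG x (by linarith)]
        have hsq : ((-(1 / θ)) * (x + 1) ^ (-(1 / θ) - 1)) ^ 2
            = (1 / θ ^ 2) * (x + 1) ^ (2 * (-(1 / θ) - 1)) := by
          rw [mul_pow, ← Real.rpow_natCast ((x+1) ^ (-(1/θ)-1)) 2, ← Real.rpow_mul hxx.le]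
          rw [show ((-(1/θ)) : ℝ) ^ 2 = 1 / θ ^ 2 by field_simp]
          ring_nf
        rw [hsq]
        have hpe : 2 * (-(1 / θ) - 1) = p := by rw [hp]; field_simp
        rw [hpe]
        have hxp : (x + 1) ^ (p + 1) = (x + 1) ^ p * (x + 1) := by
          rw [Real.rpow_add hxx, Real.rpow_one]
        rw [hxp]
        field_simp [hk]
        rw [hk]; field_simp
        ring
      rw [← heq]; exact hFd
    have hnonneg : ∀ x ∈ Set.Ioi (0:ℝ), 0 ≤ (deriv G x) ^ 2 * ((c / (c + 1)) * x) := by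
      intro x hx
      have hx0 : (0:ℝ) < x := hx
      have : 0 ≤ c / (c + 1) * x := by positivity
      positivity
    have htend : Tendsto F atTop (𝓝 0) := by
      have hb : Tendsto (fun x : ℝ => x + 1) atTop atTop :=
        tendsto_atTop_add_const_right _ 1 tendsto_id
      have t1 : Tendsto (fun x : ℝ => (x + 1) ^ (p + 2)) atTop (𝓝 0) := by
        have := (tendsto_rpow_neg_atTop (y := -(p + 2)) (by linarith)).comp hb
        simpa [Function.comp_def] using this
      have t2 : Tendsto (fun x : ℝ => (x + 1) ^ (p + 1)) atTop (𝓝 0) := by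
        have := (tendsto_rpow_neg_atTop (y := -(p + 1)) (by linarith)).comp hb
        simpa [Function.comp_def] using this
      have : Tendsto F atTop (𝓝 (k * (0 / (p + 2) - 0 / (p + 1)))) := by
        exact (((t1.div_const (p + 2)).sub (t2.div_const (p + 1))).const_mul k)
      simpa using this
    have hint2 : (∫ x in Set.Ioi (0:ℝ), (deriv G x) ^ 2 * ((c / (c + 1)) * x))
        = 0 - F 0 := by
      exact integral_Ioi_of_hasDerivAt_of_nonneg' hFderiv hnonneg htend
    have hF0 : F 0 = k * (1 / (p + 2) - 1 / (p + 1)) := by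
      rw [hF]; norm_num
    have e2 : p + 2 = -2 / θ := by rw [hp]; ring
    have e1 : p + 1 = -(2 + θ) / θ := by rw [hp]; field_simp; ring
    have hFval : 0 - F 0 = c / (c + 1) * (1 / (2 * (2 + θ))) := by
      rw [hF0, hk, e2, e1, one_div_div, one_div_div, div_neg, div_neg]
      field_simp
      ring
    rw [hint2, hFval]
    field_simp
    ring
end

section
/- Let G:[0,∞)→(0,1] and suppose there exist c, γ > 0 such that G(x)·x^γ → c as x → +∞. Let D:(0,∞)→[0,∞) satisfy D(x)/x → β as x → +∞ for some β ∈ [0,1]. Then G(x + D(x))/G(x) → (1+β)^{−γ} as x → +∞. In particular, for the Clayton generator G(x) = (x+1)^{−1/θ}, θ > 0, the lower tail dependence parameter of the Archimedean-based Marshall-Olkin copula with distortion satisfying D(x)/x → β is λ_L = (1+β)^{−1/θ}. -/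
open Filter Set Topology

lemma AMO_key (G D : ℝ → ℝ) (c γ β : ℝ) (hc : 0 < c) (hγ : 0 < γ)
    (hGpos : ∀ᶠ x : ℝ in atTop, 0 < G x)
    (hGdecay : Tendsto (fun x : ℝ => G x * x ^ γ) atTop (𝓝 c))
    (hDnonneg : ∀ x : ℝ, 0 < x → 0 ≤ D x)
    (hβ : 0 ≤ β)
    (hD : Tendsto (fun x : ℝ => D x / x) atTop (𝓝 β)) :
    Tendsto (fun x : ℝ => G (x + D x) / G x) atTop (𝓝 ((1 + β) ^ (-γ))) := by
  have htop : Tendsto (fun x : ℝ => x + D x) atTop atTop := by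
    apply tendsto_atTop_mono' atTop _ tendsto_id
    filter_upwards [eventually_gt_atTop (0:ℝ)] with x hx
    have := hDnonneg x hx
    simp only [id]; linarith
  have h1 : Tendsto (fun x : ℝ => G (x + D x) * (x + D x) ^ γ) atTop (𝓝 c) :=
    hGdecay.comp htop
  have hratio : Tendsto (fun x : ℝ => 1 + D x / x) atTop (𝓝 (1 + β)) :=
    tendsto_const_nhds.add hD
  have h1β : (0:ℝ) < 1 + β := by linarith
  have hpow : Tendsto (fun x : ℝ => (1 + D x / x) ^ γ) atTop (𝓝 ((1 + β) ^ γ)) :=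
    hratio.rpow tendsto_const_nhds (Or.inl (ne_of_gt h1β))
  have hmain : Tendsto (fun x : ℝ =>
      (G (x + D x) * (x + D x) ^ γ) / (G x * x ^ γ) / ((1 + D x / x) ^ γ))
      atTop (𝓝 ((1 + β) ^ (-γ))) := by
    have := (h1.div hGdecay (ne_of_gt hc)).div hpow
      (ne_of_gt (Real.rpow_pos_of_pos h1β γ))
    rw [div_self (ne_of_gt hc)] at this
    rw [Real.rpow_neg h1β.le]
    simp only [one_div] at this
    exact this
  apply hmain.congr'
  have hGpos' : ∀ᶠ x : ℝ in atTop, 0 < G (x + D x) := htop.eventually hGpos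
  filter_upwards [eventually_gt_atTop (0:ℝ), hGpos, hGpos'] with x hx hg ha
  have hDx : 0 ≤ D x := hDnonneg x hx
  have hxb : 0 < x + D x := by linarith
  have hb : 0 < (x + D x) ^ γ := Real.rpow_pos_of_pos hxb γ
  have key : x ^ γ * (1 + D x / x) ^ γ = (x + D x) ^ γ := by
    rw [← Real.mul_rpow hx.le (by positivity)]
    congr 1
    field_simp
  have hxγ : 0 < x ^ γ := Real.rpow_pos_of_pos hx γ
  have h1p : 0 < (1 + D x / x) ^ γ := Real.rpow_pos_of_pos (by positivity) γ
  rw [div_div, mul_assoc, key, mul_div_mul_right _ _ hb.ne']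

/-- if `G : [0,∞) → (0,1]` has polynomial decay `G(x) ~ c x^(−γ)` at `+∞`
and the distortion satisfies `D(x)/x → β ∈ [0,1]`, then the lower tail limit is
`G(x + D(x))/G(x) → (1+β)^(−γ)`; in particular for the Clayton generator
`G(x) = (x+1)^(−1/θ)` the lower tail dependence parameter is `λ_L = (1+β)^(−1/θ)`. -/
theorem AMO_lower_tail_polynomial_decay
    (G D : ℝ → ℝ) (c γ β : ℝ) (hc : 0 < c) (hγ : 0 < γ)
    (hGmem : ∀ x : ℝ, 0 ≤ x → G x ∈ Set.Ioc (0:ℝ) 1)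
    (hGdecay : Tendsto (fun x : ℝ => G x * x ^ γ) atTop (𝓝 c))
    (hDnonneg : ∀ x : ℝ, 0 < x → 0 ≤ D x)
    (hβ : β ∈ Set.Icc (0:ℝ) 1)
    (hD : Tendsto (fun x : ℝ => D x / x) atTop (𝓝 β)) :
    Tendsto (fun x : ℝ => G (x + D x) / G x) atTop (𝓝 ((1 + β) ^ (-γ))) ∧
    ∀ θ : ℝ, 0 < θ →
      Tendsto (fun x : ℝ => (x + D x + 1) ^ (-(1 / θ)) / (x + 1) ^ (-(1 / θ))) atTop
        (𝓝 ((1 + β) ^ (-(1 / θ)))) := by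
  constructor
  · exact AMO_key G D c γ β hc hγ
      (by filter_upwards [eventually_ge_atTop (0:ℝ)] with x hx; exact (hGmem x hx).1)
      hGdecay hDnonneg hβ.1 hD
  · intro θ hθ
    have hθ' : 0 < 1 / θ := by positivity
    have hGdecay' : Tendsto (fun x : ℝ => (x + 1) ^ (-(1 / θ)) * x ^ (1 / θ))
        atTop (𝓝 1) := by
      have hfrac : Tendsto (fun x : ℝ => x / (x + 1)) atTop (𝓝 1) := by
        have h0 : Tendsto (fun x : ℝ => 1 - 1 / (x + 1)) atTop (𝓝 1) := by
          have hinv : Tendsto (fun x : ℝ => (x + 1)⁻¹) atTop (𝓝 0) :=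
            tendsto_inv_atTop_zero.comp (tendsto_atTop_add_const_right _ 1 tendsto_id)
          simp only [one_div]
          simpa using tendsto_const_nhds.sub hinv
        apply h0.congr'
        filter_upwards [eventually_gt_atTop (0:ℝ)] with x hx
        have : x + 1 ≠ 0 := by linarith
        field_simp
        ring
      have hrpow : Tendsto (fun x : ℝ => (x / (x + 1)) ^ (1 / θ)) atTop (𝓝 (1 ^ (1 / θ))) :=
        hfrac.rpow tendsto_const_nhds (Or.inl one_ne_zero)
      rw [Real.one_rpow] at hrpow
      apply hrpow.congr'
      filter_upwards [eventually_gt_atTop (0:ℝ)] with x hx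
      have hx1 : (0:ℝ) < x + 1 := by linarith
      rw [Real.div_rpow hx.le hx1.le, Real.rpow_neg hx1.le]
      ring
    exact AMO_key (fun x => (x + 1) ^ (-(1 / θ))) D 1 (1 / θ) β one_pos hθ'
      (by filter_upwards [eventually_ge_atTop (0:ℝ)] with x hx;
          exact Real.rpow_pos_of_pos (by linarith) _)
      hGdecay' hDnonneg hβ.1 hD
end

section
/- Let G:[0,∞)→(0,1] and suppose there exist a, c > 0 and γ ∈ (0,1) such that G(x)·e^{a·x^γ} → c as x → +∞. Let D:(0,∞)→[0,∞) satisfy D(x)/x → 0 and D(x)/x^{1−γ} → L as x → +∞ for some L ∈ [0,∞). Then G(x + D(x))/G(x) → e^{−aγL} as x → +∞. -/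
open Filter Set Topology

/-- if `G : [0,∞) → (0,1]` has exponential decay `G(x) ~ c e^(−a x^γ)` at
`+∞` with `0 < γ < 1`, and the distortion satisfies `D(x)/x → 0` and
`D(x)/x^(1−γ) → L ∈ [0,∞)`, then `G(x + D(x))/G(x) → e^(−aγL)`. -/
theorem AMO_lower_tail_exponential_decay
    (G D : ℝ → ℝ) (a c γ L : ℝ) (ha : 0 < a) (hc : 0 < c)
    (hγ : γ ∈ Set.Ioo (0:ℝ) 1)
    (hGmem : ∀ x : ℝ, 0 ≤ x → G x ∈ Set.Ioc (0:ℝ) 1)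
    (hGdecay : Tendsto (fun x : ℝ => G x * Real.exp (a * x ^ γ)) atTop (𝓝 c))
    (hDnonneg : ∀ x : ℝ, 0 < x → 0 ≤ D x)
    (hD0 : Tendsto (fun x : ℝ => D x / x) atTop (𝓝 0))
    (hL : 0 ≤ L)
    (hDL : Tendsto (fun x : ℝ => D x / x ^ (1 - γ)) atTop (𝓝 L)) :
    Tendsto (fun x : ℝ => G (x + D x) / G x) atTop (𝓝 (Real.exp (-(a * γ * L)))) := by
  obtain ⟨hγ0, hγ1⟩ := hγ
  set h : ℝ → ℝ := fun t => if t = 0 then γ else ((1 + t) ^ γ - 1) / t with hh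
  -- slope of s ↦ s ^ γ at 1 tends to γ
  have hderiv : HasDerivAt (fun s : ℝ => s ^ γ) (γ * (1:ℝ) ^ (γ - 1)) 1 :=
    Real.hasDerivAt_rpow_const (Or.inl one_ne_zero)
  have hslope : Tendsto (fun t : ℝ => ((1 + t) ^ γ - 1) / t) (𝓝[≠] 0) (𝓝 γ) := by
    have h1 := hasDerivAt_iff_tendsto_slope.mp hderiv
    rw [Real.one_rpow, mul_one] at h1
    have hmap : Tendsto (fun t : ℝ => 1 + t) (𝓝[≠] (0:ℝ)) (𝓝[≠] (1:ℝ)) := by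
      apply tendsto_nhdsWithin_of_tendsto_nhds_of_eventually_within
      · have : Tendsto (fun t : ℝ => 1 + t) (𝓝 (0:ℝ)) (𝓝 (1:ℝ)) := by
          exact (continuous_const.add continuous_id).tendsto' (0:ℝ) (1:ℝ) (by simp)
        exact this.mono_left nhdsWithin_le_nhds
      · filter_upwards [self_mem_nhdsWithin] with t ht
        simp only [Set.mem_compl_iff, Set.mem_singleton_iff] at ht ⊢
        intro hcontra; exact ht (by linarith)
    have h2 := h1.comp hmap
    refine h2.congr fun t => ?_
    simp [slope_def_field, Real.one_rpow, add_sub_cancel_left]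
  have hhtend : Tendsto h (𝓝 0) (𝓝 γ) := by
    rw [← nhdsNE_sup_pure (0:ℝ)]
    refine Tendsto.sup ?_ ?_
    · refine hslope.congr' ?_
      filter_upwards [self_mem_nhdsWithin] with t ht
      simp only [Set.mem_compl_iff, Set.mem_singleton_iff] at ht
      simp [hh, ht]
    · have : h 0 = γ := by simp [hh]
      simpa [this] using tendsto_pure_nhds h 0
  have hDx : Tendsto (fun x => h (D x / x)) atTop (𝓝 γ) := hhtend.comp hD0
  -- main exponent limit
  have hφ : Tendsto (fun x => a * ((x + D x) ^ γ - x ^ γ)) atTop (𝓝 (a * (γ * L))) := by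
    have hmul : Tendsto (fun x => h (D x / x) * (D x / x ^ (1 - γ))) atTop (𝓝 (γ * L)) :=
      hDx.mul hDL
    refine ((tendsto_const_nhds (x := a)).mul hmul).congr' ?_
    filter_upwards [eventually_gt_atTop (0:ℝ)] with x hx
    have hDge := hDnonneg x hx
    congr 1
    by_cases hD : D x = 0
    · simp [hD, hh]
    · have ht : D x / x ≠ 0 := div_ne_zero hD hx.ne'
      have htpos : 0 ≤ D x / x := div_nonneg hDge hx.le
      have h1pt : (0:ℝ) ≤ 1 + D x / x := by linarith
      have hxD : x + D x = x * (1 + D x / x) := by field_simp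
      have h2 : (x + D x) ^ γ = x ^ γ * (1 + D x / x) ^ γ := by
        rw [hxD, Real.mul_rpow hx.le h1pt]
      have h3 : x ^ (1 - γ) = x / x ^ γ := by
        rw [Real.rpow_sub hx, Real.rpow_one]
      have hxγ : (0:ℝ) < x ^ γ := Real.rpow_pos_of_pos hx γ
      rw [hh]
      simp only [if_neg ht]
      rw [h2, h3]
      field_simp
  -- assemble
  have hcomp : Tendsto (fun x : ℝ => x + D x) atTop atTop := by
    refine tendsto_atTop_mono' atTop ?_ tendsto_id
    filter_upwards [eventually_gt_atTop (0:ℝ)] with x hx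
    have := hDnonneg x hx
    simp only [id_eq]; linarith
  have hnum : Tendsto (fun x => G (x + D x) * Real.exp (a * (x + D x) ^ γ)) atTop (𝓝 c) :=
    hGdecay.comp hcomp
  have hratio : Tendsto
      (fun x => (G (x + D x) * Real.exp (a * (x + D x) ^ γ)) /
        (G x * Real.exp (a * x ^ γ))) atTop (𝓝 (c / c)) := hnum.div hGdecay hc.ne'
  rw [div_self hc.ne'] at hratio
  have hexp : Tendsto (fun x => Real.exp (-(a * ((x + D x) ^ γ - x ^ γ)))) atTop
      (𝓝 (Real.exp (-(a * (γ * L))))) := Real.continuous_exp.continuousAt.tendsto.comp hφ.neg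
  have hfinal := hratio.mul hexp
  rw [one_mul] at hfinal
  have hALmul : a * (γ * L) = a * γ * L := by ring
  rw [hALmul] at hfinal
  refine hfinal.congr' ?_
  filter_upwards [eventually_gt_atTop (0:ℝ)] with x hx
  have hGx := (hGmem x hx.le).1
  have hGxD := (hGmem (x + D x) (by linarith [hDnonneg x hx])).1
  have hE1 := Real.exp_ne_zero (a * (x + D x) ^ γ)
  have hE2 := Real.exp_ne_zero (a * x ^ γ)
  have key : -(a * ((x + D x) ^ γ - x ^ γ)) = a * x ^ γ - a * (x + D x) ^ γ := by ring
  rw [key, Real.exp_sub]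
  field_simp
end

section
/- Let G:[0,∞)→[0,1] with G(0)=1 and G(x) < 1 for x > 0, and suppose there exist c, γ > 0 such that (1 − G(x))/x^γ → c as x → 0⁺. Let D:(0,∞)→[0,∞) satisfy D(x)/x → β as x → 0⁺ for some β ∈ [0,1]. Then (1 − G(x + D(x)))/(1 − G(x)) → (1+β)^γ as x → 0⁺. In particular, the upper tail dependence parameter of the corresponding Archimedean-based Marshall-Olkin copula is λ_U = 2 − (1+β)^γ; e.g., for the Gumbel generator G(x) = e^{−x^{1/θ}}, θ ≥ 1, λ_U = 2 − (1+β)^{1/θ}. -/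
open Filter Set Topology

lemma AMO_aux_tail (G D : ℝ → ℝ) (c γ β : ℝ) (hc : 0 < c) (hγ : 0 < γ)
    (hGlt : ∀ x : ℝ, 0 < x → G x < 1)
    (hGdecay : Tendsto (fun x : ℝ => (1 - G x) / x ^ γ) (𝓝[>] (0:ℝ)) (𝓝 c))
    (hDnonneg : ∀ x : ℝ, 0 < x → 0 ≤ D x)
    (hβ0 : 0 ≤ β)
    (hD : Tendsto (fun x : ℝ => D x / x) (𝓝[>] (0:ℝ)) (𝓝 β)) :
    Tendsto (fun x : ℝ => (1 - G (x + D x)) / (1 - G x)) (𝓝[>] (0:ℝ)) (𝓝 ((1 + β) ^ γ)) := by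
  have hx_pos : ∀ᶠ x in 𝓝[>] (0:ℝ), 0 < x := self_mem_nhdsWithin
  have hid : Tendsto (fun x : ℝ => x) (𝓝[>] (0:ℝ)) (𝓝 0) :=
    tendsto_id.mono_right nhdsWithin_le_nhds
  have hDx : Tendsto D (𝓝[>] (0:ℝ)) (𝓝 0) := by
    have h1 : Tendsto (fun x : ℝ => (D x / x) * x) (𝓝[>] (0:ℝ)) (𝓝 (β * 0)) := hD.mul hid
    rw [mul_zero] at h1
    refine h1.congr' ?_
    filter_upwards [hx_pos] with x hx
    field_simp
  have hy : Tendsto (fun x : ℝ => x + D x) (𝓝[>] (0:ℝ)) (𝓝[>] (0:ℝ)) := by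
    rw [tendsto_nhdsWithin_iff]
    constructor
    · have := hid.add hDx
      simpa using this
    · filter_upwards [hx_pos] with x hx
      exact add_pos_of_pos_of_nonneg hx (hDnonneg x hx)
  have hA : Tendsto (fun x : ℝ => (1 - G (x + D x)) / (x + D x) ^ γ) (𝓝[>] (0:ℝ)) (𝓝 c) :=
    hGdecay.comp hy
  have hB : Tendsto (fun x : ℝ => ((x + D x) / x) ^ γ) (𝓝[>] (0:ℝ)) (𝓝 ((1 + β) ^ γ)) := by
    have h1 : Tendsto (fun x : ℝ => (x + D x) / x) (𝓝[>] (0:ℝ)) (𝓝 (1 + β)) := by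
      refine (tendsto_const_nhds.add hD).congr' ?_
      filter_upwards [hx_pos] with x hx
      rw [add_div, div_self hx.ne']
    exact h1.rpow_const (Or.inl (by linarith))
  have hC : Tendsto (fun x : ℝ => x ^ γ / (1 - G x)) (𝓝[>] (0:ℝ)) (𝓝 c⁻¹) := by
    have := hGdecay.inv₀ hc.ne'
    refine this.congr fun x => ?_
    rw [inv_div]
  have h := hA.mul (hB.mul hC)
  have hval : c * ((1 + β) ^ γ * c⁻¹) = (1 + β) ^ γ := by
    field_simp
  rw [hval] at h
  refine h.congr' ?_
  filter_upwards [hx_pos] with x hx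
  have hy_pos : 0 < x + D x := add_pos_of_pos_of_nonneg hx (hDnonneg x hx)
  have hyγ : (0:ℝ) < (x + D x) ^ γ := Real.rpow_pos_of_pos hy_pos γ
  have hxγ : (0:ℝ) < x ^ γ := Real.rpow_pos_of_pos hx γ
  have hGx : (1 : ℝ) - G x ≠ 0 := sub_ne_zero.mpr (hGlt x hx).ne'
  rw [Real.div_rpow hy_pos.le hx.le]
  field_simp

/-- if `G : [0,∞) → [0,1]` with `G(0) = 1`, `G(x) < 1` for `x > 0`, and
`(1 − G(x))/x^γ → c > 0` as `x → 0⁺`, and the distortion satisfies `D(x)/x → β ∈ [0,1]`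
as `x → 0⁺`, then `(1 − G(x + D(x)))/(1 − G(x)) → (1+β)^γ` as `x → 0⁺`, so that the upper
tail dependence parameter of the corresponding Archimedean-based Marshall-Olkin copula is
`λ_U = 2 − (1+β)^γ`; in particular for the Gumbel generator `G(x) = e^(−x^(1/θ))`,
`θ ≥ 1`, the limit is `(1+β)^(1/θ)`, i.e. `λ_U = 2 − (1+β)^(1/θ)`. -/
theorem AMO_upper_tail
    (G D : ℝ → ℝ) (c γ β : ℝ) (hc : 0 < c) (hγ : 0 < γ)
    (hG0 : G 0 = 1) (hGlt : ∀ x : ℝ, 0 < x → G x < 1)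
    (hGmem : ∀ x : ℝ, 0 ≤ x → G x ∈ Set.Icc (0:ℝ) 1)
    (hGdecay : Tendsto (fun x : ℝ => (1 - G x) / x ^ γ) (𝓝[>] (0:ℝ)) (𝓝 c))
    (hDnonneg : ∀ x : ℝ, 0 < x → 0 ≤ D x)
    (hβ : β ∈ Set.Icc (0:ℝ) 1)
    (hD : Tendsto (fun x : ℝ => D x / x) (𝓝[>] (0:ℝ)) (𝓝 β)) :
    Tendsto (fun x : ℝ => (1 - G (x + D x)) / (1 - G x)) (𝓝[>] (0:ℝ)) (𝓝 ((1 + β) ^ γ)) ∧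
    ∀ θ : ℝ, 1 ≤ θ →
      Tendsto (fun x : ℝ =>
          (1 - Real.exp (-((x + D x) ^ (1 / θ)))) / (1 - Real.exp (-(x ^ (1 / θ)))))
        (𝓝[>] (0:ℝ)) (𝓝 ((1 + β) ^ (1 / θ))) := by
  constructor
  · exact AMO_aux_tail G D c γ β hc hγ hGlt hGdecay hDnonneg hβ.1 hD
  · intro θ hθ
    have hθ0 : 0 < θ := lt_of_lt_of_le one_pos hθ
    have hγ' : 0 < 1 / θ := by positivity
    refine AMO_aux_tail (fun x => Real.exp (-(x ^ (1 / θ)))) D 1 (1 / θ) β one_pos hγ'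
      (fun x hx => ?_) ?_ hDnonneg hβ.1 hD
    · have : 0 < x ^ (1 / θ) := Real.rpow_pos_of_pos hx _
      calc Real.exp (-(x ^ (1 / θ))) < Real.exp 0 := Real.exp_lt_exp.mpr (by linarith)
        _ = 1 := Real.exp_zero
    · -- (1 - exp(-(x^(1/θ)))) / x^(1/θ) → 1
      have hslope : Tendsto (fun t : ℝ => (Real.exp t - 1) / t) (𝓝[≠] (0:ℝ)) (𝓝 1) := by
        have h := Real.hasDerivAt_exp 0
        rw [hasDerivAt_iff_tendsto_slope] at h
        simpa [slope_fun_def, Real.exp_zero, div_eq_inv_mul] using h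
      have hcomp : Tendsto (fun x : ℝ => -(x ^ (1 / θ))) (𝓝[>] (0:ℝ)) (𝓝[≠] (0:ℝ)) := by
        rw [tendsto_nhdsWithin_iff]
        constructor
        · have h0 : Tendsto (fun x : ℝ => x ^ (1 / θ)) (𝓝[>] (0:ℝ)) (𝓝 ((0:ℝ) ^ (1 / θ))) := by
            refine Filter.Tendsto.rpow_const ?_ (Or.inr hγ'.le)
            exact tendsto_id.mono_right nhdsWithin_le_nhds
          rw [Real.zero_rpow hγ'.ne'] at h0
          simpa using h0.neg
        · filter_upwards [self_mem_nhdsWithin] with x (hx : 0 < x)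
          have : 0 < x ^ (1 / θ) := Real.rpow_pos_of_pos hx _
          simpa using this.ne'
      have h := hslope.comp hcomp
      refine h.congr fun x => ?_
      simp only [Function.comp]
      rw [div_neg, ← neg_div, neg_sub]
end
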